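/- arXiv:2205.04082 — 5 statements merged into one kernel-verified Lean document; each statement's English description precedes it below -/
import Mathlib

section
/- For every ε > 0 there exists δ > 0 such that for every positive integer n, every triangle-free simple graph G on n vertices that contains no induced matching of size k for any integer k ≥ (1−ε)·n/2 satisfies mis(G) < 2^{(1/2 − δ)·n}. -/
/-- A finset of vertices is independent: no two of its elements are adjacent. -/
def IsIndepFinset {V : Type*} (G : SimpleGraph V) (s : Finset V) : Prop :=
  ∀ ⦃a⦄, a ∈ s → ∀ ⦃b⦄, b ∈ s → ¬ G.Adj a b

/-- A finset of vertices is a maximal independent set: it is independent and is not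
properly contained in any other independent set. -/
def IsMaxIndepFinset {V : Type*} (G : SimpleGraph V) (s : Finset V) : Prop :=
  IsIndepFinset G s ∧ ∀ t : Finset V, IsIndepFinset G t → s ⊆ t → s = t

/-- `mis G` is the number of maximal independent sets of `G`. -/
noncomputable def mis {V : Type*} (G : SimpleGraph V) : ℕ :=
  Set.ncard {s : Finset V | IsMaxIndepFinset G s}

/-- `G` has an induced triangle matching of size `t`: there are `t` pairwise disjoint
triples of vertices, each triple pairwise adjacent (a triangle), with no edges between
distinct triples (so the induced subgraph on their union is a disjoint union of `t`
triangles). -/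
def HasInducedTriangleMatching {V : Type*} (G : SimpleGraph V) (t : ℕ) : Prop :=
  ∃ f : Fin t → Finset V,
    (∀ i, (f i).card = 3) ∧
    (∀ i j, i ≠ j → Disjoint (f i) (f j)) ∧
    (∀ i, ∀ a ∈ f i, ∀ b ∈ f i, a ≠ b → G.Adj a b) ∧
    (∀ i j, i ≠ j → ∀ a ∈ f i, ∀ b ∈ f j, ¬ G.Adj a b)

/-- `G` has an induced matching of size `t`: there are `t` pairwise disjoint
pairs of vertices, each pair adjacent, with no edges between distinct pairs. -/
def HasInducedMatching {V : Type*} (G : SimpleGraph V) (t : ℕ) : Prop :=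
  ∃ f : Fin t → Finset V,
    (∀ i, (f i).card = 2) ∧
    (∀ i j, i ≠ j → Disjoint (f i) (f j)) ∧
    (∀ i, ∀ a ∈ f i, ∀ b ∈ f i, a ≠ b → G.Adj a b) ∧
    (∀ i j, i ≠ j → ∀ a ∈ f i, ∀ b ∈ f j, ¬ G.Adj a b)

open Finset

namespace KPaux

open scoped Classical

variable {n : ℕ} {G : SimpleGraph (Fin n)}

/-- neighbors of `v` inside `W`. -/
noncomputable def nbr (G : SimpleGraph (Fin n)) (W : Finset (Fin n)) (v : Fin n) : Finset (Fin n) :=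
  W.filter (fun x => G.Adj v x)

/-- `s` is a maximal independent set inside `W`. -/
def maxIn (G : SimpleGraph (Fin n)) (W s : Finset (Fin n)) : Prop :=
  s ⊆ W ∧ (∀ a ∈ s, ∀ b ∈ s, ¬ G.Adj a b) ∧ ∀ x ∈ W, x ∉ s → ∃ y ∈ s, G.Adj x y

/-- number of maximal independent sets inside `W`. -/
noncomputable def NC (G : SimpleGraph (Fin n)) (W : Finset (Fin n)) : ℕ :=
  (W.powerset.filter (fun s => maxIn G W s)).card

lemma mem_nbr {W : Finset (Fin n)} {v x : Fin n} :
    x ∈ nbr G W v ↔ x ∈ W ∧ G.Adj v x := by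
  simp [nbr]

lemma nbr_subset {W : Finset (Fin n)} {v : Fin n} : nbr G W v ⊆ W := filter_subset _ _

lemma not_mem_nbr_self {W : Finset (Fin n)} {v : Fin n} : v ∉ nbr G W v := by
  simp [nbr]

lemma maxIn_erase {W s : Finset (Fin n)} (hs : maxIn G W s) {x : Fin n} (hx : x ∈ s)
    (T : Finset (Fin n)) (hT : ∀ t ∈ T, t ∉ s) :
    maxIn G (W \ insert x (T ∪ nbr G W x)) (s.erase x) := by
  obtain ⟨hsW, hind, hdom⟩ := hs
  refine ⟨?_, ?_, ?_⟩
  · intro a ha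
    have has : a ∈ s := mem_of_mem_erase ha
    have hax : a ≠ x := ne_of_mem_erase ha
    refine mem_sdiff.2 ⟨hsW has, ?_⟩
    simp only [mem_insert, mem_union, not_or]
    refine ⟨hax, fun hTa => hT a hTa has, fun hna => ?_⟩
    exact hind x hx a has (mem_nbr.1 hna).2
  · intro a ha b hb
    exact hind a (mem_of_mem_erase ha) b (mem_of_mem_erase hb)
  · intro y hy hys
    have hyW : y ∈ W := (mem_sdiff.1 hy).1
    have hyR : y ∉ insert x (T ∪ nbr G W x) := (mem_sdiff.1 hy).2
    have hyx : y ≠ x := by intro h; exact hyR (by simp [h])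
    have hyns : y ∉ s := by
      intro h
      exact hys (mem_erase.2 ⟨hyx, h⟩)
    obtain ⟨z, hzs, hzadj⟩ := hdom y hyW hyns
    refine ⟨z, ?_, hzadj⟩
    have hzx : z ≠ x := by
      intro h
      subst h
      exact hyR (by simp [mem_nbr, hyW, hzadj.symm])
    exact mem_erase.2 ⟨hzx, hzs⟩

lemma maxIn_of_not_mem {W s : Finset (Fin n)} (hs : maxIn G W s) {v : Fin n} (hv : v ∉ s) :
    maxIn G (W.erase v) s := by
  obtain ⟨hsW, hind, hdom⟩ := hs
  refine ⟨?_, hind, ?_⟩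
  · intro a ha
    exact mem_erase.2 ⟨fun h => hv (h ▸ ha), hsW ha⟩
  · intro x hxW hxs
    exact hdom x (mem_of_mem_erase hxW) hxs

lemma card_le_NC_erase (B : Finset (Finset (Fin n))) (x : Fin n) (W' : Finset (Fin n))
    (h : ∀ s ∈ B, x ∈ s ∧ maxIn G W' (s.erase x)) : B.card ≤ NC G W' := by
  apply Finset.card_le_card_of_injOn (fun s => s.erase x)
  · intro s hs
    obtain ⟨hx, hmax⟩ := h s hs
    exact mem_filter.2 ⟨mem_powerset.2 hmax.1, hmax⟩
  · intro s hs t ht hst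
    have hxs := (h s hs).1
    have hxt := (h t ht).1
    rw [← Finset.insert_erase hxs, ← Finset.insert_erase hxt]
    simp only at hst
    rw [hst]

lemma card_le_NC_id (B : Finset (Finset (Fin n))) (W' : Finset (Fin n))
    (h : ∀ s ∈ B, maxIn G W' s) : B.card ≤ NC G W' := by
  apply Finset.card_le_card_of_injOn id
  · intro s hs
    exact mem_filter.2 ⟨mem_powerset.2 (h s hs).1, h s hs⟩
  · intro s _ t _ hst
    exact hst

lemma NC_empty : NC G (∅ : Finset (Fin n)) = 1 := by
  have : (∅ : Finset (Fin n)).powerset.filter (fun s => maxIn G ∅ s) = {∅} := by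
    ext s
    simp only [mem_filter, mem_powerset, mem_singleton, subset_empty]
    constructor
    · rintro ⟨h, -⟩; exact h
    · rintro rfl
      exact ⟨rfl, Finset.Subset.refl _, by simp, by simp⟩
  rw [NC, this, card_singleton]


/-- induced matchings of `G` with vertices inside `W`. -/
def HasIM (G : SimpleGraph (Fin n)) (W : Finset (Fin n)) (t : ℕ) : Prop :=
  ∃ f : Fin t → Finset (Fin n), (∀ i, f i ⊆ W) ∧ (∀ i, (f i).card = 2) ∧
    (∀ i j, i ≠ j → Disjoint (f i) (f j)) ∧
    (∀ i, ∀ a ∈ f i, ∀ b ∈ f i, a ≠ b → G.Adj a b) ∧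
    (∀ i j, i ≠ j → ∀ a ∈ f i, ∀ b ∈ f j, ¬ G.Adj a b)

lemma HasIM.mono {W W' : Finset (Fin n)} (hWW : W' ⊆ W) {t : ℕ}
    (h : HasIM G W' t) : HasIM G W t := by
  obtain ⟨f, h1, h2, h3, h4, h5⟩ := h
  exact ⟨f, fun i => (h1 i).trans hWW, h2, h3, h4, h5⟩

lemma pair_adj {v u : Fin n} (hadj : G.Adj v u) :
    ∀ a ∈ ({v, u} : Finset (Fin n)), ∀ b ∈ ({v, u} : Finset (Fin n)), a ≠ b → G.Adj a b := by
  intro a ha b hb hab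
  simp only [mem_insert, mem_singleton] at ha hb
  rcases ha with ha | ha <;> rcases hb with hb | hb
  · exact absurd (ha.trans hb.symm) hab
  · rw [ha, hb]; exact hadj
  · rw [ha, hb]; exact hadj.symm
  · exact absurd (ha.trans hb.symm) hab

lemma pair_card {v u : Fin n} (hne : v ≠ u) : ({v, u} : Finset (Fin n)).card = 2 := by
  rw [card_insert_of_notMem (by simp [hne]), card_singleton]

lemma pair_subset {W : Finset (Fin n)} {v u : Fin n} (hv : v ∈ W) (hu : u ∈ W) :
    ({v, u} : Finset (Fin n)) ⊆ W := by
  intro x hx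
  rcases mem_insert.1 hx with rfl | hx
  · exact hv
  · rw [mem_singleton.1 hx]; exact hu

lemma hasIM_one {W : Finset (Fin n)} {v u : Fin n} (hv : v ∈ W) (hu : u ∈ W)
    (hadj : G.Adj v u) : HasIM G W 1 := by
  refine ⟨fun _ => {v, u}, fun _ => pair_subset hv hu, fun _ => pair_card hadj.ne,
    ?_, fun _ => pair_adj hadj, ?_⟩ <;>
  · intro i j hij; exact absurd (Subsingleton.elim i j) hij

lemma HasIM.extend {W W' : Finset (Fin n)} (hWW : W' ⊆ W) {v u : Fin n}
    (hv : v ∈ W) (hu : u ∈ W) (hadj : G.Adj v u)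
    (hvW' : v ∉ W') (huW' : u ∉ W')
    (hvadj : ∀ x ∈ W', ¬ G.Adj v x) (huadj : ∀ x ∈ W', ¬ G.Adj u x)
    {t : ℕ} (h : HasIM G W' t) : HasIM G W (t + 1) := by
  obtain ⟨f, h1, h2, h3, h4, h5⟩ := h
  have key : ∀ (k : Fin t), ∀ a ∈ ({v, u} : Finset (Fin n)), ∀ b ∈ f k, ¬ G.Adj a b := by
    intro k a ha b hb
    have hbW' : b ∈ W' := h1 k hb
    rcases mem_insert.1 ha with rfl | ha
    · exact hvadj b hbW'
    · rw [mem_singleton.1 ha]; exact huadj b hbW'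
  have keyd : ∀ k : Fin t, Disjoint (f k) ({v, u} : Finset (Fin n)) := by
    intro k
    rw [Finset.disjoint_right]
    intro a ha hafk
    rcases mem_insert.1 ha with rfl | ha
    · exact hvW' (h1 k hafk)
    · rw [mem_singleton.1 ha] at hafk; exact huW' (h1 k hafk)
  refine ⟨Fin.snoc f {v, u}, ?_, ?_, ?_, ?_, ?_⟩
  · intro i
    refine Fin.lastCases ?_ (fun k => ?_) i
    · rw [Fin.snoc_last]; exact pair_subset hv hu
    · rw [Fin.snoc_castSucc]; exact (h1 k).trans hWW
  · intro i
    refine Fin.lastCases ?_ (fun k => ?_) i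
    · rw [Fin.snoc_last]; exact pair_card hadj.ne
    · rw [Fin.snoc_castSucc]; exact h2 k
  · intro i j
    refine Fin.lastCases ?_ (fun ki => ?_) i <;> refine Fin.lastCases ?_ (fun kj => ?_) j <;>
      intro hij
    · exact absurd rfl hij
    · rw [Fin.snoc_last, Fin.snoc_castSucc]; exact (keyd kj).symm
    · rw [Fin.snoc_last, Fin.snoc_castSucc]; exact keyd ki
    · rw [Fin.snoc_castSucc, Fin.snoc_castSucc]
      exact h3 ki kj (fun hkk => hij (by rw [hkk]))
  · intro i
    refine Fin.lastCases ?_ (fun k => ?_) i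
    · rw [Fin.snoc_last]; exact pair_adj hadj
    · rw [Fin.snoc_castSucc]; exact h4 k
  · intro i j
    refine Fin.lastCases ?_ (fun ki => ?_) i <;> refine Fin.lastCases ?_ (fun kj => ?_) j <;>
      intro hij
    · exact absurd rfl hij
    · rw [Fin.snoc_last, Fin.snoc_castSucc]; exact key kj
    · rw [Fin.snoc_castSucc, Fin.snoc_last]
      intro a ha b hb hab
      exact key ki b hb a ha hab.symm
    · rw [Fin.snoc_castSucc, Fin.snoc_castSucc]
      exact h5 ki kj (fun hkk => hij (by rw [hkk]))


lemma rpow_div_le {k b : ℕ} {c : ℝ} (hb : b ≠ 0) (hc : 0 ≤ c)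
    (h : (2:ℝ) ^ k ≤ c ^ b) : (2:ℝ) ^ ((k:ℝ)/(b:ℝ)) ≤ c := by
  have hb' : ((b:ℝ)) ≠ 0 := Nat.cast_ne_zero.2 hb
  have key : ((2:ℝ) ^ ((k:ℝ)/(b:ℝ))) ^ b = 2 ^ k := by
    rw [← Real.rpow_natCast ((2:ℝ) ^ ((k:ℝ)/(b:ℝ))) b, ← Real.rpow_mul (by norm_num),
      div_mul_cancel₀ _ hb', Real.rpow_natCast]
  have hx : (0:ℝ) ≤ (2:ℝ) ^ ((k:ℝ)/(b:ℝ)) := (Real.rpow_pos_of_pos two_pos _).le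
  have := key ▸ h
  exact (pow_le_pow_iff_left₀ hx hc hb).1 this

lemma le_rpow_div {k b : ℕ} {c : ℝ} (hb : b ≠ 0) (hc : 0 ≤ c)
    (h : c ^ b ≤ (2:ℝ) ^ k) : c ≤ (2:ℝ) ^ ((k:ℝ)/(b:ℝ)) := by
  have hb' : ((b:ℝ)) ≠ 0 := Nat.cast_ne_zero.2 hb
  have key : ((2:ℝ) ^ ((k:ℝ)/(b:ℝ))) ^ b = 2 ^ k := by
    rw [← Real.rpow_natCast ((2:ℝ) ^ ((k:ℝ)/(b:ℝ))) b, ← Real.rpow_mul (by norm_num),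
      div_mul_cancel₀ _ hb', Real.rpow_natCast]
  have hx : (0:ℝ) ≤ (2:ℝ) ^ ((k:ℝ)/(b:ℝ)) := (Real.rpow_pos_of_pos two_pos _).le
  have := key ▸ h
  exact (pow_le_pow_iff_left₀ hc hx hb).1 this

lemma up93 : (2:ℝ) ^ ((93:ℝ)/64) ≤ 2.74 := by
  have : (2:ℝ) ^ (93:ℕ) ≤ (2.74:ℝ) ^ (64:ℕ) := by norm_num
  have h := rpow_div_le (k := 93) (b := 64) (by norm_num) (by norm_num) this
  norm_num at h ⊢
  convert h using 3 <;> norm_num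

lemma up33 : (2:ℝ) ^ ((33:ℝ)/64) ≤ 1.433 := by
  have : (2:ℝ) ^ (33:ℕ) ≤ (1.433:ℝ) ^ (64:ℕ) := by norm_num
  have h := rpow_div_le (k := 33) (b := 64) (by norm_num) (by norm_num) this
  convert h using 3 <;> norm_num

lemma lo124 : (3.82:ℝ) ≤ (2:ℝ) ^ ((124:ℝ)/64) := by
  have : (3.82:ℝ) ^ (64:ℕ) ≤ (2:ℝ) ^ (124:ℕ) := by norm_num
  have h := le_rpow_div (k := 124) (b := 64) (by norm_num) (by norm_num) this
  convert h using 3 <;> norm_num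

lemma lo95 : (2.79:ℝ) ≤ (2:ℝ) ^ ((95:ℝ)/64) := by
  have : (2.79:ℝ) ^ (64:ℕ) ≤ (2:ℝ) ^ (95:ℕ) := by norm_num
  have h := le_rpow_div (k := 95) (b := 64) (by norm_num) (by norm_num) this
  convert h using 3 <;> norm_num

lemma lo126 : (3.89:ℝ) ≤ (2:ℝ) ^ ((126:ℝ)/64) := by
  have : (3.89:ℝ) ^ (32:ℕ) ≤ (2:ℝ) ^ (63:ℕ) := by norm_num
  have h := le_rpow_div (k := 63) (b := 32) (by norm_num) (by norm_num) this
  have h2 : ((63:ℕ):ℝ)/((32:ℕ):ℝ) = (126:ℝ)/64 := by norm_num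
  rwa [h2] at h

lemma numA : (2:ℝ) ^ (-((31:ℝ)/64)) + (2:ℝ) ^ (-((124:ℝ)/64)) ≤ 1 := by
  have hpos : (0:ℝ) < 2 ^ ((124:ℝ)/64) := Real.rpow_pos_of_pos two_pos _
  have e1 : (2:ℝ) ^ (-((31:ℝ)/64)) = 2 ^ ((93:ℝ)/64) / 2 ^ ((124:ℝ)/64) := by
    rw [← Real.rpow_sub two_pos]; norm_num
  have e2 : (2:ℝ) ^ (-((124:ℝ)/64)) = 1 / 2 ^ ((124:ℝ)/64) := by
    rw [eq_div_iff (ne_of_gt hpos), ← Real.rpow_add two_pos]; norm_num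
  rw [e1, e2, ← add_div, div_le_one hpos]
  have := up93
  have := lo124
  linarith

lemma numB : (2:ℝ) ^ (-((62:ℝ)/64)) + (2:ℝ) ^ (-((95:ℝ)/64)) ≤ 1 := by
  have hpos : (0:ℝ) < 2 ^ ((95:ℝ)/64) := Real.rpow_pos_of_pos two_pos _
  have e1 : (2:ℝ) ^ (-((62:ℝ)/64)) = 2 ^ ((33:ℝ)/64) / 2 ^ ((95:ℝ)/64) := by
    rw [← Real.rpow_sub two_pos]; norm_num
  have e2 : (2:ℝ) ^ (-((95:ℝ)/64)) = 1 / 2 ^ ((95:ℝ)/64) := by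
    rw [eq_div_iff (ne_of_gt hpos), ← Real.rpow_add two_pos]; norm_num
  rw [e1, e2, ← add_div, div_le_one hpos]
  have := up33
  have := lo95
  linarith

lemma numC : (2:ℝ) ^ (-((93:ℝ)/64)) + (2:ℝ) ^ (-((93:ℝ)/64)) + (2:ℝ) ^ (-((126:ℝ)/64)) ≤ 1 := by
  have hpos : (0:ℝ) < 2 ^ ((126:ℝ)/64) := Real.rpow_pos_of_pos two_pos _
  have e1 : (2:ℝ) ^ (-((93:ℝ)/64)) = 2 ^ ((33:ℝ)/64) / 2 ^ ((126:ℝ)/64) := by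
    rw [← Real.rpow_sub two_pos]; norm_num
  have e2 : (2:ℝ) ^ (-((126:ℝ)/64)) = 1 / 2 ^ ((126:ℝ)/64) := by
    rw [eq_div_iff (ne_of_gt hpos), ← Real.rpow_add two_pos]; norm_num
  rw [e1, e2, ← add_div, ← add_div, div_le_one hpos]
  have := up33
  have := lo126
  linarith

lemma numD : (2:ℝ) ^ (-((64:ℝ)/64)) + (2:ℝ) ^ (-((64:ℝ)/64)) ≤ 1 := by
  have e : (2:ℝ) ^ (-((64:ℝ)/64)) = 1/2 := by
    have h1 : -((64:ℝ)/64) = (-1 : ℝ) := by norm_num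
    rw [h1, Real.rpow_neg_one]; norm_num
  rw [e]; norm_num

/-- combine two branches -/
lemma combine2 {Nw N1 N2 : ℕ} {E a1 a2 : ℝ} (h : Nw ≤ N1 + N2)
    (h1 : (N1:ℝ) ≤ 2 ^ (E - a1)) (h2 : (N2:ℝ) ≤ 2 ^ (E - a2))
    (ha : (2:ℝ) ^ (-a1) + (2:ℝ) ^ (-a2) ≤ 1) : (Nw:ℝ) ≤ 2 ^ E := by
  have e1 : (2:ℝ) ^ (E - a1) = 2 ^ E * 2 ^ (-a1) := by
    rw [← Real.rpow_add two_pos]; ring_nf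
  have e2 : (2:ℝ) ^ (E - a2) = 2 ^ E * 2 ^ (-a2) := by
    rw [← Real.rpow_add two_pos]; ring_nf
  have hE : (0:ℝ) ≤ 2 ^ E := (Real.rpow_pos_of_pos two_pos _).le
  have hcast : (Nw:ℝ) ≤ (N1:ℝ) + (N2:ℝ) := by exact_mod_cast h
  calc (Nw:ℝ) ≤ (N1:ℝ) + (N2:ℝ) := hcast
    _ ≤ 2 ^ (E - a1) + 2 ^ (E - a2) := by linarith
    _ = 2 ^ E * ((2:ℝ) ^ (-a1) + (2:ℝ) ^ (-a2)) := by rw [e1, e2]; ring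
    _ ≤ 2 ^ E * 1 := by
        apply mul_le_mul_of_nonneg_left ha hE
    _ = 2 ^ E := mul_one _

/-- combine three branches -/
lemma combine3 {Nw N1 N2 N3 : ℕ} {E a1 a2 a3 : ℝ} (h : Nw ≤ N1 + N2 + N3)
    (h1 : (N1:ℝ) ≤ 2 ^ (E - a1)) (h2 : (N2:ℝ) ≤ 2 ^ (E - a2)) (h3 : (N3:ℝ) ≤ 2 ^ (E - a3))
    (ha : (2:ℝ) ^ (-a1) + (2:ℝ) ^ (-a2) + (2:ℝ) ^ (-a3) ≤ 1) : (Nw:ℝ) ≤ 2 ^ E := by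
  have e1 : (2:ℝ) ^ (E - a1) = 2 ^ E * 2 ^ (-a1) := by
    rw [← Real.rpow_add two_pos]; ring_nf
  have e2 : (2:ℝ) ^ (E - a2) = 2 ^ E * 2 ^ (-a2) := by
    rw [← Real.rpow_add two_pos]; ring_nf
  have e3 : (2:ℝ) ^ (E - a3) = 2 ^ E * 2 ^ (-a3) := by
    rw [← Real.rpow_add two_pos]; ring_nf
  have hE : (0:ℝ) ≤ 2 ^ E := (Real.rpow_pos_of_pos two_pos _).le
  have hcast : (Nw:ℝ) ≤ (N1:ℝ) + (N2:ℝ) + (N3:ℝ) := by exact_mod_cast h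
  calc (Nw:ℝ) ≤ (N1:ℝ) + (N2:ℝ) + (N3:ℝ) := hcast
    _ ≤ 2 ^ (E - a1) + 2 ^ (E - a2) + 2 ^ (E - a3) := by linarith
    _ = 2 ^ E * ((2:ℝ) ^ (-a1) + (2:ℝ) ^ (-a2) + (2:ℝ) ^ (-a3)) := by rw [e1, e2, e3]; ring
    _ ≤ 2 ^ E * 1 := by
        apply mul_le_mul_of_nonneg_left ha hE
    _ = 2 ^ E := mul_one _


lemma one_le_twoE {E : ℝ} (hE : 0 ≤ E) : (1:ℝ) ≤ (2:ℝ) ^ E := by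
  have h0 : (1:ℝ) = (2:ℝ) ^ (0:ℝ) := (Real.rpow_zero 2).symm
  rw [h0]
  exact Real.rpow_le_rpow_of_exponent_le one_le_two hE

lemma main (hG : G.CliqueFree 3) :
    ∀ w : ℕ, ∀ W : Finset (Fin n), W.card ≤ w → ∀ m : ℕ, ¬ HasIM G W (m + 1) →
      (NC G W : ℝ) ≤ (2:ℝ) ^ ((31 * (W.card : ℝ) + 2 * (m : ℝ)) / 64) := by
  intro w
  induction w with
  | zero =>
    intro W hW m hm
    have hWe : W = ∅ := card_eq_zero.1 (Nat.le_zero.1 hW)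
    subst hWe
    rw [NC_empty, Nat.cast_one]
    exact one_le_twoE (by positivity)
  | succ w ih =>
    intro W hW m hm
    rcases eq_or_ne W ∅ with hWe | hWe
    · subst hWe
      rw [NC_empty, Nat.cast_one]
      exact one_le_twoE (by positivity)
    have hA : NC G W = (W.powerset.filter (fun s => maxIn G W s)).card := rfl
    set A := W.powerset.filter (fun s => maxIn G W s) with hAdef
    have memA : ∀ s ∈ A, maxIn G W s := fun s hs => (mem_filter.1 hs).2
    by_cases hd3 : ∃ v ∈ W, 3 ≤ (nbr G W v).card
    · -- Case A : a vertex of degree ≥ 3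
      obtain ⟨v, hv, h3⟩ := hd3
      set S1 := insert v (nbr G W v) with hS1def
      have hS1W : S1 ⊆ W := insert_subset hv nbr_subset
      have hS1card : S1.card = (nbr G W v).card + 1 :=
        card_insert_of_notMem not_mem_nbr_self
      have hcard1 : (W \ S1).card + S1.card = W.card := card_sdiff_add_card_eq_card hS1W
      have hcard2 : (W.erase v).card + 1 = W.card := by
        rw [card_erase_of_mem hv]
        have : 1 ≤ W.card := card_pos.2 ⟨v, hv⟩
        omega
      -- split
      have hsplit : (A.filter (fun s => v ∈ s)).card + (A.filter (fun s => v ∉ s)).card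
          = A.card := card_filter_add_card_filter_not (fun s => v ∈ s)
      have b1 : (A.filter (fun s => v ∈ s)).card ≤ NC G (W \ S1) := by
        apply card_le_NC_erase _ v
        intro s hs
        obtain ⟨hsA, hvs⟩ := mem_filter.1 hs
        refine ⟨hvs, ?_⟩
        have h := maxIn_erase (memA s hsA) hvs ∅ (by simp)
        rwa [empty_union] at h
      have b2 : (A.filter (fun s => v ∉ s)).card ≤ NC G (W.erase v) := by
        apply card_le_NC_id
        intro s hs
        obtain ⟨hsA, hvs⟩ := mem_filter.1 hs
        exact maxIn_of_not_mem (memA s hsA) hvs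
      have hle : NC G W ≤ NC G (W.erase v) + NC G (W \ S1) := by
        rw [hA, ← hsplit]
        omega
      -- IH on both branches
      have ih2 : (NC G (W.erase v) : ℝ)
          ≤ (2:ℝ) ^ ((31 * ((W.erase v).card : ℝ) + 2 * (m : ℝ)) / 64) := by
        apply ih _ (by omega) m (fun h => hm (h.mono (erase_subset _ _)))
      have ih1 : (NC G (W \ S1) : ℝ)
          ≤ (2:ℝ) ^ ((31 * (((W \ S1)).card : ℝ) + 2 * (m : ℝ)) / 64) := by
        apply ih _ (by omega) m (fun h => hm (h.mono (sdiff_subset)))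
      -- combine
      have hc2 : ((W.erase v).card : ℝ) = (W.card : ℝ) - 1 := by
        have := hcard2
        push_cast [← this]
        ring
      have hc1 : ((W \ S1).card : ℝ) ≤ (W.card : ℝ) - 4 := by
        have h4 : 4 ≤ S1.card := by omega
        have := hcard1
        have hcast : ((W \ S1).card : ℝ) + (S1.card : ℝ) = (W.card : ℝ) := by
          exact_mod_cast this
        have hcast4 : (4:ℝ) ≤ (S1.card : ℝ) := by exact_mod_cast h4
        linarith
      refine combine2 (a1 := (31:ℝ)/64) (a2 := (124:ℝ)/64) hle ?_ ?_ numA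
      · refine ih2.trans (Real.rpow_le_rpow_of_exponent_le one_le_two ?_)
        rw [hc2]; ring_nf; linarith
      · refine ih1.trans (Real.rpow_le_rpow_of_exponent_le one_le_two ?_)
        have := hc1
        linarith
    · by_cases hd0 : ∃ v ∈ W, (nbr G W v).card = 0
      · -- Case I : an isolated vertex
        obtain ⟨v, hv, h0⟩ := hd0
        have hnb : nbr G W v = ∅ := card_eq_zero.1 h0
        have key : ∀ s ∈ A, v ∈ s ∧ maxIn G (W.erase v) (s.erase v) := by
          intro s hsA
          have hmax := memA s hsA
          have hvs : v ∈ s := by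
            by_contra hvs
            obtain ⟨y, hys, hadj⟩ := hmax.2.2 v hv hvs
            have : y ∈ nbr G W v := mem_nbr.2 ⟨hmax.1 hys, hadj⟩
            rw [hnb] at this
            exact notMem_empty y this
          refine ⟨hvs, ?_⟩
          have h := maxIn_erase hmax hvs ∅ (by simp)
          rw [empty_union, hnb] at h
          have he : W \ insert v ∅ = W.erase v := by
            rw [insert_empty_eq, ← Finset.erase_eq]
          rwa [he] at h
        have hle : NC G W ≤ NC G (W.erase v) := card_le_NC_erase A v _ key
        have hcard2 : (W.erase v).card + 1 = W.card := by
          rw [card_erase_of_mem hv]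
          have : 1 ≤ W.card := card_pos.2 ⟨v, hv⟩
          omega
        have ih2 : (NC G (W.erase v) : ℝ)
            ≤ (2:ℝ) ^ ((31 * ((W.erase v).card : ℝ) + 2 * (m : ℝ)) / 64) := by
          apply ih _ (by omega) m (fun h => hm (h.mono (erase_subset _ _)))
        have hc2 : ((W.erase v).card : ℝ) = (W.card : ℝ) - 1 := by
          push_cast [← hcard2]
          ring
        calc (NC G W : ℝ) ≤ (NC G (W.erase v) : ℝ) := by exact_mod_cast hle
          _ ≤ (2:ℝ) ^ ((31 * ((W.erase v).card : ℝ) + 2 * (m : ℝ)) / 64) := ih2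
          _ ≤ (2:ℝ) ^ ((31 * ((W).card : ℝ) + 2 * (m : ℝ)) / 64) := by
              apply Real.rpow_le_rpow_of_exponent_le one_le_two
              rw [hc2]
              linarith
      · by_cases hd1 : ∃ v ∈ W, (nbr G W v).card = 1
        · -- Case B : a vertex of degree 1
          obtain ⟨v, hv, h1⟩ := hd1
          obtain ⟨u, hnb⟩ := card_eq_one.1 h1
          have huvnbr : u ∈ nbr G W v := by rw [hnb]; exact mem_singleton_self u
          have hu : u ∈ W := (mem_nbr.1 huvnbr).1
          have hadj : G.Adj v u := (mem_nbr.1 huvnbr).2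
          have hvu_nbr : v ∈ nbr G W u := mem_nbr.2 ⟨hv, hadj.symm⟩
          -- the edge gives an induced matching of size 1, so m ≥ 1
          obtain ⟨m', rfl⟩ : ∃ m', m = m' + 1 := by
            cases m with
            | zero => exact absurd (hasIM_one hv hu hadj) hm
            | succ m' => exact ⟨m', rfl⟩
          set S2 := insert u (nbr G W u) with hS2def
          have hS2W : S2 ⊆ W := insert_subset hu nbr_subset
          have hS2card : S2.card = (nbr G W u).card + 1 :=
            card_insert_of_notMem not_mem_nbr_self
          have hcard2 : (W \ S2).card + S2.card = W.card := card_sdiff_add_card_eq_card hS2W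
          set S1 := insert v (nbr G W v) with hS1def
          have hS1W : S1 ⊆ W := insert_subset hv nbr_subset
          have hS1card : S1.card = 2 := by
            rw [hS1def, hnb, card_insert_of_notMem (by simp [hadj.ne]), card_singleton]
          have hcard1 : (W \ S1).card + S1.card = W.card := card_sdiff_add_card_eq_card hS1W
          -- class u ∈ s goes to W \ S2 with matching gain
          have hsplit : (A.filter (fun s => u ∈ s)).card + (A.filter (fun s => u ∉ s)).card
              = A.card := card_filter_add_card_filter_not (fun s => u ∈ s)
          have b2 : (A.filter (fun s => u ∈ s)).card ≤ NC G (W \ S2) := by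
            apply card_le_NC_erase _ u
            intro s hs
            obtain ⟨hsA, hus⟩ := mem_filter.1 hs
            refine ⟨hus, ?_⟩
            have h := maxIn_erase (memA s hsA) hus ∅ (by simp)
            rwa [empty_union] at h
          have b1 : (A.filter (fun s => u ∉ s)).card ≤ NC G (W \ S1) := by
            apply card_le_NC_erase _ v
            intro s hs
            obtain ⟨hsA, hus⟩ := mem_filter.1 hs
            have hmax := memA s hsA
            have hvs : v ∈ s := by
              by_contra hvs
              obtain ⟨y, hys, hadjy⟩ := hmax.2.2 v hv hvs
              have : y ∈ nbr G W v := mem_nbr.2 ⟨hmax.1 hys, hadjy⟩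
              rw [hnb, mem_singleton] at this
              exact hus (this ▸ hys)
            refine ⟨hvs, ?_⟩
            have h := maxIn_erase hmax hvs ∅ (by simp)
            rwa [empty_union] at h
          have hle : NC G W ≤ NC G (W \ S1) + NC G (W \ S2) := by
            rw [hA, ← hsplit]
            omega
          -- matching gain for the W \ S2 branch
          have hm2 : ¬ HasIM G (W \ S2) (m' + 1) := by
            intro h
            apply hm
            refine h.extend sdiff_subset hv hu hadj ?_ ?_ ?_ ?_
            · intro hvW2
              exact (mem_sdiff.1 hvW2).2 (mem_insert_of_mem hvu_nbr)
            · intro huW2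
              exact (mem_sdiff.1 huW2).2 (mem_insert_self u _)
            · intro x hx hadjx
              have hxW : x ∈ W := (mem_sdiff.1 hx).1
              have : x ∈ nbr G W v := mem_nbr.2 ⟨hxW, hadjx⟩
              rw [hnb, mem_singleton] at this
              exact (mem_sdiff.1 hx).2 (this ▸ mem_insert_self u _)
            · intro x hx hadjx
              have hxW : x ∈ W := (mem_sdiff.1 hx).1
              exact (mem_sdiff.1 hx).2 (mem_insert_of_mem (mem_nbr.2 ⟨hxW, hadjx⟩))
          have ih2 : (NC G (W \ S2) : ℝ)
              ≤ (2:ℝ) ^ ((31 * (((W \ S2)).card : ℝ) + 2 * (m' : ℝ)) / 64) := by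
            apply ih _ (by omega) m' hm2
          -- degree of u
          have hdu1 : 1 ≤ (nbr G W u).card := card_pos.2 ⟨v, hvu_nbr⟩
          by_cases hdu : (nbr G W u).card = 1
          · -- u has degree 1 : K2 component, both branches gain
            have hnbu : nbr G W u = {v} := by
              obtain ⟨x, hx⟩ := card_eq_one.1 hdu
              rw [hx] at hvu_nbr
              rw [hx, mem_singleton.1 hvu_nbr]
            have hSS : S1 = S2 := by
              rw [hS1def, hS2def, hnb, hnbu]
              exact pair_comm v u
            rw [hSS] at hle hcard1 hS1card b1
            refine combine2 (a1 := (64:ℝ)/64) (a2 := (64:ℝ)/64) hle ?_ ?_ numD <;>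
            · refine ih2.trans (Real.rpow_le_rpow_of_exponent_le one_le_two ?_)
              have hcast : ((W \ S2).card : ℝ) + 2 = (W.card : ℝ) := by
                rw [hS1card] at hcard1
                exact_mod_cast hcard1
              push_cast
              linarith
          · -- u has degree ≥ 2
            have hdu2 : 2 ≤ (nbr G W u).card := by omega
            have ih1 : (NC G (W \ S1) : ℝ)
                ≤ (2:ℝ) ^ ((31 * (((W \ S1)).card : ℝ) + 2 * ((m' + 1 : ℕ) : ℝ)) / 64) := by
              apply ih _ (by omega) (m' + 1) (fun h => hm (h.mono sdiff_subset))
            refine combine2 (a1 := (62:ℝ)/64) (a2 := (95:ℝ)/64) hle ?_ ?_ numB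
            · refine ih1.trans (Real.rpow_le_rpow_of_exponent_le one_le_two ?_)
              have hcast : ((W \ S1).card : ℝ) + 2 = (W.card : ℝ) := by
                rw [hS1card] at hcard1
                exact_mod_cast hcard1
              push_cast
              linarith
            · refine ih2.trans (Real.rpow_le_rpow_of_exponent_le one_le_two ?_)
              have hcast : ((W \ S2).card : ℝ) + ((nbr G W u).card : ℝ) + 1 = (W.card : ℝ) := by
                rw [hS2card] at hcard2
                exact_mod_cast hcard2
              have hcast2 : (2:ℝ) ≤ ((nbr G W u).card : ℝ) := by exact_mod_cast hdu2
              push_cast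
              linarith
        · -- Case C : every vertex of W has degree exactly 2 in W
          push_neg at hd3 hd0 hd1
          have hdeg : ∀ x ∈ W, (nbr G W x).card = 2 := by
            intro x hx
            have h3 := hd3 x hx
            have h0 := hd0 x hx
            have h1 := hd1 x hx
            omega
          obtain ⟨v, hv⟩ := nonempty_iff_ne_empty.2 hWe
          obtain ⟨u1, u2, hne, hpair⟩ := card_eq_two.1 (hdeg v hv)
          have hu1nbr : u1 ∈ nbr G W v := by rw [hpair]; exact mem_insert_self _ _
          have hu2nbr : u2 ∈ nbr G W v := by
            rw [hpair]; exact mem_insert_of_mem (mem_singleton_self _)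
          have hu1W : u1 ∈ W := (mem_nbr.1 hu1nbr).1
          have hadj1 : G.Adj v u1 := (mem_nbr.1 hu1nbr).2
          have hu2W : u2 ∈ W := (mem_nbr.1 hu2nbr).1
          have hadj2 : G.Adj v u2 := (mem_nbr.1 hu2nbr).2
          have htri : ¬ G.Adj u1 u2 := by
            intro h
            exact hG {v, u1, u2} (SimpleGraph.is3Clique_triple_iff.2 ⟨hadj1, hadj2, h⟩)
          obtain ⟨m', rfl⟩ : ∃ m'', m = m'' + 1 := by
            cases m with
            | zero => exact absurd (hasIM_one hv hu1W hadj1) hm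
            | succ m'' => exact ⟨m'', rfl⟩
          set S1 := insert v (nbr G W v) with hS1def
          have hS1W : S1 ⊆ W := insert_subset hv nbr_subset
          have hS1card : S1.card = 3 := by
            rw [hS1def, card_insert_of_notMem not_mem_nbr_self, hdeg v hv]
          have hcard1 : (W \ S1).card + S1.card = W.card := card_sdiff_add_card_eq_card hS1W
          set S2 := insert u1 (nbr G W u1) with hS2def
          have hS2W : S2 ⊆ W := insert_subset hu1W nbr_subset
          have hS2card : S2.card = 3 := by
            rw [hS2def, card_insert_of_notMem not_mem_nbr_self, hdeg u1 hu1W]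
          have hcard2 : (W \ S2).card + S2.card = W.card := card_sdiff_add_card_eq_card hS2W
          have hu1nmem : u1 ∉ nbr G W u2 := by
            intro h
            exact htri (mem_nbr.1 h).2.symm
          set S3 := insert u2 ({u1} ∪ nbr G W u2) with hS3def
          have hS3W : S3 ⊆ W := by
            refine insert_subset hu2W (union_subset ?_ nbr_subset)
            exact singleton_subset_iff.2 hu1W
          have hS3card : S3.card = 4 := by
            have hu2notin : u2 ∉ ({u1} ∪ nbr G W u2 : Finset (Fin n)) := by
              rw [mem_union, mem_singleton]
              rintro (rfl | h)
              · exact hne rfl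
              · exact not_mem_nbr_self h
            rw [hS3def, card_insert_of_notMem hu2notin,
              card_union_of_disjoint (disjoint_singleton_left.2 hu1nmem),
              card_singleton, hdeg u2 hu2W]
          have hcard3 : (W \ S3).card + S3.card = W.card := card_sdiff_add_card_eq_card hS3W
          -- splits
          have hsplit1 : (A.filter (fun s => v ∈ s)).card + (A.filter (fun s => v ∉ s)).card
              = A.card := card_filter_add_card_filter_not (fun s => v ∈ s)
          set A' := A.filter (fun s => v ∉ s) with hA'def
          have hsplit2 : (A'.filter (fun s => u1 ∈ s)).card
              + (A'.filter (fun s => u1 ∉ s)).card = A'.card :=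
            card_filter_add_card_filter_not (fun s => u1 ∈ s)
          have b1 : (A.filter (fun s => v ∈ s)).card ≤ NC G (W \ S1) := by
            apply card_le_NC_erase _ v
            intro s hs
            obtain ⟨hsA, hvs⟩ := mem_filter.1 hs
            refine ⟨hvs, ?_⟩
            have h := maxIn_erase (memA s hsA) hvs ∅ (by simp)
            rwa [empty_union] at h
          have b2 : (A'.filter (fun s => u1 ∈ s)).card ≤ NC G (W \ S2) := by
            apply card_le_NC_erase _ u1
            intro s hs
            obtain ⟨hsA', hu1s⟩ := mem_filter.1 hs
            obtain ⟨hsA, hvs⟩ := mem_filter.1 hsA'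
            refine ⟨hu1s, ?_⟩
            have h := maxIn_erase (memA s hsA) hu1s ∅ (by simp)
            rwa [empty_union] at h
          have b3 : (A'.filter (fun s => u1 ∉ s)).card ≤ NC G (W \ S3) := by
            apply card_le_NC_erase _ u2
            intro s hs
            obtain ⟨hsA', hu1s⟩ := mem_filter.1 hs
            obtain ⟨hsA, hvs⟩ := mem_filter.1 hsA'
            have hmax := memA s hsA
            have hu2s : u2 ∈ s := by
              by_contra hu2s
              obtain ⟨y, hys, hadjy⟩ := hmax.2.2 v hv hvs
              have hynbr : y ∈ nbr G W v := mem_nbr.2 ⟨hmax.1 hys, hadjy⟩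
              rw [hpair, mem_insert, mem_singleton] at hynbr
              rcases hynbr with rfl | rfl
              · exact hu1s hys
              · exact hu2s hys
            refine ⟨hu2s, ?_⟩
            exact maxIn_erase hmax hu2s {u1}
              (fun t ht => (mem_singleton.1 ht) ▸ hu1s)
          have hle : NC G W ≤ NC G (W \ S1) + NC G (W \ S2) + NC G (W \ S3) := by
            rw [hA, ← hsplit1, ← hsplit2]
            omega
          -- matching gain for the third branch using the pair {v, u2}
          have hm3 : ¬ HasIM G (W \ S3) (m' + 1) := by
            intro h
            apply hm
            refine h.extend sdiff_subset hv hu2W hadj2 ?_ ?_ ?_ ?_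
            · intro hvW3
              refine (mem_sdiff.1 hvW3).2 ?_
              exact mem_insert_of_mem (mem_union_right _ (mem_nbr.2 ⟨hv, hadj2.symm⟩))
            · intro huW3
              exact (mem_sdiff.1 huW3).2 (mem_insert_self u2 _)
            · intro x hx hadjx
              have hxW : x ∈ W := (mem_sdiff.1 hx).1
              have hxnbr : x ∈ nbr G W v := mem_nbr.2 ⟨hxW, hadjx⟩
              rw [hpair, mem_insert, mem_singleton] at hxnbr
              rcases hxnbr with rfl | rfl
              · exact (mem_sdiff.1 hx).2
                  (mem_insert_of_mem (mem_union_left _ (mem_singleton_self x)))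
              · exact (mem_sdiff.1 hx).2 (mem_insert_self x _)
            · intro x hx hadjx
              have hxW : x ∈ W := (mem_sdiff.1 hx).1
              exact (mem_sdiff.1 hx).2
                (mem_insert_of_mem (mem_union_right _ (mem_nbr.2 ⟨hxW, hadjx⟩)))
          -- induction hypotheses
          have ih1 : (NC G (W \ S1) : ℝ)
              ≤ (2:ℝ) ^ ((31 * (((W \ S1)).card : ℝ) + 2 * ((m' + 1 : ℕ) : ℝ)) / 64) :=
            ih _ (by omega) (m' + 1) (fun h => hm (h.mono sdiff_subset))
          have ih2 : (NC G (W \ S2) : ℝ)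
              ≤ (2:ℝ) ^ ((31 * (((W \ S2)).card : ℝ) + 2 * ((m' + 1 : ℕ) : ℝ)) / 64) :=
            ih _ (by omega) (m' + 1) (fun h => hm (h.mono sdiff_subset))
          have ih3 : (NC G (W \ S3) : ℝ)
              ≤ (2:ℝ) ^ ((31 * (((W \ S3)).card : ℝ) + 2 * (m' : ℝ)) / 64) :=
            ih _ (by omega) m' hm3
          refine combine3 (a1 := (93:ℝ)/64) (a2 := (93:ℝ)/64) (a3 := (126:ℝ)/64)
            hle ?_ ?_ ?_ numC
          · refine ih1.trans (Real.rpow_le_rpow_of_exponent_le one_le_two ?_)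
            have hcast : ((W \ S1).card : ℝ) + 3 = (W.card : ℝ) := by
              rw [hS1card] at hcard1
              exact_mod_cast hcard1
            push_cast
            linarith
          · refine ih2.trans (Real.rpow_le_rpow_of_exponent_le one_le_two ?_)
            have hcast : ((W \ S2).card : ℝ) + 3 = (W.card : ℝ) := by
              rw [hS2card] at hcard2
              exact_mod_cast hcard2
            push_cast
            linarith
          · refine ih3.trans (Real.rpow_le_rpow_of_exponent_le one_le_two ?_)
            have hcast : ((W \ S3).card : ℝ) + 4 = (W.card : ℝ) := by
              rw [hS3card] at hcard3
              exact_mod_cast hcard3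
            push_cast
            linarith


lemma maxIn_univ_iff {s : Finset (Fin n)} :
    IsMaxIndepFinset G s ↔ maxIn G univ s := by
  constructor
  · rintro ⟨hind, hmax⟩
    refine ⟨subset_univ s, fun a ha b hb => hind ha hb, ?_⟩
    intro x _ hxs
    by_contra hno
    push_neg at hno
    have hind' : IsIndepFinset G (insert x s) := by
      intro a ha b hb
      rcases mem_insert.1 ha with rfl | ha' <;> rcases mem_insert.1 hb with rfl | hb'
      · exact G.irrefl
      · exact hno b hb'
      · intro hadj; exact hno a ha' hadj.symm
      · exact hind ha' hb'
    have heq := hmax (insert x s) hind' (subset_insert x s)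
    exact hxs (heq ▸ mem_insert_self x s)
  · rintro ⟨-, hind, hdom⟩
    constructor
    · intro a ha b hb
      exact hind a ha b hb
    · intro t ht hst
      refine Finset.Subset.antisymm hst ?_
      intro x hxt
      by_contra hxs
      obtain ⟨y, hys, hadj⟩ := hdom x (mem_univ x) hxs
      exact ht hxt (hst hys) hadj

lemma mis_eq_NC : mis G = NC G univ := by
  have hset : {s : Finset (Fin n) | IsMaxIndepFinset G s}
      = ↑(univ.powerset.filter (fun s => maxIn G univ s)) := by
    ext s
    simp only [Set.mem_setOf_eq, coe_filter, mem_powerset, Set.mem_setOf_eq]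
    rw [maxIn_univ_iff]
    exact ⟨fun h => ⟨subset_univ s, h⟩, fun h => h.2⟩
  rw [mis, hset, Set.ncard_coe_finset]
  rfl

lemma hasIM_univ_iff {t : ℕ} : HasIM G univ t ↔ HasInducedMatching G t := by
  constructor
  · rintro ⟨f, -, h2, h3, h4, h5⟩; exact ⟨f, h2, h3, h4, h5⟩
  · rintro ⟨f, h2, h3, h4, h5⟩; exact ⟨f, fun i => subset_univ _, h2, h3, h4, h5⟩

end KPaux

theorem kahn_park_matching_stability :
    ∀ ε : ℝ, 0 < ε → ∃ δ : ℝ, 0 < δ ∧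
      ∀ n : ℕ, 0 < n → ∀ G : SimpleGraph (Fin n), G.CliqueFree 3 →
        (∀ k : ℕ, (1 - ε) * n / 2 ≤ (k : ℝ) → ¬ HasInducedMatching G k) →
        (mis G : ℝ) < 2 ^ ((1 / 2 - δ) * n) := by
  intro ε hε
  refine ⟨ε / 128, by positivity, ?_⟩
  intro n hn G hG hno
  set x : ℝ := (1 - ε) * n / 2 with hxdef
  set k0 : ℕ := ⌈x⌉₊ with hk0def
  have hnotk0 : ¬ HasInducedMatching G k0 := hno k0 (Nat.le_ceil x)
  rcases Nat.eq_zero_or_pos k0 with h0 | hpos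
  · exfalso
    apply hnotk0
    rw [h0]
    exact ⟨Fin.elim0, fun i => i.elim0, fun i j _ => i.elim0,
      fun i => i.elim0, fun i j _ => i.elim0⟩
  · obtain ⟨m, hm0⟩ : ∃ m, k0 = m + 1 := ⟨k0 - 1, by omega⟩
    have hm : ¬ KPaux.HasIM G univ (m + 1) := by
      intro h
      exact hnotk0 (hm0 ▸ KPaux.hasIM_univ_iff.1 h)
    have hmain := KPaux.main hG (univ : Finset (Fin n)).card univ le_rfl m hm
    rw [Finset.card_fin] at hmain
    rw [KPaux.mis_eq_NC]
    have hx0 : 0 ≤ x := by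
      by_contra h
      push_neg at h
      have : k0 = 0 := Nat.ceil_eq_zero.2 h.le
      omega
    have hmlt : (m : ℝ) < x := by
      have hceil := Nat.ceil_lt_add_one hx0
      rw [← hk0def, hm0] at hceil
      push_cast at hceil
      linarith
    refine lt_of_le_of_lt hmain ?_
    apply Real.rpow_lt_rpow_of_exponent_lt one_lt_two
    have hn0 : (0 : ℝ) ≤ n := Nat.cast_nonneg n
    have hkey : 2 * (m : ℝ) < (1 - ε) * n := by
      rw [hxdef] at hmlt
      linarith
    nlinarith [mul_nonneg hε.le hn0]
end

section
/- Let G be a finite simple graph and v a vertex of G. Then mis(G) ≤ Σ_{w ∈ N[v]} mis(G − N[w]), where N[u] = N(u) ∪ {u} denotes the closed neighborhood of u and G − N[w] denotes the induced subgraph of G on the vertices outside N[w]. -/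
open Finset in
/-- the per-vertex bound -/
lemma per_w {V : Type*} [Fintype V] [DecidableEq V]
    (G : SimpleGraph V) [DecidableRel G.Adj] (w : V)
    (F : Finset (Finset V)) (hF : ∀ s ∈ F, IsMaxIndepFinset G s ∧ w ∈ s) :
    F.card ≤ mis (G.induce (G.neighborSet w ∪ {w})ᶜ) := by
  classical
  set C : Set V := (G.neighborSet w ∪ {w})ᶜ with hC
  have hmemC : ∀ x, x ∈ C ↔ ¬ G.Adj w x ∧ x ≠ w := by
    intro x
    simp [hC, C, SimpleGraph.mem_neighborSet]
  set Gw := G.induce C with hGw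
  have hfin : {t : Finset ↥C | IsMaxIndepFinset Gw t}.Finite := Set.toFinite _
  have hmis : mis Gw = hfin.toFinset.card := by
    rw [mis, Set.ncard_eq_toFinset_card']
    congr 1
    simp
  rw [hmis]
  set Φ : Finset V → Finset ↥C := fun s => s.subtype (· ∈ C) with hΦ
  -- key: recover s from Φ s
  have hrec : ∀ s ∈ F, s = insert w ((Φ s).image Subtype.val) := by
    intro s hs
    obtain ⟨⟨hind, _⟩, hw⟩ := hF s hs
    ext x
    simp only [Finset.mem_insert, Finset.mem_image, Finset.mem_subtype, Φ]
    constructor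
    · intro hx
      by_cases hxw : x = w
      · exact Or.inl hxw
      · refine Or.inr ⟨⟨x, ?_⟩, hx, rfl⟩
        rw [hmemC]
        exact ⟨hind hw hx, hxw⟩
    · rintro (rfl | ⟨a, ha, rfl⟩)
      · exact hw
      · exact ha
  apply Finset.card_le_card_of_injOn Φ
  · -- maps into the set of max indep sets of Gw
    intro s hs
    obtain ⟨⟨hind, hmax⟩, hw⟩ := hF s hs
    rw [Finset.mem_coe, Set.Finite.mem_toFinset]
    constructor
    · intro a ha b hb hab
      rw [Finset.mem_subtype] at ha hb
      exact hind ha hb hab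
    · intro t ht hsub
      -- build s' from t
      set s' := insert w (t.image Subtype.val) with hs'
      have hindep' : IsIndepFinset G s' := by
        intro a ha b hb hab
        simp only [hs', Finset.mem_insert, Finset.mem_image] at ha hb
        rcases ha with rfl | ⟨a', ha', rfl⟩ <;> rcases hb with rfl | ⟨b', hb', rfl⟩
        · exact G.irrefl hab
        · exact ((hmemC b'.val).mp b'.property).1 hab
        · exact ((hmemC a'.val).mp a'.property).1 hab.symm
        · exact ht ha' hb' hab
      have hss' : s ⊆ s' := by
        intro x hx
        rw [hrec s hs] at hx
        simp only [Finset.mem_insert, Finset.mem_image] at hx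
        rcases hx with rfl | ⟨a, ha, rfl⟩
        · exact Finset.mem_insert_self _ _
        · exact Finset.mem_insert_of_mem (Finset.mem_image_of_mem _ (hsub ha))
      have hseq : s = s' := hmax s' hindep' hss'
      apply Finset.Subset.antisymm hsub
      intro x hx
      rw [Finset.mem_subtype]
      have : x.val ∈ s' := Finset.mem_insert_of_mem (Finset.mem_image_of_mem _ hx)
      rwa [← hseq] at this
  · intro s1 h1 s2 h2 heq
    rw [hrec s1 h1, hrec s2 h2, heq]

theorem mis_le_sum_closed_neighborhood {V : Type*} [Fintype V] [DecidableEq V]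
    (G : SimpleGraph V) [DecidableRel G.Adj] (v : V) :
    mis G ≤ ∑ w ∈ insert v (G.neighborFinset v),
      mis (G.induce (G.neighborSet w ∪ {w})ᶜ) := by
  classical
  have hfin : {s : Finset V | IsMaxIndepFinset G s}.Finite := Set.toFinite _
  have hmis : mis G = hfin.toFinset.card := by
    rw [mis, Set.ncard_eq_toFinset_card']; congr 1; simp
  rw [hmis]
  set N := insert v (G.neighborFinset v) with hN
  set F := hfin.toFinset with hFdef
  have hcover : F ⊆ N.biUnion (fun w => F.filter (fun s => w ∈ s)) := by
    intro s hs
    have hmi : IsMaxIndepFinset G s := by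
      have := (Set.Finite.mem_toFinset hfin).mp hs; exact this
    rw [Finset.mem_biUnion]
    by_contra hnone
    push_neg at hnone
    have hv : ∀ w ∈ N, w ∉ s := by
      intro w hw hws
      exact hnone w hw (Finset.mem_filter.mpr ⟨hs, hws⟩)
    have hvs : v ∉ s := hv v (Finset.mem_insert_self _ _)
    have key : ∀ x ∈ s, ¬ G.Adj v x := fun x hx hadj =>
      hv x (Finset.mem_insert_of_mem (by simpa using hadj)) hx
    have hind : IsIndepFinset G (insert v s) := by
      intro a ha b hb hadj
      rw [Finset.mem_insert] at ha hb
      rcases ha with rfl | ha <;> rcases hb with rfl | hb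
      · exact G.irrefl hadj
      · exact key b hb hadj
      · exact key a ha hadj.symm
      · exact hmi.1 ha hb hadj
    have heq := hmi.2 _ hind (Finset.subset_insert _ _)
    exact hvs (by rw [heq]; exact Finset.mem_insert_self v s)
  calc F.card ≤ (N.biUnion fun w => F.filter (fun s => w ∈ s)).card :=
        Finset.card_le_card hcover
    _ ≤ ∑ w ∈ N, (F.filter (fun s => w ∈ s)).card := Finset.card_biUnion_le
    _ ≤ ∑ w ∈ N, mis (G.induce (G.neighborSet w ∪ {w})ᶜ) := by
        apply Finset.sum_le_sum
        intro w _
        apply per_w G w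
        intro s hs
        have h := Finset.mem_filter.mp hs
        exact ⟨(Set.Finite.mem_toFinset hfin).mp h.1, h.2⟩
end

section
/- For every integer n ≥ 6, the number of maximal independent sets of the cycle C_n satisfies mis(C_n) = mis(C_{n−2}) + mis(C_{n−3}). -/
namespace MisAux

open SimpleGraph Finset

/-- membership of `k mod n` in `S`. -/
def memF {n : ℕ} (S : Finset (Fin n)) (k : ℕ) : Prop :=
  ∃ h : k % n < n, (⟨k % n, h⟩ : Fin n) ∈ S

lemma memF_congr {n : ℕ} {S : Finset (Fin n)} {k l : ℕ} (h : k % n = l % n) :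
    memF S k ↔ memF S l := by unfold memF; rw [h]

lemma mod_add_congr {n k l : ℕ} (h : k % n = l % n) (i : ℕ) : (k + i) % n = (l + i) % n := by
  rw [← Nat.mod_add_mod, h, Nat.mod_add_mod]

lemma memF_lt {n : ℕ} {S : Finset (Fin n)} {k : ℕ} (hk : k < n) :
    memF S k ↔ (⟨k, hk⟩ : Fin n) ∈ S := by
  unfold memF
  simp only [Nat.mod_eq_of_lt hk]
  exact ⟨fun ⟨_, hm⟩ => hm, fun hm => ⟨hk, hm⟩⟩

lemma memF_mod {n : ℕ} {S : Finset (Fin n)} (k : ℕ) : memF S k ↔ memF S (k % n) :=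
  memF_congr (Nat.mod_mod_of_dvd _ dvd_rfl).symm

lemma memF_reduce {n : ℕ} {S : Finset (Fin n)} (k i : ℕ) :
    memF S (k + i) ↔ memF S (k % n + i) :=
  memF_congr (mod_add_congr (Nat.mod_mod_of_dvd _ dvd_rfl).symm i)

lemma memF_wrap {n : ℕ} {S : Finset (Fin n)} (i : ℕ) : memF S (n + i) ↔ memF S i :=
  memF_congr (by rw [Nat.add_mod_left])

lemma isMaxIndep_iff {V : Type*} [DecidableEq V] (G : SimpleGraph V) (s : Finset V) :
    IsMaxIndepFinset G s ↔ IsIndepFinset G s ∧ ∀ v ∉ s, ∃ u ∈ s, G.Adj u v := by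
  constructor
  · rintro ⟨h1, h2⟩
    refine ⟨h1, fun v hv => ?_⟩
    by_contra hno
    push_neg at hno
    have hind : IsIndepFinset G (insert v s) := by
      intro a ha b hb hadj
      rcases Finset.mem_insert.1 ha with ha' | ha' <;>
        rcases Finset.mem_insert.1 hb with hb' | hb'
      · rw [ha', hb'] at hadj; exact G.irrefl hadj
      · rw [ha'] at hadj; exact hno b hb' hadj.symm
      · rw [hb'] at hadj; exact hno a ha' hadj
      · exact h1 ha' hb' hadj
    have := h2 _ hind (Finset.subset_insert _ _)
    exact hv (this ▸ Finset.mem_insert_self v s)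
  · rintro ⟨h1, h2⟩
    refine ⟨h1, fun t ht hst => Finset.Subset.antisymm hst fun v hv => ?_⟩
    by_contra hvs
    obtain ⟨u, hu, hadj⟩ := h2 v hvs
    exact ht (hst hu) hv hadj

lemma cycle_adj_iff {n : ℕ} (hn : 3 ≤ n) (a b : Fin n) [NeZero n] :
    (cycleGraph n).Adj a b ↔ b = a + 1 ∨ a = b + 1 := by
  obtain ⟨m, rfl⟩ : ∃ m, n = m + 2 := ⟨n - 2, by omega⟩
  rw [SimpleGraph.cycleGraph_adj]
  constructor
  · rintro (h | h)
    · right; rw [sub_eq_iff_eq_add] at h; rw [h]; abel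
    · left; rw [sub_eq_iff_eq_add] at h; rw [h]; abel
  · rintro (h | h) <;> subst h
    · right; abel
    · left; abel

/-- main characterization of maximal independent sets of the cycle. -/
lemma mis_iff {n : ℕ} (hn : 3 ≤ n) (S : Finset (Fin n)) :
    IsMaxIndepFinset (cycleGraph n) S ↔
      ((∀ k, ¬(memF S k ∧ memF S (k+1))) ∧ (∀ k, memF S k ∨ memF S (k+1) ∨ memF S (k+2))) := by
  have hn0 : 0 < n := by omega
  haveI : NeZero n := ⟨by omega⟩
  set u : ℕ → Fin n := fun k => ⟨k % n, Nat.mod_lt _ hn0⟩ with hu_def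
  have hu : ∀ k, u k ∈ S ↔ memF S k := fun k => ⟨fun h => ⟨_, h⟩, fun ⟨_, h⟩ => h⟩
  have hone : ((1 : Fin n) : ℕ) = 1 := by
    obtain ⟨m, rfl⟩ : ∃ m, n = m + 2 := ⟨n - 2, by omega⟩
    rfl
  have hsucc : ∀ k, u (k+1) = u k + 1 := by
    intro k
    simp [hu_def, Fin.add_def, hone, Nat.mod_add_mod]
  have husurj : ∀ a : Fin n, u a.val = a := fun a => Fin.ext (Nat.mod_eq_of_lt a.isLt)
  have hper : ∀ a, u (a + n) = u a := fun a => Fin.ext (Nat.add_mod_right a n)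
  rw [isMaxIndep_iff]
  constructor
  · rintro ⟨h1, h2⟩
    constructor
    · rintro k ⟨hk1, hk2⟩
      refine h1 ((hu k).2 hk1) ((hu (k+1)).2 hk2) ?_
      rw [cycle_adj_iff hn]
      left; exact hsucc k
    · intro k
      by_cases hk1 : u (k+1) ∈ S
      · exact Or.inr (Or.inl ((hu _).1 hk1))
      · obtain ⟨w, hw, hadj⟩ := h2 _ hk1
        rw [cycle_adj_iff hn] at hadj
        rcases hadj with h | h
        · left
          rw [← hu, show u k = w from by
            have h2 := hsucc k
            rw [h] at h2
            exact (add_right_cancel h2).symm]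
          exact hw
        · right; right
          rw [← hu, show u (k+2) = u (k+1) + 1 from hsucc (k+1), ← h]
          exact hw
  · rintro ⟨h1, h2⟩
    constructor
    · intro a ha b hb hadj
      rw [cycle_adj_iff hn] at hadj
      rcases hadj with rfl | rfl
      · exact h1 a.val ⟨(hu _).1 (by rw [husurj]; exact ha),
          (hu _).1 (by rw [hsucc, husurj]; exact hb)⟩
      · exact h1 b.val ⟨(hu _).1 (by rw [husurj]; exact hb),
          (hu _).1 (by rw [hsucc, husurj]; exact ha)⟩
    · intro v hv
      set k := v.val + (n - 1) with hk_def
      have hk1 : u (k + 1) = v := by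
        rw [show k + 1 = v.val + n from by omega, hper, husurj]
      rcases h2 k with hf | hf | hf
      · refine ⟨u k, (hu _).2 hf, ?_⟩
        rw [cycle_adj_iff hn]
        left; rw [← hsucc, hk1]
      · exact absurd ((hu _).2 hf) (by rw [hk1]; exact hv)
      · refine ⟨u (k+2), (hu _).2 hf, ?_⟩
        rw [cycle_adj_iff hn]
        right; rw [show k + 2 = (k+1) + 1 from rfl, hsucc, hk1]

lemma indep_all {n : ℕ} {S : Finset (Fin n)} (hn : 0 < n)
    (h : ∀ k < n, ¬(memF S k ∧ memF S (k+1))) : ∀ k, ¬(memF S k ∧ memF S (k+1)) := by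
  intro k
  rw [memF_mod k, memF_reduce k 1]
  exact h _ (Nat.mod_lt _ hn)

lemma dom_all {n : ℕ} {S : Finset (Fin n)} (hn : 0 < n)
    (h : ∀ k < n, memF S k ∨ memF S (k+1) ∨ memF S (k+2)) :
    ∀ k, memF S k ∨ memF S (k+1) ∨ memF S (k+2) := by
  intro k
  rw [memF_mod k, memF_reduce k 1, memF_reduce k 2]
  exact h _ (Nat.mod_lt _ hn)

def ins {m n : ℕ} (h : m ≤ n) (c : Fin n) (T : Finset (Fin m)) : Finset (Fin n) :=
  insert c (T.map (Fin.castLEEmb h))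

lemma memF_ins {m n : ℕ} (h : m ≤ n) (c : Fin n) (T : Finset (Fin m))
    {k : ℕ} (hk : k < n) :
    memF (ins h c T) k ↔ (k = c.val ∨ (k < m ∧ memF T k)) := by
  rw [memF_lt hk]
  simp only [ins, Finset.mem_insert, Finset.mem_map]
  constructor
  · rintro (h1 | ⟨a, ha, h2⟩)
    · left; rw [← h1]
    · right
      have hav : a.val = k := by
        have := congrArg Fin.val h2
        simpa using this
      refine ⟨hav ▸ a.isLt, ?_⟩
      rw [memF_lt (show k < m from hav ▸ a.isLt)]
      have : (⟨k, show k < m from hav ▸ a.isLt⟩ : Fin m) = a := Fin.ext hav.symm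
      rw [this]; exact ha
  · rintro (rfl | ⟨hkm, h2⟩)
    · left; exact Fin.ext rfl
    · right; exact ⟨⟨k, hkm⟩, (memF_lt hkm).1 h2, Fin.ext rfl⟩

lemma memF_ins_lt {m n : ℕ} (hmn : m ≤ n) (c : Fin n) (hc : m ≤ c.val) (T : Finset (Fin m))
    {k : ℕ} (hk : k < m) : memF (ins hmn c T) k ↔ memF T k := by
  rw [memF_ins hmn c T (lt_of_lt_of_le hk hmn)]
  constructor
  · rintro (h | ⟨_, h⟩)
    · omega
    · exact h
  · exact fun h => Or.inr ⟨hk, h⟩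

lemma memF_ins_self {m n : ℕ} (hmn : m ≤ n) (c : Fin n) (T : Finset (Fin m)) :
    memF (ins hmn c T) c.val := by
  rw [memF_ins hmn c T c.isLt]; exact Or.inl rfl

lemma memF_ins_high {m n : ℕ} (hmn : m ≤ n) (c : Fin n) (T : Finset (Fin m))
    {k : ℕ} (hm : m ≤ k) (hk : k < n) (hkc : k ≠ c.val) : ¬ memF (ins hmn c T) k := by
  rw [memF_ins hmn c T hk]
  rintro (h | ⟨h, _⟩) <;> omega

def res {m n : ℕ} (h : m ≤ n) (S : Finset (Fin n)) : Finset (Fin m) :=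
  Finset.univ.filter (fun u => Fin.castLE h u ∈ S)

lemma memF_res {m n : ℕ} (h : m ≤ n) (S : Finset (Fin n)) {k : ℕ} (hk : k < m) :
    memF (res h S) k ↔ memF S k := by
  rw [memF_lt hk, memF_lt (lt_of_lt_of_le hk h), res, Finset.mem_filter]
  exact ⟨fun ⟨_, h2⟩ => h2, fun h2 => ⟨Finset.mem_univ _, h2⟩⟩

noncomputable def phi2 {m n : ℕ} (h : m + 2 = n) (T : Finset (Fin m)) : Finset (Fin n) :=
  have h1 : m ≤ n := by omega
  have h2 : n - 1 < n := by omega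
  have h3 : n - 2 < n := by omega
  @ite _ (memF T (m - 1)) (Classical.propDecidable _)
    (ins h1 ⟨n - 1, h2⟩ T) (ins h1 ⟨n - 2, h3⟩ T)

noncomputable def phi3 {m n : ℕ} (h : m + 3 = n) (T : Finset (Fin m)) : Finset (Fin n) :=
  have h1 : m ≤ n := by omega
  have h2 : n - 1 < n := by omega
  have h3 : n - 3 < n := by omega
  have h4 : n - 2 < n := by omega
  @ite _ (memF T (m - 1)) (Classical.propDecidable _)
    (ins h1 ⟨n - 1, h2⟩ T)
    (@ite _ (memF T 0) (Classical.propDecidable _)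
      (ins h1 ⟨n - 3, h3⟩ T) (ins h1 ⟨n - 2, h4⟩ T))

def P2 (n : ℕ) (S : Finset (Fin n)) : Prop :=
  (memF S (n-1) ∧ memF S (n-3)) ∨ (memF S (n-2) ∧ memF S 0) ∨ (memF S (n-2) ∧ memF S (n-4))

def P3 (n : ℕ) (S : Finset (Fin n)) : Prop :=
  (memF S (n-1) ∧ ¬memF S (n-3)) ∨ (memF S (n-3) ∧ memF S 0) ∨
    (memF S (n-2) ∧ ¬memF S (n-4) ∧ ¬memF S 0)
lemma phi2_spec {m n : ℕ} (h : m + 2 = n) (hm : 4 ≤ m) {T : Finset (Fin m)}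
    (hT : IsMaxIndepFinset (cycleGraph m) T) :
    IsMaxIndepFinset (cycleGraph n) (phi2 h T) ∧ P2 n (phi2 h T) := by
  have hle : m ≤ n := by omega
  obtain ⟨hI, hD⟩ := (mis_iff (show 3 ≤ m by omega) T).1 hT
  have gm : memF T m ↔ memF T 0 := memF_wrap 0
  by_cases hbr : memF T (m - 1)
  · -- insert n-1
    have hg0 : ¬ memF T 0 := fun h0 => hI (m-1) ⟨hbr, by
      rw [show m-1+1 = m from by omega]; exact gm.2 h0⟩
    have hphi : phi2 h T = ins hle ⟨n-1, by omega⟩ T := by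
      unfold phi2; exact if_pos hbr
    rw [hphi]
    have E1 : ∀ {k : ℕ}, k < m → (memF (ins hle (⟨n-1, by omega⟩ : Fin n) T) k ↔ memF T k) :=
      fun hk => memF_ins_lt hle _ (show m ≤ n-1 from by omega) T hk
    have E2 : memF (ins hle (⟨n-1, by omega⟩ : Fin n) T) (n-1) :=
      memF_ins_self hle _ T
    have E3 : ∀ {k : ℕ}, m ≤ k → k < n → k ≠ n-1 →
        ¬ memF (ins hle (⟨n-1, by omega⟩ : Fin n) T) k :=
      fun h1 h2 h3 => memF_ins_high hle _ T h1 h2 h3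
    constructor
    · rw [mis_iff (show 3 ≤ n from by omega)]
      constructor
      · apply indep_all (show 0 < n from by omega)
        intro k hk
        have hcase : k + 1 < m ∨ k = m - 1 ∨ k = m ∨ k = n - 1 := by omega
        rcases hcase with hc | hc | hc | hc
        · rw [E1 (show k < m from by omega), E1 (show k+1 < m from hc)]
          exact hI k
        · rw [show k = m-1 from hc, show m-1+1 = m from by omega]
          rintro ⟨-, h2⟩
          exact E3 (le_refl m) (by omega) (by omega) h2
        · rw [show k = m from hc]
          rintro ⟨h2, -⟩
          exact E3 (le_refl m) (by omega) (by omega) h2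
        · rw [show k = n-1 from hc, show n-1+1 = n+0 from by omega, memF_wrap,
            E1 (show 0 < m from by omega)]
          rintro ⟨-, h2⟩
          exact hg0 h2
      · apply dom_all (show 0 < n from by omega)
        intro k hk
        have hcase : k + 2 < m ∨ k = m - 2 ∨ k = m - 1 ∨ k = m ∨ k = n - 1 := by omega
        rcases hcase with hc | hc | hc | hc | hc
        · rw [E1 (show k < m from by omega), E1 (show k+1 < m from by omega),
            E1 (show k+2 < m from hc)]
          exact hD k
        · right; left
          rw [show k = m-2 from hc, show m-2+1 = m-1 from by omega,
            E1 (show m-1 < m from by omega)]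
          exact hbr
        · left
          rw [show k = m-1 from hc, E1 (show m-1 < m from by omega)]
          exact hbr
        · right; left
          rw [show k = m from hc, show m + 1 = n-1 from by omega]
          exact E2
        · left
          rw [show k = n-1 from hc]
          exact E2
    · unfold P2
      left
      exact ⟨E2, by rw [show n-3 = m-1 from by omega, E1 (show m-1 < m from by omega)]; exact hbr⟩
  · -- insert n-2
    have hA : memF T (m-2) ∨ memF T 0 := by
      have := hD (m-2)
      rw [show m-2+1 = m-1 from by omega, show m-2+2 = m+0 from by omega, memF_wrap] at this
      rcases this with a | a | a
      · exact Or.inl a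
      · exact absurd a hbr
      · exact Or.inr a
    have hB : memF T 0 ∨ memF T 1 := by
      have := hD (m-1)
      rw [show m-1+1 = m+0 from by omega, show m-1+2 = m+1 from by omega,
        memF_wrap, memF_wrap] at this
      rcases this with a | a | a
      · exact absurd a hbr
      · exact Or.inl a
      · exact Or.inr a
    have hphi : phi2 h T = ins hle ⟨n-2, by omega⟩ T := by
      unfold phi2; exact if_neg hbr
    rw [hphi]
    have E1 : ∀ {k : ℕ}, k < m → (memF (ins hle (⟨n-2, by omega⟩ : Fin n) T) k ↔ memF T k) :=
      fun hk => memF_ins_lt hle _ (show m ≤ n-2 from by omega) T hk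
    have E2 : memF (ins hle (⟨n-2, by omega⟩ : Fin n) T) (n-2) :=
      memF_ins_self hle _ T
    have E3 : ∀ {k : ℕ}, m ≤ k → k < n → k ≠ n-2 →
        ¬ memF (ins hle (⟨n-2, by omega⟩ : Fin n) T) k :=
      fun h1 h2 h3 => memF_ins_high hle _ T h1 h2 h3
    constructor
    · rw [mis_iff (show 3 ≤ n from by omega)]
      constructor
      · apply indep_all (show 0 < n from by omega)
        intro k hk
        have hcase : k + 1 < m ∨ k = m - 1 ∨ k = m ∨ k = n - 1 := by omega
        rcases hcase with hc | hc | hc | hc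
        · rw [E1 (show k < m from by omega), E1 (show k+1 < m from hc)]
          exact hI k
        · rw [show k = m-1 from hc]
          rintro ⟨h2, -⟩
          exact hbr ((E1 (show m-1 < m from by omega)).1 h2)
        · rw [show k = m from hc]
          rintro ⟨-, h2⟩
          exact E3 (by omega) (by omega) (by omega) h2
        · rw [show k = n-1 from hc]
          rintro ⟨h2, -⟩
          exact E3 (by omega) (by omega) (by omega) h2
      · apply dom_all (show 0 < n from by omega)
        intro k hk
        have hcase : k + 2 < m ∨ k = m - 2 ∨ k = m - 1 ∨ k = m ∨ k = n - 1 := by omega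
        rcases hcase with hc | hc | hc | hc | hc
        · rw [E1 (show k < m from by omega), E1 (show k+1 < m from by omega),
            E1 (show k+2 < m from hc)]
          exact hD k
        · right; right
          rw [show k = m-2 from hc, show m-2+2 = n-2 from by omega]
          exact E2
        · right; left
          rw [show k = m-1 from hc, show m-1+1 = n-2 from by omega]
          exact E2
        · left
          rw [show k = n-2 from by omega]
          exact E2
        · rw [show k = n-1 from hc, show n-1+1 = n+0 from by omega,
            show n-1+2 = n+1 from by omega, memF_wrap, memF_wrap,
            E1 (show 0 < m from by omega), E1 (show 1 < m from by omega)]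
          rcases hB with b | b
          · exact Or.inr (Or.inl b)
          · exact Or.inr (Or.inr b)
    · unfold P2
      rcases hA with a | a
      · right; right
        exact ⟨E2, by rw [show n-4 = m-2 from by omega, E1 (show m-2 < m from by omega)]; exact a⟩
      · right; left
        exact ⟨E2, by rw [E1 (show 0 < m from by omega)]; exact a⟩
lemma phi3_spec {m n : ℕ} (h : m + 3 = n) (hm : 3 ≤ m) {T : Finset (Fin m)}
    (hT : IsMaxIndepFinset (cycleGraph m) T) :
    IsMaxIndepFinset (cycleGraph n) (phi3 h T) ∧ P3 n (phi3 h T) := by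
  have hle : m ≤ n := by omega
  obtain ⟨hI, hD⟩ := (mis_iff (show 3 ≤ m by omega) T).1 hT
  have gm : memF T m ↔ memF T 0 := memF_wrap 0
  by_cases hbr : memF T (m - 1)
  · -- insert n-1
    have hg0 : ¬ memF T 0 := fun h0 => hI (m-1) ⟨hbr, by
      rw [show m-1+1 = m from by omega]; exact gm.2 h0⟩
    have hphi : phi3 h T = ins hle ⟨n-1, by omega⟩ T := by
      unfold phi3; exact if_pos hbr
    rw [hphi]
    have E1 : ∀ {k : ℕ}, k < m → (memF (ins hle (⟨n-1, by omega⟩ : Fin n) T) k ↔ memF T k) :=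
      fun hk => memF_ins_lt hle _ (show m ≤ n-1 from by omega) T hk
    have E2 : memF (ins hle (⟨n-1, by omega⟩ : Fin n) T) (n-1) :=
      memF_ins_self hle _ T
    have E3 : ∀ {k : ℕ}, m ≤ k → k < n → k ≠ n-1 →
        ¬ memF (ins hle (⟨n-1, by omega⟩ : Fin n) T) k :=
      fun h1 h2 h3 => memF_ins_high hle _ T h1 h2 h3
    constructor
    · rw [mis_iff (show 3 ≤ n from by omega)]
      constructor
      · apply indep_all (show 0 < n from by omega)
        intro k hk
        have hcase : k + 1 < m ∨ k = m - 1 ∨ k = m ∨ k = n - 2 ∨ k = n - 1 := by omega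
        rcases hcase with hc | hc | hc | hc | hc
        · rw [E1 (show k < m from by omega), E1 (show k+1 < m from hc)]
          exact hI k
        · rw [show k = m-1 from hc, show m-1+1 = m from by omega]
          rintro ⟨-, h2⟩
          exact E3 (le_refl m) (by omega) (by omega) h2
        · rw [show k = m from hc]
          rintro ⟨h2, -⟩
          exact E3 (le_refl m) (by omega) (by omega) h2
        · rw [show k = n-2 from hc]
          rintro ⟨h2, -⟩
          exact E3 (by omega) (by omega) (by omega) h2
        · rw [show k = n-1 from hc, show n-1+1 = n+0 from by omega, memF_wrap,
            E1 (show 0 < m from by omega)]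
          rintro ⟨-, h2⟩
          exact hg0 h2
      · apply dom_all (show 0 < n from by omega)
        intro k hk
        have hcase : k + 2 < m ∨ k = m - 2 ∨ k = m - 1 ∨ k = m ∨ k = n - 2 ∨ k = n - 1 := by
          omega
        rcases hcase with hc | hc | hc | hc | hc | hc
        · rw [E1 (show k < m from by omega), E1 (show k+1 < m from by omega),
            E1 (show k+2 < m from hc)]
          exact hD k
        · right; left
          rw [show k = m-2 from hc, show m-2+1 = m-1 from by omega,
            E1 (show m-1 < m from by omega)]
          exact hbr
        · left
          rw [show k = m-1 from hc, E1 (show m-1 < m from by omega)]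
          exact hbr
        · right; right
          rw [show k = m from hc, show m+2 = n-1 from by omega]
          exact E2
        · right; left
          rw [show k = n-2 from hc, show n-2+1 = n-1 from by omega]
          exact E2
        · left
          rw [show k = n-1 from hc]
          exact E2
    · unfold P3
      left
      exact ⟨E2, E3 (show m ≤ n-3 from by omega) (by omega) (by omega)⟩
  · by_cases hbr2 : memF T 0
    · -- insert n-3
      have hphi : phi3 h T = ins hle ⟨n-3, by omega⟩ T := by
        unfold phi3; exact (if_neg hbr).trans (if_pos hbr2)
      rw [hphi]
      have E1 : ∀ {k : ℕ}, k < m → (memF (ins hle (⟨n-3, by omega⟩ : Fin n) T) k ↔ memF T k) :=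
        fun hk => memF_ins_lt hle _ (show m ≤ n-3 from by omega) T hk
      have E2 : memF (ins hle (⟨n-3, by omega⟩ : Fin n) T) (n-3) :=
        memF_ins_self hle _ T
      have E3 : ∀ {k : ℕ}, m ≤ k → k < n → k ≠ n-3 →
          ¬ memF (ins hle (⟨n-3, by omega⟩ : Fin n) T) k :=
        fun h1 h2 h3 => memF_ins_high hle _ T h1 h2 h3
      constructor
      · rw [mis_iff (show 3 ≤ n from by omega)]
        constructor
        · apply indep_all (show 0 < n from by omega)
          intro k hk
          have hcase : k + 1 < m ∨ k = m - 1 ∨ k = n - 3 ∨ k = n - 2 ∨ k = n - 1 := by omega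
          rcases hcase with hc | hc | hc | hc | hc
          · rw [E1 (show k < m from by omega), E1 (show k+1 < m from hc)]
            exact hI k
          · rw [show k = m-1 from hc]
            rintro ⟨h2, -⟩
            exact hbr ((E1 (show m-1 < m from by omega)).1 h2)
          · rw [show k = n-3 from hc, show n-3+1 = n-2 from by omega]
            rintro ⟨-, h2⟩
            exact E3 (by omega) (by omega) (by omega) h2
          · rw [show k = n-2 from hc]
            rintro ⟨h2, -⟩
            exact E3 (by omega) (by omega) (by omega) h2
          · rw [show k = n-1 from hc]
            rintro ⟨h2, -⟩
            exact E3 (by omega) (by omega) (by omega) h2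
        · apply dom_all (show 0 < n from by omega)
          intro k hk
          have hcase : k + 2 < m ∨ k = m - 2 ∨ k = m - 1 ∨ k = n - 3 ∨ k = n - 2 ∨ k = n - 1 := by
            omega
          rcases hcase with hc | hc | hc | hc | hc | hc
          · rw [E1 (show k < m from by omega), E1 (show k+1 < m from by omega),
              E1 (show k+2 < m from hc)]
            exact hD k
          · right; right
            rw [show k = m-2 from hc, show m-2+2 = n-3 from by omega]
            exact E2
          · right; left
            rw [show k = m-1 from hc, show m-1+1 = n-3 from by omega]
            exact E2
          · left
            rw [show k = n-3 from hc]
            exact E2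
          · right; right
            rw [show k = n-2 from hc, show n-2+2 = n+0 from by omega, memF_wrap,
              E1 (show 0 < m from by omega)]
            exact hbr2
          · right; left
            rw [show k = n-1 from hc, show n-1+1 = n+0 from by omega, memF_wrap,
              E1 (show 0 < m from by omega)]
            exact hbr2
      · unfold P3
        right; left
        exact ⟨E2, by rw [E1 (show 0 < m from by omega)]; exact hbr2⟩
    · -- insert n-2
      have hgm2 : memF T (m-2) := by
        have := hD (m-2)
        rw [show m-2+1 = m-1 from by omega, show m-2+2 = m+0 from by omega, memF_wrap] at this
        rcases this with a | a | a
        · exact a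
        · exact absurd a hbr
        · exact absurd a hbr2
      have hg1 : memF T 1 := by
        have := hD (m-1)
        rw [show m-1+1 = m+0 from by omega, show m-1+2 = m+1 from by omega,
          memF_wrap, memF_wrap] at this
        rcases this with a | a | a
        · exact absurd a hbr
        · exact absurd a hbr2
        · exact a
      have hphi : phi3 h T = ins hle ⟨n-2, by omega⟩ T := by
        unfold phi3; exact (if_neg hbr).trans (if_neg hbr2)
      rw [hphi]
      have E1 : ∀ {k : ℕ}, k < m → (memF (ins hle (⟨n-2, by omega⟩ : Fin n) T) k ↔ memF T k) :=
        fun hk => memF_ins_lt hle _ (show m ≤ n-2 from by omega) T hk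
      have E2 : memF (ins hle (⟨n-2, by omega⟩ : Fin n) T) (n-2) :=
        memF_ins_self hle _ T
      have E3 : ∀ {k : ℕ}, m ≤ k → k < n → k ≠ n-2 →
          ¬ memF (ins hle (⟨n-2, by omega⟩ : Fin n) T) k :=
        fun h1 h2 h3 => memF_ins_high hle _ T h1 h2 h3
      constructor
      · rw [mis_iff (show 3 ≤ n from by omega)]
        constructor
        · apply indep_all (show 0 < n from by omega)
          intro k hk
          have hcase : k + 1 < m ∨ k = m - 1 ∨ k = n - 3 ∨ k = n - 2 ∨ k = n - 1 := by omega
          rcases hcase with hc | hc | hc | hc | hc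
          · rw [E1 (show k < m from by omega), E1 (show k+1 < m from hc)]
            exact hI k
          · rw [show k = m-1 from hc]
            rintro ⟨h2, -⟩
            exact hbr ((E1 (show m-1 < m from by omega)).1 h2)
          · rw [show k = n-3 from hc]
            rintro ⟨h2, -⟩
            exact E3 (by omega) (by omega) (by omega) h2
          · rw [show k = n-2 from hc, show n-2+1 = n-1 from by omega]
            rintro ⟨-, h2⟩
            exact E3 (by omega) (by omega) (by omega) h2
          · rw [show k = n-1 from hc]
            rintro ⟨h2, -⟩
            exact E3 (by omega) (by omega) (by omega) h2
        · apply dom_all (show 0 < n from by omega)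
          intro k hk
          have hcase : k + 2 < m ∨ k = m - 2 ∨ k = m - 1 ∨ k = n - 3 ∨ k = n - 2 ∨ k = n - 1 := by
            omega
          rcases hcase with hc | hc | hc | hc | hc | hc
          · rw [E1 (show k < m from by omega), E1 (show k+1 < m from by omega),
              E1 (show k+2 < m from hc)]
            exact hD k
          · left
            rw [show k = m-2 from hc, E1 (show m-2 < m from by omega)]
            exact hgm2
          · right; right
            rw [show k = m-1 from hc, show m-1+2 = n-2 from by omega]
            exact E2
          · right; left
            rw [show k = n-3 from hc, show n-3+1 = n-2 from by omega]
            exact E2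
          · left
            rw [show k = n-2 from hc]
            exact E2
          · right; right
            rw [show k = n-1 from hc, show n-1+2 = n+1 from by omega, memF_wrap,
              E1 (show 1 < m from by omega)]
            exact hg1
      · unfold P3
        right; right
        refine ⟨E2, ?_, ?_⟩
        · rw [show n-4 = m-1 from by omega, E1 (show m-1 < m from by omega)]
          exact hbr
        · rw [E1 (show 0 < m from by omega)]
          exact hbr2
lemma eq_of_memF {n : ℕ} {X Y : Finset (Fin n)} (h : ∀ k, k < n → (memF X k ↔ memF Y k)) :
    X = Y := by
  ext v
  have := h v.val v.isLt
  rw [memF_lt v.isLt, memF_lt v.isLt] at this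
  simpa using this

lemma psi2_spec {m n : ℕ} (h : m + 2 = n) (hm : 4 ≤ m) {S : Finset (Fin n)}
    (hS : IsMaxIndepFinset (cycleGraph n) S) (hP : P2 n S) :
    ∃ T : Finset (Fin m), IsMaxIndepFinset (cycleGraph m) T ∧ phi2 h T = S := by
  have hle : m ≤ n := by omega
  obtain ⟨hI, hD⟩ := (mis_iff (show 3 ≤ n from by omega) S).1 hS
  have R : ∀ {k : ℕ}, k < m → (memF (res hle S) k ↔ memF S k) :=
    fun hk => memF_res hle S hk
  unfold P2 at hP
  rcases hP with hA | hBC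
  · -- case: n-1 and n-3 in S
    have hA2 : memF S (m-1) := by
      rw [show m-1 = n-3 from by omega]; exact hA.2
    have hf0 : ¬ memF S 0 := fun h0 => hI (n-1) ⟨hA.1, by
      rw [show n-1+1 = n+0 from by omega, memF_wrap]; exact h0⟩
    have hf2 : ¬ memF S (n-2) := fun h2 => hI (n-3) ⟨hA.2, by
      rw [show n-3+1 = n-2 from by omega]; exact h2⟩
    have hTmis : IsMaxIndepFinset (cycleGraph m) (res hle S) := by
      rw [mis_iff (show 3 ≤ m from by omega)]
      constructor
      · apply indep_all (show 0 < m from by omega)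
        intro k hk
        have hcase : k + 1 < m ∨ k = m - 1 := by omega
        rcases hcase with hc | hc
        · rw [R (show k < m from by omega), R (show k+1 < m from hc)]
          exact hI k
        · rw [show k = m-1 from hc, show m-1+1 = m+0 from by omega, memF_wrap,
            R (show m-1 < m from by omega), R (show 0 < m from by omega)]
          rintro ⟨-, h2⟩
          exact hf0 h2
      · apply dom_all (show 0 < m from by omega)
        intro k hk
        have hcase : k + 2 < m ∨ k = m - 2 ∨ k = m - 1 := by omega
        rcases hcase with hc | hc | hc
        · rw [R (show k < m from by omega), R (show k+1 < m from by omega),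
            R (show k+2 < m from hc)]
          exact hD k
        · right; left
          rw [show k = m-2 from hc, show m-2+1 = m-1 from by omega,
            R (show m-1 < m from by omega)]
          exact hA2
        · left
          rw [show k = m-1 from hc, R (show m-1 < m from by omega)]
          exact hA2
    refine ⟨res hle S, hTmis, ?_⟩
    have hbr : memF (res hle S) (m-1) := (R (show m-1 < m from by omega)).2 hA2
    have hphi : phi2 h (res hle S) = ins hle ⟨n-1, by omega⟩ (res hle S) := by
      unfold phi2; exact if_pos hbr
    rw [hphi]
    apply eq_of_memF
    intro k hk
    have hcase : k < m ∨ k = n - 2 ∨ k = n - 1 := by omega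
    rcases hcase with hc | hc | hc
    · rw [memF_ins_lt hle _ (show m ≤ n-1 from by omega) _ hc, R hc]
    · rw [show k = n-2 from hc]
      exact iff_of_false
        (memF_ins_high hle _ _ (by omega) (by omega) (show n-2 ≠ n-1 from by omega)) hf2
    · rw [show k = n-1 from hc]
      exact iff_of_true (memF_ins_self hle _ _) hA.1
  · -- case: n-2 in S, and (0 in S or n-4 in S)
    have h2 : memF S (n-2) := by rcases hBC with ⟨a, -⟩ | ⟨a, -⟩ <;> exact a
    have hor : memF S 0 ∨ memF S (n-4) := by
      rcases hBC with ⟨-, a⟩ | ⟨-, a⟩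
      · exact Or.inl a
      · exact Or.inr a
    have hf3 : ¬ memF S (n-3) := fun h3 => hI (n-3) ⟨h3, by
      rw [show n-3+1 = n-2 from by omega]; exact h2⟩
    have hf3m : ¬ memF S (m-1) := by
      rw [show m-1 = n-3 from by omega]; exact hf3
    have hf1 : ¬ memF S (n-1) := fun h1 => hI (n-2) ⟨h2, by
      rw [show n-2+1 = n-1 from by omega]; exact h1⟩
    have horm : memF S 0 ∨ memF S (m-2) := by
      rcases hor with a | a
      · exact Or.inl a
      · right; rw [show m-2 = n-4 from by omega]; exact a
    have hor01 : memF S 0 ∨ memF S 1 := by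
      have := hD (n-1)
      rw [show n-1+1 = n+0 from by omega, show n-1+2 = n+1 from by omega,
        memF_wrap, memF_wrap] at this
      rcases this with a | a | a
      · exact absurd a hf1
      · exact Or.inl a
      · exact Or.inr a
    have hTmis : IsMaxIndepFinset (cycleGraph m) (res hle S) := by
      rw [mis_iff (show 3 ≤ m from by omega)]
      constructor
      · apply indep_all (show 0 < m from by omega)
        intro k hk
        have hcase : k + 1 < m ∨ k = m - 1 := by omega
        rcases hcase with hc | hc
        · rw [R (show k < m from by omega), R (show k+1 < m from hc)]
          exact hI k
        · rw [show k = m-1 from hc, R (show m-1 < m from by omega)]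
          rintro ⟨h3, -⟩
          exact hf3m h3
      · apply dom_all (show 0 < m from by omega)
        intro k hk
        have hcase : k + 2 < m ∨ k = m - 2 ∨ k = m - 1 := by omega
        rcases hcase with hc | hc | hc
        · rw [R (show k < m from by omega), R (show k+1 < m from by omega),
            R (show k+2 < m from hc)]
          exact hD k
        · rw [show k = m-2 from hc, show m-2+1 = m-1 from by omega,
            show m-2+2 = m+0 from by omega, memF_wrap,
            R (show m-2 < m from by omega), R (show m-1 < m from by omega),
            R (show 0 < m from by omega)]
          rcases horm with a | a
          · exact Or.inr (Or.inr a)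
          · exact Or.inl a
        · rw [show k = m-1 from hc, show m-1+1 = m+0 from by omega,
            show m-1+2 = m+1 from by omega, memF_wrap, memF_wrap,
            R (show m-1 < m from by omega), R (show 0 < m from by omega),
            R (show 1 < m from by omega)]
          rcases hor01 with a | a
          · exact Or.inr (Or.inl a)
          · exact Or.inr (Or.inr a)
    refine ⟨res hle S, hTmis, ?_⟩
    have hbr : ¬ memF (res hle S) (m-1) := fun hh =>
      hf3m ((R (show m-1 < m from by omega)).1 hh)
    have hphi : phi2 h (res hle S) = ins hle ⟨n-2, by omega⟩ (res hle S) := by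
      unfold phi2; exact if_neg hbr
    rw [hphi]
    apply eq_of_memF
    intro k hk
    have hcase : k < m ∨ k = n - 2 ∨ k = n - 1 := by omega
    rcases hcase with hc | hc | hc
    · rw [memF_ins_lt hle _ (show m ≤ n-2 from by omega) _ hc, R hc]
    · rw [show k = n-2 from hc]
      exact iff_of_true (memF_ins_self hle _ _) h2
    · rw [show k = n-1 from hc]
      exact iff_of_false
        (memF_ins_high hle _ _ (by omega) (by omega) (show n-1 ≠ n-2 from by omega)) hf1
lemma psi3_spec {m n : ℕ} (h : m + 3 = n) (hm : 3 ≤ m) {S : Finset (Fin n)}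
    (hS : IsMaxIndepFinset (cycleGraph n) S) (hP : P3 n S) :
    ∃ T : Finset (Fin m), IsMaxIndepFinset (cycleGraph m) T ∧ phi3 h T = S := by
  have hle : m ≤ n := by omega
  obtain ⟨hI, hD⟩ := (mis_iff (show 3 ≤ n from by omega) S).1 hS
  have R : ∀ {k : ℕ}, k < m → (memF (res hle S) k ↔ memF S k) :=
    fun hk => memF_res hle S hk
  unfold P3 at hP
  rcases hP with hA | hB | hC
  · -- case A': n-1 in S, n-3 not in S   (insert n-1)
    have hf2 : ¬ memF S (n-2) := fun hx => hI (n-2) ⟨hx, by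
      rw [show n-2+1 = n-1 from by omega]; exact hA.1⟩
    have hf4 : memF S (n-4) := by
      have := hD (n-4)
      rw [show n-4+1 = n-3 from by omega, show n-4+2 = n-2 from by omega] at this
      rcases this with a | a | a
      · exact a
      · exact absurd a hA.2
      · exact absurd a hf2
    have hf4m : memF S (m-1) := by
      rw [show m-1 = n-4 from by omega]; exact hf4
    have hf0 : ¬ memF S 0 := fun h0 => hI (n-1) ⟨hA.1, by
      rw [show n-1+1 = n+0 from by omega, memF_wrap]; exact h0⟩
    have hTmis : IsMaxIndepFinset (cycleGraph m) (res hle S) := by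
      rw [mis_iff (show 3 ≤ m from by omega)]
      constructor
      · apply indep_all (show 0 < m from by omega)
        intro k hk
        have hcase : k + 1 < m ∨ k = m - 1 := by omega
        rcases hcase with hc | hc
        · rw [R (show k < m from by omega), R (show k+1 < m from hc)]
          exact hI k
        · rw [show k = m-1 from hc, show m-1+1 = m+0 from by omega, memF_wrap,
            R (show m-1 < m from by omega), R (show 0 < m from by omega)]
          rintro ⟨-, h0⟩
          exact hf0 h0
      · apply dom_all (show 0 < m from by omega)
        intro k hk
        have hcase : k + 2 < m ∨ k = m - 2 ∨ k = m - 1 := by omega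
        rcases hcase with hc | hc | hc
        · rw [R (show k < m from by omega), R (show k+1 < m from by omega),
            R (show k+2 < m from hc)]
          exact hD k
        · right; left
          rw [show k = m-2 from hc, show m-2+1 = m-1 from by omega,
            R (show m-1 < m from by omega)]
          exact hf4m
        · left
          rw [show k = m-1 from hc, R (show m-1 < m from by omega)]
          exact hf4m
    refine ⟨res hle S, hTmis, ?_⟩
    have hbr : memF (res hle S) (m-1) := (R (show m-1 < m from by omega)).2 hf4m
    have hphi : phi3 h (res hle S) = ins hle ⟨n-1, by omega⟩ (res hle S) := by
      unfold phi3; exact if_pos hbr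
    rw [hphi]
    apply eq_of_memF
    intro k hk
    have hcase : k < m ∨ k = n - 3 ∨ k = n - 2 ∨ k = n - 1 := by omega
    rcases hcase with hc | hc | hc | hc
    · rw [memF_ins_lt hle _ (show m ≤ n-1 from by omega) _ hc, R hc]
    · rw [show k = n-3 from hc]
      exact iff_of_false
        (memF_ins_high hle _ _ (by omega) (by omega) (show n-3 ≠ n-1 from by omega)) hA.2
    · rw [show k = n-2 from hc]
      exact iff_of_false
        (memF_ins_high hle _ _ (by omega) (by omega) (show n-2 ≠ n-1 from by omega)) hf2
    · rw [show k = n-1 from hc]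
      exact iff_of_true (memF_ins_self hle _ _) hA.1
  · -- case B': n-3 in S, 0 in S   (insert n-3)
    have hf4 : ¬ memF S (n-4) := fun hx => hI (n-4) ⟨hx, by
      rw [show n-4+1 = n-3 from by omega]; exact hB.1⟩
    have hf2 : ¬ memF S (n-2) := fun hx => hI (n-3) ⟨hB.1, by
      rw [show n-3+1 = n-2 from by omega]; exact hx⟩
    have hf1 : ¬ memF S (n-1) := fun hx => hI (n-1) ⟨hx, by
      rw [show n-1+1 = n+0 from by omega, memF_wrap]; exact hB.2⟩
    have hf4m : ¬ memF S (m-1) := by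
      rw [show m-1 = n-4 from by omega]; exact hf4
    have hTmis : IsMaxIndepFinset (cycleGraph m) (res hle S) := by
      rw [mis_iff (show 3 ≤ m from by omega)]
      constructor
      · apply indep_all (show 0 < m from by omega)
        intro k hk
        have hcase : k + 1 < m ∨ k = m - 1 := by omega
        rcases hcase with hc | hc
        · rw [R (show k < m from by omega), R (show k+1 < m from hc)]
          exact hI k
        · rw [show k = m-1 from hc, R (show m-1 < m from by omega)]
          rintro ⟨hx, -⟩
          exact hf4m hx
      · apply dom_all (show 0 < m from by omega)
        intro k hk
        have hcase : k + 2 < m ∨ k = m - 2 ∨ k = m - 1 := by omega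
        rcases hcase with hc | hc | hc
        · rw [R (show k < m from by omega), R (show k+1 < m from by omega),
            R (show k+2 < m from hc)]
          exact hD k
        · right; right
          rw [show k = m-2 from hc, show m-2+2 = m+0 from by omega, memF_wrap,
            R (show 0 < m from by omega)]
          exact hB.2
        · right; left
          rw [show k = m-1 from hc, show m-1+1 = m+0 from by omega, memF_wrap,
            R (show 0 < m from by omega)]
          exact hB.2
    refine ⟨res hle S, hTmis, ?_⟩
    have hbr : ¬ memF (res hle S) (m-1) := fun hh =>
      hf4m ((R (show m-1 < m from by omega)).1 hh)
    have hbr2 : memF (res hle S) 0 := (R (show 0 < m from by omega)).2 hB.2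
    have hphi : phi3 h (res hle S) = ins hle ⟨n-3, by omega⟩ (res hle S) := by
      unfold phi3; exact (if_neg hbr).trans (if_pos hbr2)
    rw [hphi]
    apply eq_of_memF
    intro k hk
    have hcase : k < m ∨ k = n - 3 ∨ k = n - 2 ∨ k = n - 1 := by omega
    rcases hcase with hc | hc | hc | hc
    · rw [memF_ins_lt hle _ (show m ≤ n-3 from by omega) _ hc, R hc]
    · rw [show k = n-3 from hc]
      exact iff_of_true (memF_ins_self hle _ _) hB.1
    · rw [show k = n-2 from hc]
      exact iff_of_false
        (memF_ins_high hle _ _ (by omega) (by omega) (show n-2 ≠ n-3 from by omega)) hf2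
    · rw [show k = n-1 from hc]
      exact iff_of_false
        (memF_ins_high hle _ _ (by omega) (by omega) (show n-1 ≠ n-3 from by omega)) hf1
  · -- case C': n-2 in S, n-4 not in S, 0 not in S  (insert n-2)
    have hf3 : ¬ memF S (n-3) := fun hx => hI (n-3) ⟨hx, by
      rw [show n-3+1 = n-2 from by omega]; exact hC.1⟩
    have hf1 : ¬ memF S (n-1) := fun hx => hI (n-2) ⟨hC.1, by
      rw [show n-2+1 = n-1 from by omega]; exact hx⟩
    have hf5 : memF S (n-5) := by
      have := hD (n-5)
      rw [show n-5+1 = n-4 from by omega, show n-5+2 = n-3 from by omega] at this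
      rcases this with a | a | a
      · exact a
      · exact absurd a hC.2.1
      · exact absurd a hf3
    have hf5m : memF S (m-2) := by
      rw [show m-2 = n-5 from by omega]; exact hf5
    have hg1 : memF S 1 := by
      have := hD (n-1)
      rw [show n-1+1 = n+0 from by omega, show n-1+2 = n+1 from by omega,
        memF_wrap, memF_wrap] at this
      rcases this with a | a | a
      · exact absurd a hf1
      · exact absurd a hC.2.2
      · exact a
    have hf4m : ¬ memF S (m-1) := by
      rw [show m-1 = n-4 from by omega]; exact hC.2.1
    have hTmis : IsMaxIndepFinset (cycleGraph m) (res hle S) := by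
      rw [mis_iff (show 3 ≤ m from by omega)]
      constructor
      · apply indep_all (show 0 < m from by omega)
        intro k hk
        have hcase : k + 1 < m ∨ k = m - 1 := by omega
        rcases hcase with hc | hc
        · rw [R (show k < m from by omega), R (show k+1 < m from hc)]
          exact hI k
        · rw [show k = m-1 from hc, R (show m-1 < m from by omega)]
          rintro ⟨hx, -⟩
          exact hf4m hx
      · apply dom_all (show 0 < m from by omega)
        intro k hk
        have hcase : k + 2 < m ∨ k = m - 2 ∨ k = m - 1 := by omega
        rcases hcase with hc | hc | hc
        · rw [R (show k < m from by omega), R (show k+1 < m from by omega),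
            R (show k+2 < m from hc)]
          exact hD k
        · left
          rw [show k = m-2 from hc, R (show m-2 < m from by omega)]
          exact hf5m
        · right; right
          rw [show k = m-1 from hc, show m-1+2 = m+1 from by omega, memF_wrap,
            R (show 1 < m from by omega)]
          exact hg1
    refine ⟨res hle S, hTmis, ?_⟩
    have hbr : ¬ memF (res hle S) (m-1) := fun hh =>
      hf4m ((R (show m-1 < m from by omega)).1 hh)
    have hbr2 : ¬ memF (res hle S) 0 := fun hh =>
      hC.2.2 ((R (show 0 < m from by omega)).1 hh)
    have hphi : phi3 h (res hle S) = ins hle ⟨n-2, by omega⟩ (res hle S) := by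
      unfold phi3; exact (if_neg hbr).trans (if_neg hbr2)
    rw [hphi]
    apply eq_of_memF
    intro k hk
    have hcase : k < m ∨ k = n - 3 ∨ k = n - 2 ∨ k = n - 1 := by omega
    rcases hcase with hc | hc | hc | hc
    · rw [memF_ins_lt hle _ (show m ≤ n-2 from by omega) _ hc, R hc]
    · rw [show k = n-3 from hc]
      exact iff_of_false
        (memF_ins_high hle _ _ (by omega) (by omega) (show n-3 ≠ n-2 from by omega)) hf3
    · rw [show k = n-2 from hc]
      exact iff_of_true (memF_ins_self hle _ _) hC.1
    · rw [show k = n-1 from hc]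
      exact iff_of_false
        (memF_ins_high hle _ _ (by omega) (by omega) (show n-1 ≠ n-2 from by omega)) hf1
lemma res_ins {m n : ℕ} (hle : m ≤ n) (c : Fin n) (hc : m ≤ c.val) (T : Finset (Fin m)) :
    res hle (ins hle c T) = T :=
  eq_of_memF fun k hk => by
    rw [memF_res hle _ hk, memF_ins_lt hle c hc T hk]

lemma phi2_left_inv {m n : ℕ} (h : m + 2 = n) (T : Finset (Fin m)) :
    res (show m ≤ n from by omega) (phi2 h T) = T := by
  by_cases hbr : memF T (m-1)
  · have hphi : phi2 h T = ins (show m ≤ n from by omega) ⟨n-1, by omega⟩ T := by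
      unfold phi2; exact if_pos hbr
    rw [hphi, res_ins _ _ (show m ≤ n-1 from by omega)]
  · have hphi : phi2 h T = ins (show m ≤ n from by omega) ⟨n-2, by omega⟩ T := by
      unfold phi2; exact if_neg hbr
    rw [hphi, res_ins _ _ (show m ≤ n-2 from by omega)]

lemma phi3_left_inv {m n : ℕ} (h : m + 3 = n) (T : Finset (Fin m)) :
    res (show m ≤ n from by omega) (phi3 h T) = T := by
  by_cases hbr : memF T (m-1)
  · have hphi : phi3 h T = ins (show m ≤ n from by omega) ⟨n-1, by omega⟩ T := by
      unfold phi3; exact if_pos hbr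
    rw [hphi, res_ins _ _ (show m ≤ n-1 from by omega)]
  · by_cases hbr2 : memF T 0
    · have hphi : phi3 h T = ins (show m ≤ n from by omega) ⟨n-3, by omega⟩ T := by
        unfold phi3; exact (if_neg hbr).trans (if_pos hbr2)
      rw [hphi, res_ins _ _ (show m ≤ n-3 from by omega)]
    · have hphi : phi3 h T = ins (show m ≤ n from by omega) ⟨n-2, by omega⟩ T := by
        unfold phi3; exact (if_neg hbr).trans (if_neg hbr2)
      rw [hphi, res_ins _ _ (show m ≤ n-2 from by omega)]

lemma phi2_inj {m n : ℕ} (h : m + 2 = n) : Function.Injective (phi2 h) := by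
  intro T1 T2 heq
  rw [← phi2_left_inv h T1, ← phi2_left_inv h T2, heq]

lemma phi3_inj {m n : ℕ} (h : m + 3 = n) : Function.Injective (phi3 h) := by
  intro T1 T2 heq
  rw [← phi3_left_inv h T1, ← phi3_left_inv h T2, heq]

set_option maxHeartbeats 1000000 in
lemma P2_or_P3 {n : ℕ} (hn : 6 ≤ n) {S : Finset (Fin n)}
    (hS : IsMaxIndepFinset (cycleGraph n) S) : P2 n S ∨ P3 n S := by
  obtain ⟨hI, hD⟩ := (mis_iff (show 3 ≤ n from by omega) S).1 hS
  have i1 : ¬(memF S (n-4) ∧ memF S (n-3)) := by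
    have := hI (n-4); rwa [show n-4+1 = n-3 from by omega] at this
  have i2 : ¬(memF S (n-3) ∧ memF S (n-2)) := by
    have := hI (n-3); rwa [show n-3+1 = n-2 from by omega] at this
  have i3 : ¬(memF S (n-2) ∧ memF S (n-1)) := by
    have := hI (n-2); rwa [show n-2+1 = n-1 from by omega] at this
  have i4 : ¬(memF S (n-1) ∧ memF S 0) := by
    have := hI (n-1); rwa [show n-1+1 = n+0 from by omega, memF_wrap] at this
  have d1 : memF S (n-3) ∨ memF S (n-2) ∨ memF S (n-1) := by
    have := hD (n-3)
    rwa [show n-3+1 = n-2 from by omega, show n-3+2 = n-1 from by omega] at this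
  have d2 : memF S (n-2) ∨ memF S (n-1) ∨ memF S 0 := by
    have := hD (n-2)
    rwa [show n-2+1 = n-1 from by omega, show n-2+2 = n+0 from by omega, memF_wrap] at this
  have d3 : memF S (n-1) ∨ memF S 0 ∨ memF S 1 := by
    have := hD (n-1)
    rwa [show n-1+1 = n+0 from by omega, show n-1+2 = n+1 from by omega,
      memF_wrap, memF_wrap] at this
  have d4 : memF S (n-4) ∨ memF S (n-3) ∨ memF S (n-2) := by
    have := hD (n-4)
    rwa [show n-4+1 = n-3 from by omega, show n-4+2 = n-2 from by omega] at this
  clear hI hD hS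
  unfold P2 P3
  tauto

set_option maxHeartbeats 1000000 in
lemma not_P2_and_P3 {n : ℕ} (hn : 6 ≤ n) {S : Finset (Fin n)}
    (hS : IsMaxIndepFinset (cycleGraph n) S) : ¬(P2 n S ∧ P3 n S) := by
  obtain ⟨hI, hD⟩ := (mis_iff (show 3 ≤ n from by omega) S).1 hS
  have i2 : ¬(memF S (n-3) ∧ memF S (n-2)) := by
    have := hI (n-3); rwa [show n-3+1 = n-2 from by omega] at this
  have i3 : ¬(memF S (n-2) ∧ memF S (n-1)) := by
    have := hI (n-2); rwa [show n-2+1 = n-1 from by omega] at this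
  have i4 : ¬(memF S (n-1) ∧ memF S 0) := by
    have := hI (n-1); rwa [show n-1+1 = n+0 from by omega, memF_wrap] at this
  clear hI hD hS
  unfold P2 P3
  tauto

end MisAux

theorem mis_cycle_recurrence (n : ℕ) (hn : 6 ≤ n) :
    mis (SimpleGraph.cycleGraph n) =
      mis (SimpleGraph.cycleGraph (n - 2)) + mis (SimpleGraph.cycleGraph (n - 3)) := by
  have h2 : (n - 2) + 2 = n := by omega
  have h3 : (n - 3) + 3 = n := by omega
  have hm2 : 4 ≤ n - 2 := by omega
  have hm3 : 3 ≤ n - 3 := by omega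
  set A := {s : Finset (Fin n) | IsMaxIndepFinset (SimpleGraph.cycleGraph n) s} with hA
  set B := {s : Finset (Fin (n-2)) | IsMaxIndepFinset (SimpleGraph.cycleGraph (n-2)) s} with hB
  set C := {s : Finset (Fin (n-3)) | IsMaxIndepFinset (SimpleGraph.cycleGraph (n-3)) s} with hC
  have hAeq : A = (MisAux.phi2 h2 '' B) ∪ (MisAux.phi3 h3 '' C) := by
    ext S
    constructor
    · intro hSA
      rcases MisAux.P2_or_P3 hn hSA with hP | hP
      · obtain ⟨T, hT, hTeq⟩ := MisAux.psi2_spec h2 hm2 hSA hP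
        exact Or.inl ⟨T, hT, hTeq⟩
      · obtain ⟨T, hT, hTeq⟩ := MisAux.psi3_spec h3 hm3 hSA hP
        exact Or.inr ⟨T, hT, hTeq⟩
    · rintro (⟨T, hT, rfl⟩ | ⟨T, hT, rfl⟩)
      · exact (MisAux.phi2_spec h2 hm2 hT).1
      · exact (MisAux.phi3_spec h3 hm3 hT).1
  have hdisj : Disjoint (MisAux.phi2 h2 '' B) (MisAux.phi3 h3 '' C) := by
    rw [Set.disjoint_left]
    rintro S ⟨T, hT, rfl⟩ ⟨T', hT', hT'eq⟩
    have s2 := MisAux.phi2_spec h2 hm2 hT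
    have s3 := MisAux.phi3_spec h3 hm3 hT'
    rw [hT'eq] at s3
    exact MisAux.not_P2_and_P3 hn s2.1 ⟨s2.2, s3.2⟩
  show A.ncard = B.ncard + C.ncard
  rw [hAeq, Set.ncard_union_eq hdisj (Set.toFinite _) (Set.toFinite _),
    Set.ncard_image_of_injective B (MisAux.phi2_inj h2),
    Set.ncard_image_of_injective C (MisAux.phi3_inj h3)]
end

section
/- For every integer n ≥ 4, the number of maximal independent sets of the cycle C_n satisfies mis(C_n)^5 ≤ 5^n (equivalently, mis(C_n)^{1/n} ≤ 5^{1/5}). -/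
section Aux

open Finset SimpleGraph

/-! ### Decidability, used for the case `n = 5` -/

instance {V : Type*} [DecidableEq V] (G : SimpleGraph V) [DecidableRel G.Adj] (s : Finset V) :
    Decidable (IsIndepFinset G s) := by unfold IsIndepFinset; infer_instance

instance {V : Type*} [DecidableEq V] [Fintype V] (G : SimpleGraph V) [DecidableRel G.Adj]
    (s : Finset V) : Decidable (IsMaxIndepFinset G s) := by unfold IsMaxIndepFinset; infer_instance

/-! ### Compositions of `n` into parts `2` and `3` -/

private def comps : ℕ → Finset (List ℕ)
  | 0 => {[]}
  | 1 => ∅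
  | 2 => {[2]}
  | 3 => {[3]}
  | (n+4) => ((comps (n+2)).image (fun l => 2 :: l)) ∪ ((comps (n+1)).image (fun l => 3 :: l))

private lemma sum_pos_of_parts {l : List ℕ} (h : ∀ x ∈ l, x = 2 ∨ x = 3) (hne : l ≠ []) :
    2 ≤ l.sum := by
  cases l with
  | nil => simp at hne
  | cons a t =>
      have := h a (by simp)
      have : 2 ≤ a := by omega
      simp [List.sum_cons]
      omega

private lemma mem_comps_of {l : List ℕ} (h : ∀ x ∈ l, x = 2 ∨ x = 3) : l ∈ comps l.sum := by
  induction l with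
  | nil => simp [comps]
  | cons a t ih =>
      have ha := h a (by simp)
      have ht : ∀ x ∈ t, x = 2 ∨ x = 3 := fun x hx => h x (by simp [hx])
      have ih' := ih ht
      rcases eq_or_ne t [] with rfl | hne
      · rcases ha with rfl | rfl <;> simp [comps]
      · have h2 : 2 ≤ t.sum := sum_pos_of_parts ht hne
        rcases ha with rfl | rfl
        · have : (2 :: t).sum = (t.sum - 2) + 4 := by simp [List.sum_cons]; omega
          rw [this, comps]
          have : t.sum - 2 + 2 = t.sum := by omega
          rw [this]
          exact mem_union_left _ (mem_image_of_mem _ ih')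
        · have : (3 :: t).sum = (t.sum - 1) + 4 := by simp [List.sum_cons]; omega
          rw [this, comps]
          have : t.sum - 1 + 1 = t.sum := by omega
          rw [this]
          exact mem_union_right _ (mem_image_of_mem _ ih')

private lemma card_comps_rec (n : ℕ) :
    (comps (n+4)).card = (comps (n+2)).card + (comps (n+1)).card := by
  rw [comps]
  rw [card_union_of_disjoint, card_image_of_injective _ (by intro a b h; simpa using h),
    card_image_of_injective _ (by intro a b h; simpa using h)]
  simp only [Finset.disjoint_left]
  rintro x hx hy
  simp only [mem_image] at hx hy
  obtain ⟨a, -, rfl⟩ := hx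
  obtain ⟨b, -, h⟩ := hy
  simp at h

private lemma card_comps_0 : (comps 0).card = 1 := by rw [comps]; simp
private lemma card_comps_1 : (comps 1).card = 0 := by rw [comps]; simp
private lemma card_comps_2 : (comps 2).card = 1 := by rw [comps]; simp
private lemma card_comps_3 : (comps 3).card = 1 := by rw [comps]; simp
private lemma card_comps_4 : (comps 4).card = 1 := by
  have := card_comps_rec 0; norm_num [card_comps_2, card_comps_1] at this; exact this
private lemma card_comps_5 : (comps 5).card = 2 := by
  have := card_comps_rec 1; norm_num [card_comps_3, card_comps_2] at this; exact this
private lemma card_comps_6 : (comps 6).card = 2 := by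
  have := card_comps_rec 2; norm_num [card_comps_3, card_comps_4] at this; exact this
private lemma card_comps_7 : (comps 7).card = 3 := by
  have := card_comps_rec 3; norm_num [card_comps_4, card_comps_5] at this; exact this
private lemma card_comps_8 : (comps 8).card = 4 := by
  have := card_comps_rec 4; norm_num [card_comps_5, card_comps_6] at this; exact this

/-! ### The key polynomial inequality and the numeric bound -/

private lemma key_polyZ (a b : ℤ) (ha : 0 ≤ a) (hb : 0 ≤ b) :
    2 * (a + b)^5 ≤ 25 * a^5 + 125 * b^5 := by
  nlinarith [mul_nonneg (mul_nonneg ha ha) (mul_nonneg ha (sq_nonneg (a-b))),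
    mul_nonneg (mul_nonneg hb hb) (mul_nonneg hb (sq_nonneg (a-b))),
    mul_nonneg (mul_nonneg ha hb) (mul_nonneg ha (sq_nonneg (a-b))),
    mul_nonneg (mul_nonneg ha hb) (mul_nonneg hb (sq_nonneg (a-b))),
    mul_nonneg (mul_nonneg ha ha) (mul_nonneg ha (sq_nonneg (a-2*b))),
    mul_nonneg (mul_nonneg hb hb) (mul_nonneg hb (sq_nonneg (2*a-b))),
    mul_nonneg (mul_nonneg ha hb) (mul_nonneg ha (sq_nonneg (a-2*b))),
    mul_nonneg (mul_nonneg ha hb) (mul_nonneg hb (sq_nonneg (2*a-b)))]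

private lemma key_poly (a b : ℕ) : 2 * (a + b)^5 ≤ 25 * a^5 + 125 * b^5 := by
  have := key_polyZ a b (by positivity) (by positivity)
  exact_mod_cast this

private lemma numeric (n : ℕ) (hn : 4 ≤ n) (h5 : n ≠ 5) : (3 * (comps n).card)^5 ≤ 5^n := by
  induction n using Nat.strong_induction_on with
  | _ n ih =>
    rcases (by omega : n = 4 ∨ n = 6 ∨ n = 7 ∨ n = 8 ∨ 9 ≤ n) with rfl | rfl | rfl | rfl | h9
    · rw [card_comps_4]; norm_num
    · rw [card_comps_6]; norm_num
    · rw [card_comps_7]; norm_num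
    · rw [card_comps_8]; norm_num
    · obtain ⟨m, rfl⟩ : ∃ m, n = m + 4 := ⟨n - 4, by omega⟩
      have hrec := card_comps_rec m
      have ih2 := ih (m+2) (by omega) (by omega) (by omega)
      have ih1 := ih (m+1) (by omega) (by omega) (by omega)
      set a := (comps (m+2)).card
      set b := (comps (m+1)).card
      have h1 : 25 * (3*a)^5 ≤ 25 * 5^(m+2) := Nat.mul_le_mul_left _ ih2
      have h2 : 125 * (3*b)^5 ≤ 125 * 5^(m+1) := Nat.mul_le_mul_left _ ih1
      have hpow : 25 * 5^(m+2) + 125 * 5^(m+1) = 2 * 5^(m+4) := by ring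
      have key : 2 * (3 * (comps (m+4)).card)^5 ≤ 2 * 5^(m+4) := by
        rw [hrec]
        calc 2 * (3 * (a + b))^5 = 2 * ((3*a) + (3*b))^5 := by ring_nf
          _ ≤ 25 * (3*a)^5 + 125 * (3*b)^5 := key_poly _ _
          _ ≤ 25 * 5^(m+2) + 125 * 5^(m+1) := by omega
          _ = 2 * 5^(m+4) := hpow
      omega

/-! ### Enumerating a finset of naturals in increasing order -/

private noncomputable def enum (T : Finset ℕ) (j : ℕ) : ℕ :=
  if h : j < T.card then T.orderEmbOfFin rfl ⟨j, h⟩ else 0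

private lemma enum_mem {T : Finset ℕ} {j : ℕ} (h : j < T.card) : enum T j ∈ T := by
  rw [enum, dif_pos h]; exact T.orderEmbOfFin_mem rfl _

private lemma enum_lt {T : Finset ℕ} {i j : ℕ} (hij : i < j) (h : j < T.card) :
    enum T i < enum T j := by
  rw [enum, enum, dif_pos h, dif_pos (lt_trans hij h)]
  exact (T.orderEmbOfFin rfl).strictMono (by simpa using hij)

private lemma enum_surj {T : Finset ℕ} {x : ℕ} (hx : x ∈ T) : ∃ j < T.card, enum T j = x := by
  have : x ∈ Set.range (T.orderEmbOfFin rfl) := by rw [range_orderEmbOfFin]; exact hx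
  obtain ⟨⟨j, hj⟩, hjx⟩ := this
  exact ⟨j, hj, by rw [enum, dif_pos hj]; exact hjx⟩

private lemma enum_zero_le {T : Finset ℕ} {x : ℕ} (hx : x ∈ T) : enum T 0 ≤ x := by
  obtain ⟨j, hj, rfl⟩ := enum_surj hx
  rcases Nat.eq_zero_or_pos j with rfl | hj0
  · exact le_refl _
  · exact le_of_lt (enum_lt hj0 hj)

private lemma le_enum_last {T : Finset ℕ} {x : ℕ} (hx : x ∈ T) : x ≤ enum T (T.card - 1) := by
  obtain ⟨j, hj, rfl⟩ := enum_surj hx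
  rcases Nat.lt_or_ge j (T.card - 1) with h | h
  · exact le_of_lt (enum_lt h (by omega))
  · have : j = T.card - 1 := by omega
    rw [this]

private lemma enum_le {T : Finset ℕ} {i j : ℕ} (hij : i ≤ j) (h : j < T.card) :
    enum T i ≤ enum T j := by
  rcases Nat.eq_or_lt_of_le hij with rfl | h'
  · exact le_refl _
  · exact le_of_lt (enum_lt h' h)

private lemma enum_between {T : Finset ℕ} {j x : ℕ} (h : j + 1 < T.card) (hx : x ∈ T) :
    ¬(enum T j < x ∧ x < enum T (j+1)) := by
  rintro ⟨h1, h2⟩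
  obtain ⟨i, hi, rfl⟩ := enum_surj hx
  rcases le_or_gt i j with hij | hij
  · exact absurd (enum_le (T := T) hij (by omega)) (by omega)
  · exact absurd (enum_le (by omega : j + 1 ≤ i) hi) (by omega)

private lemma msucc' {n x : ℕ} (hn : 1 ≤ n) (hx : x < n) :
    ((x + 1) % n = x + 1 ∧ x + 1 < n) ∨ (x + 1 = n ∧ (x + 1) % n = 0) := by
  rcases Nat.lt_or_ge (x+1) n with h | h
  · exact Or.inl ⟨Nat.mod_eq_of_lt h, h⟩
  · have : x + 1 = n := by omega
    exact Or.inr ⟨this, by rw [this, Nat.mod_self]⟩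

/-! ### Good subsets of `ZMod n` in terms of natural numbers -/

private structure GoodT (n : ℕ) (T : Finset ℕ) : Prop where
  lt : ∀ x ∈ T, x < n
  indep : ∀ x ∈ T, ∀ y ∈ T, (x + 1) % n ≠ y
  dom : ∀ x, x < n → x ∉ T → ∃ y ∈ T, ((y + 1) % n = x ∨ (x + 1) % n = y)

variable {n : ℕ} {T T' : Finset ℕ}

private lemma GoodT.card_pos (hn : 4 ≤ n) (h : GoodT n T) : 0 < T.card := by
  rcases Nat.eq_zero_or_pos T.card with h0 | h1
  · exfalso
    obtain ⟨y, hy, -⟩ := h.dom 0 (by omega) (by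
      intro hx; have := Finset.card_pos.mpr ⟨0, hx⟩; omega)
    have := Finset.card_pos.mpr ⟨y, hy⟩; omega
  · exact h1

private lemma GoodT.two_le_card (hn : 4 ≤ n) (h : GoodT n T) : 2 ≤ T.card := by
  have h1 := h.card_pos hn
  by_contra hlt
  have hk : T.card = 1 := by omega
  set f := enum T 0 with hf
  have hfT : f ∈ T := enum_mem (by omega)
  have hfn : f < n := h.lt f hfT
  have hall : ∀ x ∈ T, x = f := by
    intro x hx
    obtain ⟨j, hj, rfl⟩ := enum_surj hx
    have : j = 0 := by omega
    rw [this]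
  rcases Nat.lt_or_ge (f + 2) n with hc | hc
  · set w := f + 2 with hw
    have hwT : w ∉ T := fun hmem => by have := hall w hmem; omega
    obtain ⟨y, hyT, hy⟩ := h.dom w (by omega) hwT
    have hyf := hall y hyT
    have m1 := msucc' (by omega : 1 ≤ n) hfn
    have m2 := msucc' (by omega : 1 ≤ n) (show w < n by omega)
    subst hyf
    omega
  · set w := f + 2 - n with hw
    have hwn : w < n := by omega
    have hwf : w ≠ f := by omega
    have hwT : w ∉ T := fun hmem => hwf (hall w hmem)
    obtain ⟨y, hyT, hy⟩ := h.dom w hwn hwT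
    have hyf := hall y hyT
    have m1 := msucc' (by omega : 1 ≤ n) hfn
    have m2 := msucc' (by omega : 1 ≤ n) hwn
    subst hyf
    omega

private lemma GoodT.min_le_two (hn : 4 ≤ n) (h : GoodT n T) : enum T 0 ≤ 2 := by
  by_contra hlt
  push_neg at hlt
  have h1 := h.card_pos hn
  have hwT : (1 : ℕ) ∉ T := by
    intro hmem; have := enum_zero_le hmem; omega
  obtain ⟨y, hyT, hy⟩ := h.dom 1 (by omega) hwT
  have hyn := h.lt y hyT
  have hymin := enum_zero_le hyT
  have m1 := msucc' (by omega : 1 ≤ n) hyn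
  have m2 := msucc' (by omega : 1 ≤ n) (show (1:ℕ) < n by omega)
  omega

private lemma GoodT.gap_step (hn : 4 ≤ n) (h : GoodT n T) {j : ℕ} (hj : j + 1 < T.card) :
    enum T (j+1) = enum T j + 2 ∨ enum T (j+1) = enum T j + 3 := by
  set x := enum T j with hx
  set z := enum T (j+1) with hz
  have hxz : x < z := enum_lt (by omega) hj
  have hzn : z < n := h.lt z (enum_mem hj)
  have hxn : x < n := by omega
  have hne1 : z ≠ x + 1 := by
    intro he
    exact h.indep x (enum_mem (by omega)) z (enum_mem hj)
      (by rw [he]; exact Nat.mod_eq_of_lt (by omega))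
  have hle3 : z ≤ x + 3 := by
    by_contra hgt
    push_neg at hgt
    have hwT : x + 2 ∉ T := by
      intro hmem; exact enum_between hj hmem ⟨by omega, by omega⟩
    obtain ⟨y, hyT, hy⟩ := h.dom (x+2) (by omega) hwT
    have hyn := h.lt y hyT
    have m1 := msucc' (by omega : 1 ≤ n) hyn
    have m2 := msucc' (by omega : 1 ≤ n) (show x + 2 < n by omega)
    have hybet := enum_between hj hyT
    rw [← hx, ← hz] at hybet
    have : y = x + 1 ∨ y = x + 3 := by omega
    rcases this with rfl | rfl
    · exact hybet ⟨by omega, by omega⟩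
    · exact hybet ⟨by omega, by omega⟩
  omega

private lemma GoodT.wrap (hn : 4 ≤ n) (h : GoodT n T) :
    n + enum T 0 = enum T (T.card - 1) + 2 ∨ n + enum T 0 = enum T (T.card - 1) + 3 := by
  have hk := h.two_le_card hn
  set f := enum T 0 with hf
  set M := enum T (T.card - 1) with hM
  have hfM : f < M := enum_lt (by omega) (by omega)
  have hMn : M < n := h.lt M (enum_mem (by omega))
  have hfT : f ∈ T := enum_mem (by omega)
  have hMT : M ∈ T := enum_mem (by omega)
  have hlow : M + 2 ≤ n + f := by
    by_contra hc
    push_neg at hc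
    have hf0 : f = 0 ∧ M = n - 1 := by omega
    have := h.indep M hMT f hfT
    have m1 := msucc' (by omega : 1 ≤ n) hMn
    omega
  have hup : n + f ≤ M + 3 := by
    by_contra hc
    push_neg at hc
    rcases Nat.lt_or_ge (M + 2) n with hc2 | hc2
    · have hwT : M + 2 ∉ T := by
        intro hmem; have := le_enum_last hmem; omega
      obtain ⟨y, hyT, hy⟩ := h.dom (M+2) (by omega) hwT
      have hyn := h.lt y hyT
      have hymax := le_enum_last hyT
      have hymin := enum_zero_le hyT
      rw [← hM] at hymax
      rw [← hf] at hymin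
      have m1 := msucc' (by omega : 1 ≤ n) hyn
      have m2 := msucc' (by omega : 1 ≤ n) (show M + 2 < n by omega)
      omega
    · set w := M + 2 - n with hw
      have hwn : w < n := by omega
      have hwT : w ∉ T := by
        intro hmem; have := enum_zero_le hmem; rw [← hf] at this; omega
      obtain ⟨y, hyT, hy⟩ := h.dom w hwn hwT
      have hyn := h.lt y hyT
      have hymax := le_enum_last hyT
      have hymin := enum_zero_le hyT
      rw [← hM] at hymax
      rw [← hf] at hymin
      have m1 := msucc' (by omega : 1 ≤ n) hyn
      have m2 := msucc' (by omega : 1 ≤ n) hwn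
      omega
  omega

/-! ### Encoding a good set by its least element and gap list -/

private noncomputable def encodeT (n : ℕ) (T : Finset ℕ) : ℕ × List ℕ :=
  (enum T 0,
    (n + enum T 0 - enum T (T.card - 1)) ::
      List.ofFn (fun i : Fin (T.card - 1) => enum T (i.val + 1) - enum T i.val))

private lemma tele (hn : 4 ≤ n) (h : GoodT n T) :
    ∀ j, j < T.card →
      enum T j = enum T 0 + ∑ i ∈ Finset.range j, (enum T (i+1) - enum T i) := by
  intro j
  induction j with
  | zero => intro _; simp
  | succ j ih =>
      intro hj
      have hmono : enum T j < enum T (j+1) := enum_lt (by omega) hj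
      rw [Finset.sum_range_succ, ← Nat.add_assoc, ← ih (by omega)]
      omega

private lemma encodeT_snd_mem (hn : 4 ≤ n) (h : GoodT n T) : (encodeT n T).2 ∈ comps n := by
  have hk := h.two_le_card hn
  have hfM : enum T 0 < enum T (T.card - 1) := enum_lt (by omega) (by omega)
  have hMn : enum T (T.card - 1) < n := h.lt _ (enum_mem (by omega))
  have hsum : (encodeT n T).2.sum = n := by
    have ht := tele hn h (T.card - 1) (by omega)
    simp only [encodeT, List.sum_cons, List.sum_ofFn]
    rw [Fin.sum_univ_eq_sum_range (fun j => enum T (j + 1) - enum T j)]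
    omega
  have hparts : ∀ x ∈ (encodeT n T).2, x = 2 ∨ x = 3 := by
    intro x hx
    simp only [encodeT, List.mem_cons, List.mem_ofFn] at hx
    rcases hx with rfl | ⟨i, rfl⟩
    · have := h.wrap hn; omega
    · show enum T (i.val + 1) - enum T i.val = 2 ∨ enum T (i.val + 1) - enum T i.val = 3
      have hstep := h.gap_step hn (j := i.val) (by have := i.isLt; omega)
      have : enum T i.val < enum T (i.val + 1) := enum_lt (by omega) (by have := i.isLt; omega)
      omega
  have := mem_comps_of hparts
  rwa [hsum] at this

private lemma encodeT_inj (hn : 4 ≤ n) (h : GoodT n T) (h' : GoodT n T')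
    (he : encodeT n T = encodeT n T') : T = T' := by
  have hk2 := h.two_le_card hn
  have hk2' := h'.two_le_card hn
  have hfst : enum T 0 = enum T' 0 := congrArg Prod.fst he
  have hsnd := congrArg Prod.snd he
  simp only [encodeT] at hsnd
  have hlen := congrArg List.length hsnd
  simp only [List.length_cons, List.length_ofFn] at hlen
  have hkk : T.card = T'.card := by omega
  have htail := congrArg List.tail hsnd
  simp only [List.tail_cons] at htail
  have hgap : ∀ i, i < T.card - 1 →
      enum T (i+1) - enum T i = enum T' (i+1) - enum T' i := by
    intro i hi
    have h1 : (List.ofFn (fun i : Fin (T.card - 1) => enum T (i.val + 1) - enum T i.val))[i]'(by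
        simpa using hi) = enum T (i+1) - enum T i := by
      simp
    have h2 : (List.ofFn (fun i : Fin (T'.card - 1) =>
        enum T' (i.val + 1) - enum T' i.val))[i]'(by simp; omega) = enum T' (i+1) - enum T' i := by
      simp
    rw [← h1, ← h2]
    congr 1
  have hall : ∀ j, j < T.card → enum T j = enum T' j := by
    intro j
    induction j with
    | zero => intro _; exact hfst
    | succ j ih =>
        intro hj
        have e1 : enum T j < enum T (j+1) := enum_lt (by omega) hj
        have e2 : enum T' j < enum T' (j+1) := enum_lt (by omega) (by omega)
        have := hgap j (by omega)
        have := ih (by omega)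
        omega
  ext x
  constructor
  · intro hx
    obtain ⟨j, hj, rfl⟩ := enum_surj hx
    rw [hall j hj]
    exact enum_mem (by omega)
  · intro hx
    obtain ⟨j, hj, rfl⟩ := enum_surj hx
    rw [← hall j (by omega)]
    exact enum_mem (by omega)

/-! ### From maximal independent sets of the cycle to good sets -/

private lemma adj_val {m : ℕ} {u v : Fin (m + 4)} :
    (cycleGraph (m + 4)).Adj u v ↔
      ((u.val + 1) % (m + 4) = v.val ∨ (v.val + 1) % (m + 4) = u.val) := by
  have hca : (cycleGraph (m + 4)).Adj u v ↔ (u - v = 1 ∨ v - u = 1) :=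
    cycleGraph_adj (n := m + 2)
  have hone : ((1 : Fin (m + 4)) : ℕ) = 1 := by
    simp
  have key : ∀ a b : Fin (m + 4), a - b = 1 ↔ (b.val + 1) % (m + 4) = a.val := by
    intro a b
    rw [sub_eq_iff_eq_add, Fin.ext_iff, Fin.val_add, hone, Nat.add_comm 1 b.val]
    exact eq_comm
  rw [hca, key, key]
  exact Or.comm

private lemma dom_of_max {V : Type*} [DecidableEq V] {G : SimpleGraph V} {S : Finset V}
    (hS : IsMaxIndepFinset G S) {v : V} (hv : v ∉ S) : ∃ u ∈ S, G.Adj u v := by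
  by_contra hc
  push_neg at hc
  have hindep : IsIndepFinset G (insert v S) := by
    intro a ha b hb hab
    rcases Finset.mem_insert.mp ha with rfl | ha' <;>
      rcases Finset.mem_insert.mp hb with rfl | hb'
    · exact G.loopless.irrefl _ hab
    · exact hc b hb' hab.symm
    · exact hc a ha' hab
    · exact hS.1 ha' hb' hab
  have := hS.2 _ hindep (Finset.subset_insert _ _)
  exact hv (this ▸ Finset.mem_insert_self v S)

private lemma goodT_of_mis {m : ℕ} {S : Finset (Fin (m + 4))}
    (hS : IsMaxIndepFinset (cycleGraph (m + 4)) S) : GoodT (m + 4) (S.image Fin.val) := by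
  constructor
  · intro x hx
    obtain ⟨u, -, rfl⟩ := Finset.mem_image.mp hx
    exact u.isLt
  · intro x hx y hy he
    obtain ⟨u, hu, rfl⟩ := Finset.mem_image.mp hx
    obtain ⟨v, hv, rfl⟩ := Finset.mem_image.mp hy
    exact hS.1 hu hv (adj_val.mpr (Or.inl he))
  · intro x hxn hxT
    set v : Fin (m + 4) := ⟨x, hxn⟩ with hv
    have hvS : v ∉ S := fun hmem => hxT (Finset.mem_image_of_mem _ hmem)
    obtain ⟨u, hu, hadj⟩ := dom_of_max hS hvS
    refine ⟨u.val, Finset.mem_image_of_mem _ hu, ?_⟩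
    rcases adj_val.mp hadj with h | h
    · exact Or.inl h
    · exact Or.inr h

/-! ### The counting bound -/

private lemma mis_cycle_le {m : ℕ} :
    mis (cycleGraph (m + 4)) ≤ 3 * (comps (m + 4)).card := by
  classical
  have hn : 4 ≤ m + 4 := by omega
  set F : Finset (Fin (m + 4)) → ℕ × List ℕ :=
    fun S => encodeT (m + 4) (S.image Fin.val) with hF
  have hmem : ∀ S ∈ {s : Finset (Fin (m + 4)) | IsMaxIndepFinset (cycleGraph (m + 4)) s},
      F S ∈ ((Finset.range 3 ×ˢ comps (m + 4) : Finset (ℕ × List ℕ)) : Set (ℕ × List ℕ)) := by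
    intro S hS
    have hg := goodT_of_mis hS
    simp only [Finset.coe_product, Set.mem_prod, Finset.mem_coe, Finset.mem_range]
    constructor
    · have := hg.min_le_two hn
      simp only [hF, encodeT]
      omega
    · exact encodeT_snd_mem hn hg
  have hinj : Set.InjOn F {s : Finset (Fin (m + 4)) | IsMaxIndepFinset (cycleGraph (m + 4)) s} := by
    intro S hS S' hS' he
    have := encodeT_inj hn (goodT_of_mis hS) (goodT_of_mis hS') he
    exact Finset.image_injective Fin.val_injective this
  have hcard := Set.ncard_le_ncard_of_injOn F hmem hinj
    (Set.finite_coe_iff.mp (by infer_instance))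
  rw [Set.ncard_coe_finset, Finset.card_product, Finset.card_range] at hcard
  exact hcard

end Aux

theorem mis_cycle_pow_le (n : ℕ) (hn : 4 ≤ n) :
    mis (SimpleGraph.cycleGraph n) ^ 5 ≤ 5 ^ n := by
  rcases eq_or_ne n 5 with rfl | h5
  · have h5' : mis (SimpleGraph.cycleGraph 5) = 5 := by
      have hset : {s : Finset (Fin 5) | IsMaxIndepFinset (SimpleGraph.cycleGraph 5) s}
          = ↑(Finset.univ.filter
              (fun s => IsMaxIndepFinset (SimpleGraph.cycleGraph 5) s)) := by
        ext s; simp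
      rw [mis, hset, Set.ncard_coe_finset]
      decide
    rw [h5']
  · obtain ⟨m, rfl⟩ : ∃ m, n = m + 4 := ⟨n - 4, by omega⟩
    calc mis (SimpleGraph.cycleGraph (m + 4)) ^ 5
        ≤ (3 * (comps (m + 4)).card) ^ 5 := Nat.pow_le_pow_left mis_cycle_le 5
      _ ≤ 5 ^ (m + 4) := numeric (m + 4) (by omega) h5
end

section
/- Every 2-regular simple graph G on n vertices (i.e., a disjoint union of cycles) that contains at most t vertex-disjoint triangles satisfies mis(G) ≤ 3^t · 5^{(n−3t)/5}. -/
namespace MisAux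


noncomputable def c : ℝ := (5 : ℝ) ^ ((1:ℝ)/5)

lemma c_pos : 0 < c := Real.rpow_pos_of_pos (by norm_num) _

lemma c_pow5 : c ^ 5 = 5 := by
  rw [c, ← Real.rpow_natCast ((5:ℝ) ^ ((1:ℝ)/5)) 5, ← Real.rpow_mul (by norm_num : (0:ℝ) ≤ 5)]
  norm_num

lemma c_lb : (137/100 : ℝ) ≤ c := by
  by_contra h
  push_neg at h
  have h5 : c ^ 5 < (137/100:ℝ)^5 := by
    apply pow_lt_pow_left₀ h c_pos.le
    norm_num
  rw [c_pow5] at h5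
  norm_num at h5

lemma c_ub : c ≤ (138/100 : ℝ) := by
  by_contra h
  push_neg at h
  have h5 : (138/100:ℝ)^5 < c ^ 5 := by
    apply pow_lt_pow_left₀ h (by norm_num)
    norm_num
  rw [c_pow5] at h5
  norm_num at h5

lemma s2_sq : Real.sqrt 2 ^ 2 = 2 := Real.sq_sqrt (by norm_num)

lemma s2_nonneg : 0 ≤ Real.sqrt 2 := Real.sqrt_nonneg 2

lemma s2_lb : (141/100 : ℝ) ≤ Real.sqrt 2 := by
  nlinarith [s2_sq, s2_nonneg]

lemma s2_ub : Real.sqrt 2 ≤ (142/100 : ℝ) := by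
  nlinarith [s2_sq, s2_nonneg]

lemma c_le_s2 : c ≤ Real.sqrt 2 := le_trans c_ub (by linarith [s2_lb])

noncomputable def w : ℕ → ℝ
  | 0 => 1
  | 1 => Real.sqrt 2
  | _ + 2 => c

@[simp] lemma w0 : w 0 = 1 := rfl
@[simp] lemma w1 : w 1 = Real.sqrt 2 := rfl
@[simp] lemma w2 : w 2 = c := rfl

lemma w_pos : ∀ d, 0 < w d
  | 0 => one_pos
  | 1 => by simpa using Real.sqrt_pos.mpr (by norm_num : (0:ℝ) < 2)
  | _ + 2 => c_pos

lemma w_le_s2 {d : ℕ} (h : d ≤ 1) : w d ≤ Real.sqrt 2 := by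
  interval_cases d
  · simpa using by nlinarith [s2_sq, s2_nonneg]
  · simp

lemma c_le_w {d : ℕ} (h : 1 ≤ d) : c ≤ w d := by
  match d, h with
  | 1, _ => exact c_le_s2
  | (n+2), _ => exact le_refl c




variable {V : Type*} [Fintype V] [DecidableEq V] (G : SimpleGraph V) [DecidableRel G.Adj]

/-- closed neighborhood of a finset -/
def NbhdF (P : Finset V) : Finset V := P ∪ P.biUnion (fun p => G.neighborFinset p)

/-- induced graph on the complement of `D` -/
def IndG (D : Finset V) : SimpleGraph {x : V // x ∉ D} where
  Adj a b := G.Adj ↑a ↑b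
  symm := ⟨fun a b h => G.adj_symm h⟩
  loopless := ⟨fun a h => G.irrefl h⟩

instance (D : Finset V) : DecidableRel (IndG G D).Adj :=
  fun a b => (inferInstance : Decidable (G.Adj ↑a ↑b))

@[simp] lemma IndG_adj {D : Finset V} (a b : {x : V // x ∉ D}) :
    (IndG G D).Adj a b ↔ G.Adj ↑a ↑b := Iff.rfl

def MISwith (P : Finset V) : Set (Finset V) :=
  {s | IsMaxIndepFinset G s ∧ ∀ p ∈ P, p ∈ s}

lemma mem_or_adj {s : Finset V} (hs : IsMaxIndepFinset G s) (v : V) :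
    v ∈ s ∨ ∃ u ∈ s, G.Adj v u := by
  by_contra h
  push_neg at h
  obtain ⟨hv, hadj⟩ := h
  have hind : IsIndepFinset G (insert v s) := by
    intro a ha b hb hab
    rcases Finset.mem_insert.mp ha with ha' | ha' <;>
      rcases Finset.mem_insert.mp hb with hb' | hb'
    · rw [ha', hb'] at hab; exact G.irrefl hab
    · rw [ha'] at hab; exact hadj b hb' hab
    · rw [hb'] at hab; exact hadj a ha' (G.adj_symm hab)
    · exact hs.1 ha' hb' hab
  have heq := hs.2 _ hind (Finset.subset_insert _ _)
  exact hv (heq ▸ Finset.mem_insert_self v s)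

lemma key (P : Finset V) :
    (MISwith G P).ncard ≤ mis (IndG G (NbhdF G P)) := by
  classical
  set D := NbhdF G P with hD
  have hPD : P ⊆ D := Finset.subset_union_left
  have hnbr : ∀ p ∈ P, G.neighborFinset p ⊆ D := by
    intro p hp x hx
    exact Finset.mem_union_right _ (Finset.mem_biUnion.mpr ⟨p, hp, hx⟩)
  have hsDgen : ∀ s : Finset V, IsIndepFinset G s → (∀ p ∈ P, p ∈ s) →
      ∀ x ∈ s, x ∈ D → x ∈ P := by
    intro s hs hP x hx hxD
    rcases Finset.mem_union.mp hxD with h | h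
    · exact h
    · obtain ⟨p, hp, hxp⟩ := Finset.mem_biUnion.mp h
      exact absurd ((SimpleGraph.mem_neighborFinset G p x).mp hxp) (hs (hP p hp) hx)
  apply Set.ncard_le_ncard_of_injOn (fun s => s.subtype (fun x => x ∉ D))
  · -- maps into MIS of IndG
    rintro s ⟨hs, hP⟩
    constructor
    · intro a ha b hb hab
      exact hs.1 (Finset.mem_subtype.mp ha) (Finset.mem_subtype.mp hb) hab
    · intro T hT hsub
      have hadjTs : ∀ a ∈ T.image Subtype.val, ∀ b ∈ s, ¬ G.Adj a b := by
        intro a ha b hb hab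
        obtain ⟨a', ha', rfl⟩ := Finset.mem_image.mp ha
        by_cases hbD : b ∈ D
        · have hbP : b ∈ P := hsDgen s hs.1 hP b hb hbD
          exact a'.2 (hnbr b hbP (by rw [SimpleGraph.mem_neighborFinset]; exact G.adj_symm hab))
        · have hbT : (⟨b, hbD⟩ : {x // x ∉ D}) ∈ T := hsub (Finset.mem_subtype.mpr hb)
          exact hT ha' hbT hab
      have hUind : IsIndepFinset G (T.image Subtype.val ∪ s) := by
        intro a ha b hb hab
        rcases Finset.mem_union.mp ha with ha | ha <;> rcases Finset.mem_union.mp hb with hb | hb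
        · obtain ⟨a', ha', rfl⟩ := Finset.mem_image.mp ha
          obtain ⟨b', hb', rfl⟩ := Finset.mem_image.mp hb
          exact hT ha' hb' hab
        · exact hadjTs a ha b hb hab
        · exact hadjTs b hb a ha (G.adj_symm hab)
        · exact hs.1 ha hb hab
      have hU := hs.2 _ hUind Finset.subset_union_right
      apply Finset.Subset.antisymm hsub
      intro t ht
      rw [Finset.mem_subtype]
      have h1 : (↑t : V) ∈ T.image Subtype.val ∪ s :=
        Finset.mem_union_left _ (Finset.mem_image_of_mem _ ht)
      rw [← hU] at h1
      exact h1
  · -- InjOn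
    have recon : ∀ s : Finset V, IsMaxIndepFinset G s → (∀ p ∈ P, p ∈ s) →
        s = ((s.subtype (fun x => x ∉ D)).image Subtype.val) ∪ P := by
      intro s hs hP
      ext x
      simp only [Finset.mem_union, Finset.mem_image, Finset.mem_subtype]
      constructor
      · intro hx
        by_cases hxD : x ∈ D
        · exact Or.inr (hsDgen s hs.1 hP x hx hxD)
        · exact Or.inl ⟨⟨x, hxD⟩, by simpa using hx, rfl⟩
      · rintro (⟨x', hx', rfl⟩ | hx)
        · simpa using hx'
        · exact hP _ hx
    rintro s1 ⟨hs1, hP1⟩ s2 ⟨hs2, hP2⟩ h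
    rw [recon s1 hs1 hP1, recon s2 hs2 hP2]
    simp only at h
    rw [h]


lemma IndG_degree (D : Finset V) (x : {x : V // x ∉ D}) :
    (IndG G D).degree x = ((G.neighborFinset ↑x) \ D).card := by
  rw [← SimpleGraph.card_neighborFinset_eq_degree]
  refine Finset.card_bij (fun a _ => (a : V)) ?_ ?_ ?_
  · intro a ha
    rw [Finset.mem_sdiff, SimpleGraph.mem_neighborFinset]
    exact ⟨((IndG G D).mem_neighborFinset x a).mp ha, a.2⟩
  · intro a _ b _ h
    exact Subtype.ext h
  · intro b hb
    rw [Finset.mem_sdiff, SimpleGraph.mem_neighborFinset] at hb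
    exact ⟨⟨b, hb.2⟩, by rw [SimpleGraph.mem_neighborFinset]; exact hb.1, rfl⟩

lemma Wt_IndG (D : Finset V) :
    (∏ v : {x : V // x ∉ D}, w ((IndG G D).degree v)) =
      ∏ x ∈ Dᶜ, w ((G.neighborFinset x \ D).card) := by
  rw [Finset.prod_subtype Dᶜ (p := fun x => x ∉ D) (fun x => Finset.mem_compl)
    (fun x => w ((G.neighborFinset x \ D).card))]
  exact Finset.prod_congr rfl (fun x _ => by rw [IndG_degree])


lemma card_sdiff_le_one {D : Finset V} {x d : V} (hdeg : G.degree x ≤ 2)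
    (hd : G.Adj x d) (hdD : d ∈ D) : (G.neighborFinset x \ D).card ≤ 1 := by
  have hsub : G.neighborFinset x \ D ⊆ (G.neighborFinset x).erase d := by
    intro y hy
    rw [Finset.mem_erase]
    rw [Finset.mem_sdiff] at hy
    exact ⟨fun h => hy.2 (h ▸ hdD), hy.1⟩
  calc (G.neighborFinset x \ D).card ≤ ((G.neighborFinset x).erase d).card :=
        Finset.card_le_card hsub
    _ = G.degree x - 1 := by
        rw [Finset.card_erase_of_mem ((SimpleGraph.mem_neighborFinset _ _ _).mpr hd)]
        rfl
    _ ≤ 1 := by omega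

lemma branch_W (D : Finset V) (hdeg : ∀ v, G.degree v ≤ 2)
    (Bs : Finset V) (hcl : ∀ x, x ∉ D → ∀ d ∈ D, G.Adj d x → x ∈ Bs)
    (hb1 : ∀ x ∈ Bs, ∃ d ∈ D, G.Adj x d) (hbd : ∀ x ∈ Bs, x ∉ D)
    (K : ℕ) (hK : Bs.card ≤ K) (p : ℝ) (hp0 : 0 < p)
    (hp : p ≤ ∏ x ∈ D, w (G.degree x)) :
    (∏ v : {x : V // x ∉ D}, w ((IndG G D).degree v)) ≤
      (Real.sqrt 2 / c) ^ K / p * ∏ v : V, w (G.degree v) := by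
  have hBsub : Bs ⊆ Dᶜ := fun x hx => Finset.mem_compl.mpr (hbd x hx)
  have hsplit : Dᶜ = Bs ∪ (Dᶜ \ Bs) := (Finset.union_sdiff_of_subset hBsub).symm
  have hdisj : Disjoint Bs (Dᶜ \ Bs) := Finset.disjoint_sdiff
  have hsame : ∀ x ∈ Dᶜ \ Bs, (G.neighborFinset x \ D) = G.neighborFinset x := by
    intro x hx
    rw [Finset.mem_sdiff, Finset.mem_compl] at hx
    apply Finset.sdiff_eq_self_of_disjoint
    rw [Finset.disjoint_left]
    intro y hy hyD
    exact hx.2 (hcl x hx.1 y hyD (G.adj_symm ((SimpleGraph.mem_neighborFinset _ _ _).mp hy)))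
  have hBcard : ∀ x ∈ Bs, (G.neighborFinset x \ D).card ≤ 1 := by
    intro x hx
    obtain ⟨d, hdD, hadj⟩ := hb1 x hx
    exact card_sdiff_le_one G (hdeg x) hadj hdD
  have hBdeg : ∀ x ∈ Bs, 1 ≤ G.degree x := by
    intro x hx
    obtain ⟨d, hdD, hadj⟩ := hb1 x hx
    rw [← SimpleGraph.card_neighborFinset_eq_degree]
    exact Finset.card_pos.mpr ⟨d, (SimpleGraph.mem_neighborFinset _ _ _).mpr hadj⟩
  set R := Dᶜ \ Bs with hR
  have prodR_nonneg : (0:ℝ) ≤ ∏ x ∈ R, w (G.degree x) :=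
    Finset.prod_nonneg (fun x _ => (w_pos _).le)
  have hBw : c ^ Bs.card ≤ ∏ x ∈ Bs, w (G.degree x) := by
    calc c ^ Bs.card = ∏ _x ∈ Bs, c := (Finset.prod_const c).symm
      _ ≤ ∏ x ∈ Bs, w (G.degree x) :=
        Finset.prod_le_prod (fun _ _ => c_pos.le) (fun x hx => c_le_w (hBdeg x hx))
  have hcpow : (0:ℝ) < c ^ Bs.card := pow_pos c_pos _
  have hone : (1:ℝ) ≤ Real.sqrt 2 / c := (one_le_div c_pos).mpr c_le_s2
  have hApos : (0:ℝ) < (Real.sqrt 2 / c) ^ K := pow_pos (lt_of_lt_of_le one_pos hone) _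
  have hprod : ∏ v : V, w (G.degree v) =
      (∏ x ∈ D, w (G.degree x)) * ((∏ x ∈ Bs, w (G.degree x)) * ∏ x ∈ R, w (G.degree x)) := by
    rw [← Finset.prod_union hdisj, ← hsplit, Finset.prod_mul_prod_compl]
  calc (∏ v : {x : V // x ∉ D}, w ((IndG G D).degree v))
      = ∏ x ∈ Dᶜ, w ((G.neighborFinset x \ D).card) := Wt_IndG G D
    _ = (∏ x ∈ Bs, w ((G.neighborFinset x \ D).card)) *
        ∏ x ∈ R, w ((G.neighborFinset x \ D).card) := by
        conv_lhs => rw [hsplit]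
        exact Finset.prod_union hdisj
    _ ≤ (∏ _x ∈ Bs, Real.sqrt 2) * ∏ x ∈ R, w (G.degree x) := by
        apply mul_le_mul
        · exact Finset.prod_le_prod (fun x _ => (w_pos _).le)
            (fun x hx => w_le_s2 (hBcard x hx))
        · apply le_of_eq
          apply Finset.prod_congr rfl
          intro x hx
          rw [hsame x hx, SimpleGraph.card_neighborFinset_eq_degree]
        · exact Finset.prod_nonneg (fun x _ => (w_pos _).le)
        · exact Finset.prod_nonneg (fun _ _ => Real.sqrt_nonneg 2)
    _ = (Real.sqrt 2 / c) ^ Bs.card * (c ^ Bs.card * ∏ x ∈ R, w (G.degree x)) := by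
        rw [Finset.prod_const, ← mul_assoc, div_pow, div_mul_cancel₀]
        exact pow_ne_zero _ (ne_of_gt c_pos)
    _ ≤ (Real.sqrt 2 / c) ^ K * (c ^ Bs.card * ∏ x ∈ R, w (G.degree x)) := by
        apply mul_le_mul_of_nonneg_right _ (by positivity)
        exact pow_le_pow_right₀ hone hK
    _ = (Real.sqrt 2 / c) ^ K / p * (p * (c ^ Bs.card * ∏ x ∈ R, w (G.degree x))) := by
        have cancel : ∀ A Y : ℝ, A * Y = A / p * (p * Y) := by
          intro A Y
          rw [div_mul_eq_mul_div, mul_comm p Y, ← mul_assoc, mul_div_assoc,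
            div_self (ne_of_gt hp0), mul_one]
        exact cancel _ _
    _ ≤ (Real.sqrt 2 / c) ^ K / p *
        ((∏ x ∈ D, w (G.degree x)) * ((∏ x ∈ Bs, w (G.degree x)) * ∏ x ∈ R, w (G.degree x))) := by
        apply mul_le_mul_of_nonneg_left _ (le_of_lt (div_pos hApos hp0))
        apply mul_le_mul hp _ (by positivity) (le_trans hp0.le hp)
        exact mul_le_mul_of_nonneg_right hBw prodR_nonneg
    _ = (Real.sqrt 2 / c) ^ K / p * ∏ v : V, w (G.degree v) := by rw [← hprod]


def NoTri (k : ℕ) : Prop := ¬ ∃ f : Fin k → Finset V,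
    (∀ i, (f i).card = 3 ∧ ∀ a ∈ f i, ∀ b ∈ f i, a ≠ b → G.Adj a b) ∧
    (∀ i j, i ≠ j → Disjoint (f i) (f j))

lemma NoTri_IndG (D : Finset V) (k : ℕ) (h : NoTri G k) : NoTri (IndG G D) k := by
  intro hf
  apply h
  obtain ⟨f, h1, h2⟩ := hf
  refine ⟨fun i => (f i).image Subtype.val, fun i => ⟨?_, ?_⟩, fun i j hij => ?_⟩
  · rw [Finset.card_image_of_injective _ Subtype.val_injective]
    exact (h1 i).1
  · intro a ha b hb hab
    obtain ⟨a', ha', rfl⟩ := Finset.mem_image.mp ha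
    obtain ⟨b', hb', rfl⟩ := Finset.mem_image.mp hb
    exact (h1 i).2 a' ha' b' hb' (fun h => hab (congrArg Subtype.val h))
  · rw [Finset.disjoint_left]
    rintro a ha hb
    obtain ⟨a', ha', rfl⟩ := Finset.mem_image.mp ha
    obtain ⟨b', hb', hba⟩ := Finset.mem_image.mp hb
    have : b' = a' := Subtype.ext hba
    subst this
    exact (Finset.disjoint_left.mp (h2 i j hij)) ha' hb'

lemma NoTri_IndG_tri (D : Finset V) {v a b : V} (hva : G.Adj v a) (hvb : G.Adj v b)
    (hab : G.Adj a b) (hvD : v ∈ D) (haD : a ∈ D) (hbD : b ∈ D) (t : ℕ)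
    (h : NoTri G (t + 1)) : NoTri (IndG G D) t := by
  intro hf
  apply h
  obtain ⟨f, h1, h2⟩ := hf
  have hvab : ({v, a, b} : Finset V).card = 3 := by
    rw [Finset.card_insert_of_notMem, Finset.card_insert_of_notMem, Finset.card_singleton]
    · simp only [Finset.mem_singleton]
      exact hab.ne
    · simp only [Finset.mem_insert, Finset.mem_singleton]
      push_neg
      exact ⟨hva.ne, hvb.ne⟩
  refine ⟨Fin.cons {v, a, b} (fun i => (f i).image Subtype.val), fun i => ?_, fun i j hij => ?_⟩
  · refine Fin.cases ?_ (fun i => ?_) i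
    · rw [Fin.cons_zero]
      refine ⟨hvab, ?_⟩
      intro x hx y hy hxy
      simp only [Finset.mem_insert, Finset.mem_singleton] at hx hy
      rcases hx with rfl | rfl | rfl <;> rcases hy with rfl | rfl | rfl <;>
        first
          | exact absurd rfl hxy
          | assumption
          | exact G.adj_symm hva
          | exact G.adj_symm hvb
          | exact G.adj_symm hab
    · rw [Fin.cons_succ]
      constructor
      · rw [Finset.card_image_of_injective _ Subtype.val_injective]
        exact (h1 i).1
      · intro x hx y hy hxy
        obtain ⟨x', hx', rfl⟩ := Finset.mem_image.mp hx
        obtain ⟨y', hy', rfl⟩ := Finset.mem_image.mp hy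
        exact (h1 i).2 x' hx' y' hy' (fun h => hxy (congrArg Subtype.val h))
  · -- disjointness
    have himdisj : ∀ i₀ : Fin t, Disjoint ({v, a, b} : Finset V) ((f i₀).image Subtype.val) := by
      intro i₀
      rw [Finset.disjoint_left]
      intro x hx hx'
      obtain ⟨x', _, rfl⟩ := Finset.mem_image.mp hx'
      simp only [Finset.mem_insert, Finset.mem_singleton] at hx
      rcases hx with rfl | rfl | rfl
      · exact x'.2 hvD
      · exact x'.2 haD
      · exact x'.2 hbD
    rcases Fin.eq_zero_or_eq_succ i with rfl | ⟨i', rfl⟩ <;>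
      rcases Fin.eq_zero_or_eq_succ j with rfl | ⟨j', rfl⟩
    · exact absurd rfl hij
    · rw [Fin.cons_zero, Fin.cons_succ]
      exact himdisj j'
    · rw [Fin.cons_zero, Fin.cons_succ]
      exact (himdisj i').symm
    · rw [Fin.cons_succ, Fin.cons_succ]
      have hne : i' ≠ j' := fun h => hij (by rw [h])
      rw [Finset.disjoint_left]
      rintro x hx hy
      obtain ⟨x', hx', rfl⟩ := Finset.mem_image.mp hx
      obtain ⟨y', hy', hyx⟩ := Finset.mem_image.mp hy
      have : y' = x' := Subtype.ext hyx
      subst this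
      exact (Finset.disjoint_left.mp (h2 i' j' hne)) hx' hy'

lemma pair_nbrs {v a b : V} (hdeg : G.degree v = 2) (ha : G.Adj v a) (hb : G.Adj v b)
    (hab : a ≠ b) : G.neighborFinset v = {a, b} := by
  symm
  apply Finset.eq_of_subset_of_card_le
  · intro x hx
    simp only [Finset.mem_insert, Finset.mem_singleton] at hx
    rcases hx with rfl | rfl <;> rw [SimpleGraph.mem_neighborFinset] <;> assumption
  · rw [SimpleGraph.card_neighborFinset_eq_degree, hdeg]
    rw [Finset.card_insert_of_notMem (by simpa using hab), Finset.card_singleton]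

lemma one_nbr {v u : V} (hdeg : G.degree v = 1) (hu : G.Adj v u) :
    G.neighborFinset v = {u} := by
  symm
  apply Finset.eq_of_subset_of_card_le
  · intro x hx
    simp only [Finset.mem_singleton] at hx
    subst hx
    rwa [SimpleGraph.mem_neighborFinset]
  · rw [SimpleGraph.card_neighborFinset_eq_degree, hdeg, Finset.card_singleton]

lemma two_nbrs {v : V} (hdeg : G.degree v = 2) :
    ∃ a b, a ≠ b ∧ G.Adj v a ∧ G.Adj v b ∧ G.neighborFinset v = {a, b} := by
  have h2 : (G.neighborFinset v).card = 2 := by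
    rwa [SimpleGraph.card_neighborFinset_eq_degree]
  obtain ⟨a, b, hab, he⟩ := Finset.card_eq_two.mp h2
  refine ⟨a, b, hab, ?_, ?_, he⟩
  · rw [← SimpleGraph.mem_neighborFinset, he]; simp
  · rw [← SimpleGraph.mem_neighborFinset, he]; simp

lemma other_nbr {v a : V} (hdeg : G.degree v = 2) (ha : G.Adj v a) :
    ∃ b, b ≠ a ∧ G.Adj v b ∧ G.neighborFinset v = {a, b} := by
  obtain ⟨x, y, hxy, hx, hy, he⟩ := two_nbrs G hdeg
  have haxy : a ∈ ({x, y} : Finset V) := by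
    rw [← he, SimpleGraph.mem_neighborFinset]; exact ha
  simp only [Finset.mem_insert, Finset.mem_singleton] at haxy
  rcases haxy with rfl | rfl
  · exact ⟨y, hxy.symm, hy, he⟩
  · exact ⟨x, hxy, hx, by rw [he, Finset.pair_comm]⟩

lemma mis_empty (h : IsEmpty V) : mis G = 1 := by
  have hall : ∀ s : Finset V, s = ∅ := fun s =>
    Finset.eq_empty_of_forall_notMem (fun x _ => h.elim x)
  have : {s : Finset V | IsMaxIndepFinset G s} = {∅} := by
    ext s
    simp only [Set.mem_setOf_eq, Set.mem_singleton_iff]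
    constructor
    · intro _; exact hall s
    · intro hs
      subst hs
      constructor
      · intro a ha; exact absurd ha (Finset.notMem_empty a)
      · intro T _ _; rw [hall T]
  rw [mis, this, Set.ncard_singleton]

lemma card_subtype_compl (D : Finset V) :
    Fintype.card {x : V // x ∉ D} = Fintype.card V - D.card := by
  rw [Fintype.card_subtype]
  rw [← Finset.card_compl]
  congr 1
  ext x
  simp


-- numeric lemmas
lemma c_ne : c ≠ 0 := ne_of_gt c_pos
lemma s2_ne : Real.sqrt 2 ≠ 0 := by positivity

lemma c3_le_3 : c ^ 3 ≤ 3 :=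
  calc c ^ 3 ≤ (138/100:ℝ) ^ 3 := pow_le_pow_left₀ c_pos.le c_ub 3
    _ ≤ 3 := by norm_num

lemma c3_ge : (137/100:ℝ)^3 ≤ c ^ 3 := pow_le_pow_left₀ (by norm_num) c_lb 3

lemma one_le_X : (1:ℝ) ≤ 3 / c ^ 3 := by
  rw [le_div_iff₀ (pow_pos c_pos 3)]
  linarith [c3_le_3]

lemma X_nonneg : (0:ℝ) ≤ 3 / c ^ 3 := le_trans zero_le_one one_le_X

lemma sum_deg1 : (Real.sqrt 2 / c) ^ 1 / (Real.sqrt 2 * c) +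
    (Real.sqrt 2 / c) ^ 1 / (Real.sqrt 2 * c * c) ≤ 1 := by
  have e1 : (Real.sqrt 2 / c) ^ 1 / (Real.sqrt 2 * c) =
      (Real.sqrt 2 / Real.sqrt 2) * (1 / (c * c)) := by
    rw [pow_one]
    ring
  have e2 : (Real.sqrt 2 / c) ^ 1 / (Real.sqrt 2 * c * c) =
      (Real.sqrt 2 / Real.sqrt 2) * (1 / (c * c * c)) := by
    rw [pow_one]
    ring
  rw [e1, e2, div_self s2_ne, one_mul, one_mul]
  have h1 : (1:ℝ) / (c * c) = c / (c * c * c) := by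
    rw [div_eq_div_iff (ne_of_gt (mul_pos c_pos c_pos)) (ne_of_gt (mul_pos (mul_pos c_pos c_pos) c_pos))]
    ring
  rw [h1, ← add_div, div_le_one (mul_pos (mul_pos c_pos c_pos) c_pos)]
  nlinarith [c_lb, c_ub, c3_ge, c_pos]

lemma f12_eq : (Real.sqrt 2 / c) ^ 2 / (c * (c * c)) = 2 / 5 := by
  rw [div_pow, s2_sq, div_div]
  rw [show c ^ 2 * (c * (c * c)) = c ^ 5 by ring, c_pow5]

lemma f5_eq : (Real.sqrt 2 / c) ^ 0 / (c * (c * (c * (c * c)))) = 1 / 5 := by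
  rw [pow_zero, show c * (c * (c * (c * c))) = c ^ 5 by ring, c_pow5]

lemma f6_le : (Real.sqrt 2 / c) ^ 2 / (c * (c * (c * (c * (c * c))))) ≤ 1 / 5 := by
  rw [div_pow, s2_sq, div_div]
  rw [show c ^ 2 * (c * (c * (c * (c * (c * c))))) = c ^ 8 by ring]
  rw [div_le_div_iff₀ (pow_pos c_pos 8) (by norm_num)]
  have h8 : c ^ 8 = 5 * c ^ 3 := by
    rw [show (8:ℕ) = 5 + 3 by rfl, pow_add, c_pow5]
  nlinarith [c3_ge]

lemma count1 (P : Finset V) (h : {s : Finset V | IsMaxIndepFinset G s} ⊆ MISwith G P) :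
    mis G ≤ (MISwith G P).ncard :=
  Set.ncard_le_ncard h (Set.toFinite _)

lemma count2 (P1 P2 : Finset V)
    (h : {s : Finset V | IsMaxIndepFinset G s} ⊆ MISwith G P1 ∪ MISwith G P2) :
    mis G ≤ (MISwith G P1).ncard + (MISwith G P2).ncard :=
  le_trans (Set.ncard_le_ncard h (Set.toFinite _)) (Set.ncard_union_le _ _)

lemma count3 (P1 P2 P3 : Finset V)
    (h : {s : Finset V | IsMaxIndepFinset G s} ⊆ MISwith G P1 ∪ MISwith G P2 ∪ MISwith G P3) :
    mis G ≤ (MISwith G P1).ncard + (MISwith G P2).ncard + (MISwith G P3).ncard := by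
  refine le_trans (Set.ncard_le_ncard h (Set.toFinite _)) ?_
  refine le_trans (Set.ncard_union_le _ _) ?_
  exact add_le_add_left (Set.ncard_union_le _ _) _

lemma no_single_triangle {v a b : V} (h : NoTri G 1) (hva : G.Adj v a) (hvb : G.Adj v b)
    (hab : G.Adj a b) : False := by
  apply h
  have hvab : ({v, a, b} : Finset V).card = 3 := by
    rw [Finset.card_insert_of_notMem, Finset.card_insert_of_notMem, Finset.card_singleton]
    · simp only [Finset.mem_singleton]
      exact hab.ne
    · simp only [Finset.mem_insert, Finset.mem_singleton]
      push_neg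
      exact ⟨hva.ne, hvb.ne⟩
  refine ⟨fun _ => {v, a, b}, fun i => ⟨hvab, ?_⟩,
    fun i j hij => absurd (Subsingleton.elim i j) hij⟩
  intro x hx y hy hxy
  simp only [Finset.mem_insert, Finset.mem_singleton] at hx hy
  rcases hx with rfl | rfl | rfl <;> rcases hy with rfl | rfl | rfl <;>
    first
      | exact absurd rfl hxy
      | assumption
      | exact G.adj_symm hva
      | exact G.adj_symm hvb
      | exact G.adj_symm hab

set_option maxHeartbeats 2000000 in
lemma main (N : ℕ) : ∀ (V : Type) [Fintype V] [DecidableEq V] (G : SimpleGraph V)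
    [DecidableRel G.Adj], Fintype.card V ≤ N → (∀ v, G.degree v ≤ 2) →
    ∀ t : ℕ, NoTri G (t + 1) →
    (mis G : ℝ) ≤ (3 / c ^ 3) ^ t * ∏ v, w (G.degree v) := by
  induction N with
  | zero =>
    intro V _ _ G _ hcard hdeg t htri
    have hemp : IsEmpty V := Fintype.card_eq_zero_iff.mp (by omega)
    rw [mis_empty G hemp, Finset.univ_eq_empty, Finset.prod_empty, mul_one, Nat.cast_one]
    exact one_le_pow₀ one_le_X
  | succ N ih =>
    intro V _ _ G _ hcard hdeg t htri
    rcases isEmpty_or_nonempty V with hemp | hne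
    · rw [mis_empty G hemp, Finset.univ_eq_empty, Finset.prod_empty, mul_one, Nat.cast_one]
      exact one_le_pow₀ one_le_X
    have W_nonneg : (0:ℝ) ≤ ∏ v, w (G.degree v) :=
      Finset.prod_nonneg fun _ _ => (w_pos _).le
    have Xt_nonneg : ∀ t' : ℕ, (0:ℝ) ≤ (3 / c ^ 3) ^ t' := fun t' => pow_nonneg X_nonneg t'
    have step : ∀ (P Bs : Finset V) (K : ℕ) (p : ℝ) (t' : ℕ),
        P.Nonempty →
        (∀ x, x ∉ NbhdF G P → ∀ d ∈ NbhdF G P, G.Adj d x → x ∈ Bs) →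
        (∀ x ∈ Bs, ∃ d ∈ NbhdF G P, G.Adj x d) →
        (∀ x ∈ Bs, x ∉ NbhdF G P) →
        Bs.card ≤ K → 0 < p → p ≤ ∏ x ∈ NbhdF G P, w (G.degree x) →
        NoTri (IndG G (NbhdF G P)) (t' + 1) →
        ((MISwith G P).ncard : ℝ) ≤
          (3 / c ^ 3) ^ t' * ((Real.sqrt 2 / c) ^ K / p) * ∏ v, w (G.degree v) := by
      intro P Bs K p t' hPne hcl hb1 hbd hK hp0 hp hnt
      have hDne : (NbhdF G P).Nonempty := hPne.mono Finset.subset_union_left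
      have hcard' : Fintype.card {x : V // x ∉ NbhdF G P} ≤ N := by
        rw [card_subtype_compl]
        have h1 := Finset.card_pos.mpr hDne
        omega
      have hdeg' : ∀ v' : {x : V // x ∉ NbhdF G P}, (IndG G (NbhdF G P)).degree v' ≤ 2 := by
        intro v'
        rw [IndG_degree]
        refine le_trans (Finset.card_le_card Finset.sdiff_subset) ?_
        rw [SimpleGraph.card_neighborFinset_eq_degree]
        exact hdeg _
      have h2 := ih {x : V // x ∉ NbhdF G P} (IndG G (NbhdF G P)) hcard' hdeg' t' hnt
      have h3 := branch_W G (NbhdF G P) hdeg Bs hcl hb1 hbd K hK p hp0 hp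
      calc ((MISwith G P).ncard : ℝ) ≤ (mis (IndG G (NbhdF G P)) : ℝ) :=
            Nat.cast_le.mpr (key G P)
        _ ≤ (3 / c ^ 3) ^ t' * ∏ v', w ((IndG G (NbhdF G P)).degree v') := h2
        _ ≤ (3 / c ^ 3) ^ t' * ((Real.sqrt 2 / c) ^ K / p * ∏ v, w (G.degree v)) :=
            mul_le_mul_of_nonneg_left h3 (Xt_nonneg t')
        _ = (3 / c ^ 3) ^ t' * ((Real.sqrt 2 / c) ^ K / p) * ∏ v, w (G.degree v) := by
            ring
    by_cases h0 : ∃ v, G.degree v = 0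
    · -- isolated vertex
      obtain ⟨v, hv0⟩ := h0
      have hnb : G.neighborFinset v = ∅ := by
        apply Finset.card_eq_zero.mp
        rw [SimpleGraph.card_neighborFinset_eq_degree, hv0]
      have hDeq : NbhdF G {v} = {v} := by
        rw [NbhdF, Finset.singleton_biUnion, hnb, Finset.union_empty]
      have hcov : {s : Finset V | IsMaxIndepFinset G s} ⊆ MISwith G {v} := by
        intro s hs
        refine ⟨hs, ?_⟩
        intro p hp
        rw [Finset.mem_singleton] at hp
        subst hp
        rcases mem_or_adj G hs p with h | ⟨u, _, hadj⟩
        · exact h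
        · exfalso
          have hu : u ∈ G.neighborFinset p := (SimpleGraph.mem_neighborFinset _ _ _).mpr hadj
          rw [hnb] at hu
          exact Finset.notMem_empty u hu
      have hst := step {v} ∅ 0 1 t (Finset.singleton_nonempty v)
        (by
          intro x hxD d hdD hadj
          exfalso
          rw [hDeq, Finset.mem_singleton] at hdD
          subst hdD
          have hx : x ∈ G.neighborFinset d := (SimpleGraph.mem_neighborFinset _ _ _).mpr hadj
          rw [hnb] at hx
          exact Finset.notMem_empty x hx)
        (fun x hx => absurd hx (Finset.notMem_empty x))
        (fun x hx => absurd hx (Finset.notMem_empty x))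
        (by simp)
        one_pos
        (by rw [hDeq, Finset.prod_singleton, hv0, w0])
        (NoTri_IndG G _ _ htri)
      calc (mis G : ℝ) ≤ ((MISwith G {v}).ncard : ℝ) := Nat.cast_le.mpr (count1 G {v} hcov)
        _ ≤ (3 / c ^ 3) ^ t * ((Real.sqrt 2 / c) ^ 0 / 1) * ∏ v', w (G.degree v') := hst
        _ = (3 / c ^ 3) ^ t * ∏ v', w (G.degree v') := by norm_num
    push_neg at h0
    by_cases h1 : ∃ v, G.degree v = 1
    · -- vertex of degree 1
      obtain ⟨v, hv1⟩ := h1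
      obtain ⟨u, hnv⟩ := Finset.card_eq_one.mp
        (show (G.neighborFinset v).card = 1 by
          rw [SimpleGraph.card_neighborFinset_eq_degree, hv1])
      have hvu : G.Adj v u := by
        rw [← SimpleGraph.mem_neighborFinset, hnv]
        exact Finset.mem_singleton_self u
      have hne_vu : v ≠ u := hvu.ne
      have huv : G.Adj u v := G.adj_symm hvu
      have hDv : NbhdF G {v} = insert v {u} := by
        rw [NbhdF, Finset.singleton_biUnion, hnv, ← Finset.insert_eq]
      have hcov : {s : Finset V | IsMaxIndepFinset G s} ⊆ MISwith G {v} ∪ MISwith G {u} := by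
        intro s hs
        rcases mem_or_adj G hs v with h | ⟨x, hx, hadj⟩
        · exact Or.inl ⟨hs, by simpa using h⟩
        · have hx' : x ∈ G.neighborFinset v := (SimpleGraph.mem_neighborFinset _ _ _).mpr hadj
          rw [hnv, Finset.mem_singleton] at hx'
          subst hx'
          exact Or.inr ⟨hs, by simpa using hx⟩
      have hcount := count2 G {v} {u} hcov
      by_cases hdu : G.degree u = 1
      · -- P2 component
        have hnu : G.neighborFinset u = {v} := one_nbr G hdu huv
        have hDu : NbhdF G {u} = insert u {v} := by
          rw [NbhdF, Finset.singleton_biUnion, hnu, ← Finset.insert_eq]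
        have hclvu : ∀ x, x ∉ NbhdF G {v} → ∀ d ∈ NbhdF G {v}, G.Adj d x → x ∈ (∅ : Finset V) := by
          intro x hxD d hdD hadj
          exfalso
          rw [hDv, Finset.mem_insert, Finset.mem_singleton] at hdD
          have hmem := (SimpleGraph.mem_neighborFinset G d x).mpr hadj
          rcases hdD with rfl | rfl
          · rw [hnv, Finset.mem_singleton] at hmem
            subst hmem
            exact hxD (by rw [hDv]; simp)
          · rw [hnu, Finset.mem_singleton] at hmem
            subst hmem
            exact hxD (by rw [hDv]; simp)
        have hcluv : ∀ x, x ∉ NbhdF G {u} → ∀ d ∈ NbhdF G {u}, G.Adj d x → x ∈ (∅ : Finset V) := by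
          intro x hxD d hdD hadj
          exfalso
          rw [hDu, Finset.mem_insert, Finset.mem_singleton] at hdD
          have hmem := (SimpleGraph.mem_neighborFinset G d x).mpr hadj
          rcases hdD with rfl | rfl
          · rw [hnu, Finset.mem_singleton] at hmem
            subst hmem
            exact hxD (by rw [hDu]; simp)
          · rw [hnv, Finset.mem_singleton] at hmem
            subst hmem
            exact hxD (by rw [hDu]; simp)
        have h2' : (0:ℝ) < 2 := two_pos
        have hstv := step {v} ∅ 0 2 t (Finset.singleton_nonempty v) hclvu
          (fun x hx => absurd hx (Finset.notMem_empty x))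
          (fun x hx => absurd hx (Finset.notMem_empty x))
          (by simp) h2'
          (by
            rw [hDv, Finset.prod_insert (by simpa using hne_vu), Finset.prod_singleton,
              hv1, hdu, w1]
            exact le_of_eq (Real.mul_self_sqrt (by norm_num)).symm)
          (NoTri_IndG G _ _ htri)
        have hstu := step {u} ∅ 0 2 t (Finset.singleton_nonempty u) hcluv
          (fun x hx => absurd hx (Finset.notMem_empty x))
          (fun x hx => absurd hx (Finset.notMem_empty x))
          (by simp) h2'
          (by
            rw [hDu, Finset.prod_insert (by simpa using hne_vu.symm), Finset.prod_singleton,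
              hdu, hv1, w1]
            exact le_of_eq (Real.mul_self_sqrt (by norm_num)).symm)
          (NoTri_IndG G _ _ htri)
        calc (mis G : ℝ)
            ≤ ((MISwith G {v}).ncard : ℝ) + ((MISwith G {u}).ncard : ℝ) := by
              exact_mod_cast hcount
          _ ≤ (3 / c ^ 3) ^ t * ((Real.sqrt 2 / c) ^ 0 / 2) * (∏ v', w (G.degree v')) +
              (3 / c ^ 3) ^ t * ((Real.sqrt 2 / c) ^ 0 / 2) * (∏ v', w (G.degree v')) :=
              add_le_add hstv hstu
          _ = (3 / c ^ 3) ^ t * ∏ v', w (G.degree v') := by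
              rw [pow_zero]
              ring
      · -- deg u = 2
        have hdu2 : G.degree u = 2 := by
          have := hdeg u
          have := h0 u
          omega
        obtain ⟨z, hz_ne_v, huz, hnu⟩ := other_nbr G hdu2 huv
        have hzu : z ≠ u := (G.ne_of_adj huz).symm
        have hz1 : 1 ≤ G.degree z := by
          have := h0 z
          omega
        have hDu : NbhdF G {u} = insert u (insert v {z}) := by
          rw [NbhdF, Finset.singleton_biUnion, hnu, ← Finset.insert_eq]
        have hzD : z ∉ NbhdF G {v} := by
          rw [hDv]
          simp only [Finset.mem_insert, Finset.mem_singleton]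
          push_neg
          exact ⟨hz_ne_v, hzu⟩
        have hstv := step {v} {z} 1 (Real.sqrt 2 * c) t (Finset.singleton_nonempty v)
          (by
            intro x hxD d hdD hadj
            rw [hDv, Finset.mem_insert, Finset.mem_singleton] at hdD
            have hmem := (SimpleGraph.mem_neighborFinset G d x).mpr hadj
            rcases hdD with rfl | rfl
            · rw [hnv, Finset.mem_singleton] at hmem
              subst hmem
              exact absurd (by rw [hDv]; simp) hxD
            · rw [hnu, Finset.mem_insert, Finset.mem_singleton] at hmem
              rcases hmem with rfl | rfl
              · exact absurd (by rw [hDv]; simp) hxD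
              · exact Finset.mem_singleton_self x)
          (by
            intro x hx
            rw [Finset.mem_singleton] at hx
            subst hx
            exact ⟨u, by rw [hDv]; simp, G.adj_symm huz⟩)
          (by
            intro x hx
            rw [Finset.mem_singleton] at hx
            subst hx
            exact hzD)
          (by simp)
          (mul_pos (Real.sqrt_pos.mpr (by norm_num)) c_pos)
          (by
            rw [hDv, Finset.prod_insert (by simpa using hne_vu), Finset.prod_singleton,
              hv1, hdu2, w1, w2])
          (NoTri_IndG G _ _ htri)
        have hstu := step {u} (G.neighborFinset z \ NbhdF G {u}) 1 (Real.sqrt 2 * c * c) t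
          (Finset.singleton_nonempty u)
          (by
            intro x hxD d hdD hadj
            rw [hDu, Finset.mem_insert, Finset.mem_insert, Finset.mem_singleton] at hdD
            have hmem := (SimpleGraph.mem_neighborFinset G d x).mpr hadj
            rcases hdD with rfl | rfl | rfl
            · rw [hnu, Finset.mem_insert, Finset.mem_singleton] at hmem
              rcases hmem with rfl | rfl
              · exact absurd (by rw [hDu]; simp) hxD
              · exact absurd (by rw [hDu]; simp) hxD
            · rw [hnv, Finset.mem_singleton] at hmem
              subst hmem
              exact absurd (by rw [hDu]; simp) hxD
            · exact Finset.mem_sdiff.mpr ⟨hmem, hxD⟩)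
          (by
            intro x hx
            rw [Finset.mem_sdiff] at hx
            exact ⟨z, by rw [hDu]; simp,
              G.adj_symm ((SimpleGraph.mem_neighborFinset _ _ _).mp hx.1)⟩)
          (fun x hx => (Finset.mem_sdiff.mp hx).2)
          (card_sdiff_le_one G (hdeg z) (G.adj_symm huz) (by rw [hDu]; simp))
          (mul_pos (mul_pos (Real.sqrt_pos.mpr (by norm_num)) c_pos) c_pos)
          (by
            have hle : Real.sqrt 2 * c * c ≤ c * (Real.sqrt 2 * w (G.degree z)) := by
              have h := mul_le_mul_of_nonneg_left (c_le_w hz1) s2_nonneg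
              nlinarith [c_pos, s2_nonneg, c_le_w hz1, w_pos (G.degree z)]
            rw [hDu, Finset.prod_insert, Finset.prod_insert, Finset.prod_singleton,
              hdu2, hv1, w1, w2]
            · exact hle
            · simpa using hz_ne_v.symm
            · simp only [Finset.mem_insert, Finset.mem_singleton]
              push_neg
              exact ⟨hne_vu.symm, hzu.symm⟩)
          (NoTri_IndG G _ _ htri)
        calc (mis G : ℝ)
            ≤ ((MISwith G {v}).ncard : ℝ) + ((MISwith G {u}).ncard : ℝ) := by
              exact_mod_cast hcount
          _ ≤ (3 / c ^ 3) ^ t * ((Real.sqrt 2 / c) ^ 1 / (Real.sqrt 2 * c)) *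
                (∏ v', w (G.degree v')) +
              (3 / c ^ 3) ^ t * ((Real.sqrt 2 / c) ^ 1 / (Real.sqrt 2 * c * c)) *
                (∏ v', w (G.degree v')) := add_le_add hstv hstu
          _ = (3 / c ^ 3) ^ t *
                (((Real.sqrt 2 / c) ^ 1 / (Real.sqrt 2 * c)) +
                  ((Real.sqrt 2 / c) ^ 1 / (Real.sqrt 2 * c * c))) *
                (∏ v', w (G.degree v')) := by ring
          _ ≤ (3 / c ^ 3) ^ t * 1 * (∏ v', w (G.degree v')) := by
              apply mul_le_mul_of_nonneg_right _ W_nonneg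
              exact mul_le_mul_of_nonneg_left sum_deg1 (Xt_nonneg t)
          _ = (3 / c ^ 3) ^ t * ∏ v', w (G.degree v') := by ring
    · push_neg at h1
      have hall2 : ∀ v, G.degree v = 2 := by
        intro v
        have h2 := hdeg v
        have h3 := h0 v
        have h4 := h1 v
        omega
      by_cases htr : ∃ x y z : V, G.Adj x y ∧ G.Adj x z ∧ G.Adj y z
      · -- triangle component
        obtain ⟨v, a, b, hva, hvb, hab⟩ := htr
        rcases t with _ | t0
        · exact (no_single_triangle G htri hva hvb hab).elim
        have hvna : v ≠ a := hva.ne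
        have hvnb : v ≠ b := hvb.ne
        have hanb : a ≠ b := hab.ne
        have hnv : G.neighborFinset v = {a, b} := pair_nbrs G (hall2 v) hva hvb hanb
        have hna : G.neighborFinset a = {v, b} := pair_nbrs G (hall2 a) (G.adj_symm hva) hab hvnb
        have hnb : G.neighborFinset b = {v, a} :=
          pair_nbrs G (hall2 b) (G.adj_symm hvb) (G.adj_symm hab) hvna
        have hDv : NbhdF G {v} = insert v (insert a {b}) := by
          rw [NbhdF, Finset.singleton_biUnion, hnv, ← Finset.insert_eq]
        have hDa : NbhdF G {a} = insert v (insert a {b}) := by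
          rw [NbhdF, Finset.singleton_biUnion, hna, ← Finset.insert_eq]
          ext y
          simp only [Finset.mem_insert, Finset.mem_singleton]
          tauto
        have hDb : NbhdF G {b} = insert v (insert a {b}) := by
          rw [NbhdF, Finset.singleton_biUnion, hnb, ← Finset.insert_eq]
          ext y
          simp only [Finset.mem_insert, Finset.mem_singleton]
          tauto
        have hcov : {s : Finset V | IsMaxIndepFinset G s} ⊆
            MISwith G {v} ∪ MISwith G {a} ∪ MISwith G {b} := by
          intro s hs
          rcases mem_or_adj G hs v with h | ⟨x, hx, hadj⟩
          · exact Or.inl (Or.inl ⟨hs, by simpa using h⟩)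
          · have hx' : x ∈ G.neighborFinset v := (SimpleGraph.mem_neighborFinset _ _ _).mpr hadj
            rw [hnv] at hx'
            simp only [Finset.mem_insert, Finset.mem_singleton] at hx'
            rcases hx' with rfl | rfl
            · exact Or.inl (Or.inr ⟨hs, by simpa using hx⟩)
            · exact Or.inr ⟨hs, by simpa using hx⟩
        have hcount := count3 G {v} {a} {b} hcov
        have hclD : ∀ x : V, x ∉ (insert v (insert a {b}) : Finset V) →
            ∀ d ∈ (insert v (insert a {b}) : Finset V),
            G.Adj d x → x ∈ (∅ : Finset V) := by
          intro x hxD d hdD hadj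
          exfalso
          have hmem := (SimpleGraph.mem_neighborFinset G d x).mpr hadj
          simp only [Finset.mem_insert, Finset.mem_singleton] at hdD
          rcases hdD with rfl | rfl | rfl
          · rw [hnv] at hmem
            simp only [Finset.mem_insert, Finset.mem_singleton] at hmem
            rcases hmem with rfl | rfl <;> exact hxD (by simp)
          · rw [hna] at hmem
            simp only [Finset.mem_insert, Finset.mem_singleton] at hmem
            rcases hmem with rfl | rfl <;> exact hxD (by simp)
          · rw [hnb] at hmem
            simp only [Finset.mem_insert, Finset.mem_singleton] at hmem
            rcases hmem with rfl | rfl <;> exact hxD (by simp)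
        have hppos : (0:ℝ) < c * (c * c) := mul_pos c_pos (mul_pos c_pos c_pos)
        have hprodD : c * (c * c) ≤ ∏ x ∈ insert v (insert a {b}), w (G.degree x) := by
          rw [Finset.prod_insert (by simp [hvna, hvnb]),
            Finset.prod_insert (by simp [hanb]), Finset.prod_singleton,
            hall2 v, hall2 a, hall2 b, w2]
        have hstv := step {v} ∅ 0 (c * (c * c)) t0 (Finset.singleton_nonempty v)
          (by rw [hDv]; exact hclD)
          (fun x hx => absurd hx (Finset.notMem_empty x))
          (fun x hx => absurd hx (Finset.notMem_empty x))
          (by simp) hppos (by rw [hDv]; exact hprodD)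
          (NoTri_IndG_tri G _ hva hvb hab (by rw [hDv]; simp) (by rw [hDv]; simp)
            (by rw [hDv]; simp) (t0 + 1) htri)
        have hsta := step {a} ∅ 0 (c * (c * c)) t0 (Finset.singleton_nonempty a)
          (by rw [hDa]; exact hclD)
          (fun x hx => absurd hx (Finset.notMem_empty x))
          (fun x hx => absurd hx (Finset.notMem_empty x))
          (by simp) hppos (by rw [hDa]; exact hprodD)
          (NoTri_IndG_tri G _ hva hvb hab (by rw [hDa]; simp) (by rw [hDa]; simp)
            (by rw [hDa]; simp) (t0 + 1) htri)
        have hstb := step {b} ∅ 0 (c * (c * c)) t0 (Finset.singleton_nonempty b)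
          (by rw [hDb]; exact hclD)
          (fun x hx => absurd hx (Finset.notMem_empty x))
          (fun x hx => absurd hx (Finset.notMem_empty x))
          (by simp) hppos (by rw [hDb]; exact hprodD)
          (NoTri_IndG_tri G _ hva hvb hab (by rw [hDb]; simp) (by rw [hDb]; simp)
            (by rw [hDb]; simp) (t0 + 1) htri)
        calc (mis G : ℝ)
            ≤ ((MISwith G {v}).ncard : ℝ) + ((MISwith G {a}).ncard : ℝ) +
              ((MISwith G {b}).ncard : ℝ) := by exact_mod_cast hcount
          _ ≤ (3 / c ^ 3) ^ t0 * ((Real.sqrt 2 / c) ^ 0 / (c * (c * c))) *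
                (∏ v', w (G.degree v')) +
              (3 / c ^ 3) ^ t0 * ((Real.sqrt 2 / c) ^ 0 / (c * (c * c))) *
                (∏ v', w (G.degree v')) +
              (3 / c ^ 3) ^ t0 * ((Real.sqrt 2 / c) ^ 0 / (c * (c * c))) *
                (∏ v', w (G.degree v')) := add_le_add (add_le_add hstv hsta) hstb
          _ = (3 / c ^ 3) ^ (t0 + 1) * ∏ v', w (G.degree v') := by
              rw [pow_zero, pow_succ]
              ring
      · -- no triangles at all
        obtain ⟨v⟩ := hne
        obtain ⟨a, b, hanb, hva, hvb, hnv⟩ := two_nbrs G (hall2 v)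
        have hnab : ¬ G.Adj a b := fun h => htr ⟨v, a, b, hva, hvb, h⟩
        have hvna : v ≠ a := hva.ne
        have hvnb : v ≠ b := hvb.ne
        obtain ⟨a₁, ha₁v, haa₁, hna⟩ := other_nbr G (hall2 a) (G.adj_symm hva)
        obtain ⟨b₁, hb₁v, hbb₁, hnb⟩ := other_nbr G (hall2 b) (G.adj_symm hvb)
        have ha₁a : a₁ ≠ a := (G.ne_of_adj haa₁).symm
        have ha₁b : a₁ ≠ b := fun h => hnab (h ▸ haa₁)
        have hb₁b : b₁ ≠ b := (G.ne_of_adj hbb₁).symm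
        have hb₁a : b₁ ≠ a := fun h => hnab (G.adj_symm (h ▸ hbb₁))
        obtain ⟨x₁, hx₁a, ha₁x₁, hna₁⟩ := other_nbr G (hall2 a₁) (G.adj_symm haa₁)
        have hx₁a₁ : x₁ ≠ a₁ := (G.ne_of_adj ha₁x₁).symm
        have hx₁v : x₁ ≠ v := by
          intro h
          have hm : a₁ ∈ G.neighborFinset v :=
            (SimpleGraph.mem_neighborFinset _ _ _).mpr (G.adj_symm (h ▸ ha₁x₁))
          rw [hnv] at hm
          simp only [Finset.mem_insert, Finset.mem_singleton] at hm
          rcases hm with rfl | rfl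
          · exact ha₁a rfl
          · exact ha₁b rfl
        have hDv : NbhdF G {v} = insert v (insert a {b}) := by
          rw [NbhdF, Finset.singleton_biUnion, hnv, ← Finset.insert_eq]
        have hDa : NbhdF G {a} = insert a (insert v {a₁}) := by
          rw [NbhdF, Finset.singleton_biUnion, hna, ← Finset.insert_eq]
        -- cover
        have hcov : {s : Finset V | IsMaxIndepFinset G s} ⊆
            MISwith G {v} ∪ MISwith G {a} ∪ MISwith G {b, a₁} := by
          intro s hs
          by_cases hvs : v ∈ s
          · exact Or.inl (Or.inl ⟨hs, by simpa using hvs⟩)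
          by_cases has : a ∈ s
          · exact Or.inl (Or.inr ⟨hs, by simpa using has⟩)
          have hbs : b ∈ s := by
            rcases mem_or_adj G hs v with h | ⟨x, hx, hadj⟩
            · exact absurd h hvs
            · have hm : x ∈ G.neighborFinset v :=
                (SimpleGraph.mem_neighborFinset _ _ _).mpr hadj
              rw [hnv] at hm
              simp only [Finset.mem_insert, Finset.mem_singleton] at hm
              rcases hm with rfl | rfl
              · exact absurd hx has
              · exact hx
          have ha₁s : a₁ ∈ s := by
            rcases mem_or_adj G hs a with h | ⟨x, hx, hadj⟩
            · exact absurd h has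
            · have hm : x ∈ G.neighborFinset a :=
                (SimpleGraph.mem_neighborFinset _ _ _).mpr hadj
              rw [hna] at hm
              simp only [Finset.mem_insert, Finset.mem_singleton] at hm
              rcases hm with rfl | rfl
              · exact absurd hx hvs
              · exact hx
          refine Or.inr ⟨hs, ?_⟩
          intro p hp
          simp only [Finset.mem_insert, Finset.mem_singleton] at hp
          rcases hp with rfl | rfl
          · exact hbs
          · exact ha₁s
        have hcount := count3 G {v} {a} {b, a₁} hcov
        have hppos3 : (0:ℝ) < c * (c * c) := mul_pos c_pos (mul_pos c_pos c_pos)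
        -- branch 1 : P = {v}
        have hstv := step {v} (insert a₁ {b₁}) 2 (c * (c * c)) t
          (Finset.singleton_nonempty v)
          (by
            intro x hxD d hdD hadj
            rw [hDv] at hxD hdD
            have hmem := (SimpleGraph.mem_neighborFinset G d x).mpr hadj
            simp only [Finset.mem_insert, Finset.mem_singleton] at hdD
            rcases hdD with rfl | rfl | rfl
            · rw [hnv] at hmem
              simp only [Finset.mem_insert, Finset.mem_singleton] at hmem
              rcases hmem with rfl | rfl <;> exact absurd (by simp) hxD
            · rw [hna] at hmem
              simp only [Finset.mem_insert, Finset.mem_singleton] at hmem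
              rcases hmem with rfl | rfl
              · exact absurd (by simp) hxD
              · simp
            · rw [hnb] at hmem
              simp only [Finset.mem_insert, Finset.mem_singleton] at hmem
              rcases hmem with rfl | rfl
              · exact absurd (by simp) hxD
              · simp)
          (by
            intro x hx
            simp only [Finset.mem_insert, Finset.mem_singleton] at hx
            rcases hx with rfl | rfl
            · exact ⟨a, by rw [hDv]; simp, G.adj_symm haa₁⟩
            · exact ⟨b, by rw [hDv]; simp, G.adj_symm hbb₁⟩)
          (by
            intro x hx
            simp only [Finset.mem_insert, Finset.mem_singleton] at hx
            rw [hDv]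
            simp only [Finset.mem_insert, Finset.mem_singleton]
            push_neg
            rcases hx with rfl | rfl
            · exact ⟨ha₁v, ha₁a, ha₁b⟩
            · exact ⟨hb₁v, hb₁a, hb₁b⟩)
          (le_trans (Finset.card_insert_le _ _) (by simp))
          hppos3
          (by
            rw [hDv, Finset.prod_insert (by simp [hvna, hvnb]),
              Finset.prod_insert (by simp [hanb]), Finset.prod_singleton,
              hall2 v, hall2 a, hall2 b, w2])
          (NoTri_IndG G _ _ htri)
        -- branch 2 : P = {a}
        have hsta := step {a} (insert b {x₁}) 2 (c * (c * c)) t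
          (Finset.singleton_nonempty a)
          (by
            intro x hxD d hdD hadj
            rw [hDa] at hxD hdD
            have hmem := (SimpleGraph.mem_neighborFinset G d x).mpr hadj
            simp only [Finset.mem_insert, Finset.mem_singleton] at hdD
            rcases hdD with rfl | rfl | rfl
            · rw [hna] at hmem
              simp only [Finset.mem_insert, Finset.mem_singleton] at hmem
              rcases hmem with rfl | rfl <;> exact absurd (by simp) hxD
            · rw [hnv] at hmem
              simp only [Finset.mem_insert, Finset.mem_singleton] at hmem
              rcases hmem with rfl | rfl
              · exact absurd (by simp) hxD
              · simp
            · rw [hna₁] at hmem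
              simp only [Finset.mem_insert, Finset.mem_singleton] at hmem
              rcases hmem with rfl | rfl
              · exact absurd (by simp) hxD
              · simp)
          (by
            intro x hx
            simp only [Finset.mem_insert, Finset.mem_singleton] at hx
            rcases hx with rfl | rfl
            · exact ⟨v, by rw [hDa]; simp, G.adj_symm hvb⟩
            · exact ⟨a₁, by rw [hDa]; simp, G.adj_symm ha₁x₁⟩)
          (by
            intro x hx
            simp only [Finset.mem_insert, Finset.mem_singleton] at hx
            rw [hDa]
            simp only [Finset.mem_insert, Finset.mem_singleton]
            push_neg
            rcases hx with rfl | rfl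
            · exact ⟨hanb.symm, hvnb.symm, ha₁b.symm⟩
            · exact ⟨hx₁a, hx₁v, hx₁a₁⟩)
          (le_trans (Finset.card_insert_le _ _) (by simp))
          hppos3
          (by
            rw [hDa, Finset.prod_insert
                (by simp only [Finset.mem_insert, Finset.mem_singleton]; push_neg;
                    exact ⟨hvna.symm, ha₁a.symm⟩),
              Finset.prod_insert (by simpa using ha₁v.symm), Finset.prod_singleton,
              hall2 a, hall2 v, hall2 a₁, w2])
          (NoTri_IndG G _ _ htri)
        -- branch 3 : P = {b, a₁}
        have hst3 : ((MISwith G {b, a₁}).ncard : ℝ) ≤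
            (3 / c ^ 3) ^ t * (1 / 5) * ∏ v', w (G.degree v') := by
          by_cases ha₁b₁ : a₁ = b₁
          · -- b and a₁ adjacent: the class is empty
            have hadjba₁ : G.Adj b a₁ := by rw [ha₁b₁]; exact hbb₁
            have hempty : MISwith G {b, a₁} = ∅ := by
              ext s
              simp only [MISwith, Set.mem_setOf_eq, Set.mem_empty_iff_false, iff_false,
                not_and]
              intro hs hP
              exact hs.1 (hP b (by simp)) (hP a₁ (by simp)) hadjba₁
            rw [hempty, Set.ncard_empty, Nat.cast_zero]
            exact mul_nonneg (mul_nonneg (Xt_nonneg t) (by norm_num)) W_nonneg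
          · by_cases hx₁b₁ : x₁ = b₁
            · -- five-cycle case
              have hadja₁b₁ : G.Adj a₁ b₁ := hx₁b₁ ▸ ha₁x₁
              have hna₁' : G.neighborFinset a₁ = {a, b₁} := by rw [hna₁, hx₁b₁]
              have hnb₁ : G.neighborFinset b₁ = {b, a₁} :=
                pair_nbrs G (hall2 b₁) (G.adj_symm hbb₁) (G.adj_symm hadja₁b₁) ha₁b.symm
              have hD3 : NbhdF G {b, a₁} =
                  insert b (insert a₁ (insert v (insert b₁ {a}))) := by
                rw [NbhdF, Finset.biUnion_insert, Finset.singleton_biUnion, hnb, hna₁']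
                ext y
                simp only [Finset.mem_union, Finset.mem_insert, Finset.mem_singleton]
                tauto
              have hst := step {b, a₁} ∅ 0 (c * (c * (c * (c * c)))) t
                (Finset.insert_nonempty b {a₁})
                (by
                  intro x hxD d hdD hadj
                  exfalso
                  rw [hD3] at hxD hdD
                  have hmem := (SimpleGraph.mem_neighborFinset G d x).mpr hadj
                  simp only [Finset.mem_insert, Finset.mem_singleton] at hdD
                  rcases hdD with rfl | rfl | rfl | rfl | rfl
                  · rw [hnb] at hmem
                    simp only [Finset.mem_insert, Finset.mem_singleton] at hmem
                    rcases hmem with rfl | rfl <;> exact hxD (by simp)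
                  · rw [hna₁'] at hmem
                    simp only [Finset.mem_insert, Finset.mem_singleton] at hmem
                    rcases hmem with rfl | rfl <;> exact hxD (by simp)
                  · rw [hnv] at hmem
                    simp only [Finset.mem_insert, Finset.mem_singleton] at hmem
                    rcases hmem with rfl | rfl <;> exact hxD (by simp)
                  · rw [hnb₁] at hmem
                    simp only [Finset.mem_insert, Finset.mem_singleton] at hmem
                    rcases hmem with rfl | rfl <;> exact hxD (by simp)
                  · rw [hna] at hmem
                    simp only [Finset.mem_insert, Finset.mem_singleton] at hmem
                    rcases hmem with rfl | rfl <;> exact hxD (by simp))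
                (fun x hx => absurd hx (Finset.notMem_empty x))
                (fun x hx => absurd hx (Finset.notMem_empty x))
                (by simp)
                (mul_pos c_pos (mul_pos c_pos (mul_pos c_pos (mul_pos c_pos c_pos))))
                (by
                  rw [hD3, Finset.prod_insert
                      (by simp only [Finset.mem_insert, Finset.mem_singleton]; push_neg;
                          exact ⟨ha₁b.symm, hvnb.symm, hb₁b.symm, hanb.symm⟩),
                    Finset.prod_insert
                      (by simp only [Finset.mem_insert, Finset.mem_singleton]; push_neg;
                          exact ⟨ha₁v, ha₁b₁, ha₁a⟩),
                    Finset.prod_insert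
                      (by simp only [Finset.mem_insert, Finset.mem_singleton]; push_neg;
                          exact ⟨hb₁v.symm, hvna⟩),
                    Finset.prod_insert (by simpa using hb₁a),
                    Finset.prod_singleton,
                    hall2 b, hall2 a₁, hall2 v, hall2 b₁, hall2 a, w2])
                (NoTri_IndG G _ _ htri)
              refine le_trans hst ?_
              rw [f5_eq]
            · -- generic case: six distinct deleted vertices
              have hx₁b : x₁ ≠ b := by
                intro h
                have hm : a₁ ∈ G.neighborFinset b :=
                  (SimpleGraph.mem_neighborFinset _ _ _).mpr (G.adj_symm (h ▸ ha₁x₁))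
                rw [hnb] at hm
                simp only [Finset.mem_insert, Finset.mem_singleton] at hm
                rcases hm with rfl | rfl
                · exact ha₁v rfl
                · exact ha₁b₁ rfl
              have hD3 : NbhdF G {b, a₁} =
                  insert b (insert a₁ (insert v (insert b₁ (insert a {x₁})))) := by
                rw [NbhdF, Finset.biUnion_insert, Finset.singleton_biUnion, hnb, hna₁]
                ext y
                simp only [Finset.mem_union, Finset.mem_insert, Finset.mem_singleton]
                tauto
              have hst := step {b, a₁}
                ((G.neighborFinset b₁ \ NbhdF G {b, a₁}) ∪
                  (G.neighborFinset x₁ \ NbhdF G {b, a₁}))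
                2 (c * (c * (c * (c * (c * c))))) t
                (Finset.insert_nonempty b {a₁})
                (by
                  intro x hxD d hdD hadj
                  have hmem := (SimpleGraph.mem_neighborFinset G d x).mpr hadj
                  rw [hD3] at hdD
                  simp only [Finset.mem_insert, Finset.mem_singleton] at hdD
                  rcases hdD with rfl | rfl | rfl | rfl | rfl | rfl
                  · exfalso
                    rw [hnb] at hmem
                    simp only [Finset.mem_insert, Finset.mem_singleton] at hmem
                    rcases hmem with rfl | rfl <;> exact hxD (by rw [hD3]; simp)
                  · exfalso
                    rw [hna₁] at hmem
                    simp only [Finset.mem_insert, Finset.mem_singleton] at hmem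
                    rcases hmem with rfl | rfl <;> exact hxD (by rw [hD3]; simp)
                  · exfalso
                    rw [hnv] at hmem
                    simp only [Finset.mem_insert, Finset.mem_singleton] at hmem
                    rcases hmem with rfl | rfl <;> exact hxD (by rw [hD3]; simp)
                  · exact Finset.mem_union_left _ (Finset.mem_sdiff.mpr ⟨hmem, hxD⟩)
                  · exfalso
                    rw [hna] at hmem
                    simp only [Finset.mem_insert, Finset.mem_singleton] at hmem
                    rcases hmem with rfl | rfl <;> exact hxD (by rw [hD3]; simp)
                  · exact Finset.mem_union_right _ (Finset.mem_sdiff.mpr ⟨hmem, hxD⟩))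
                (by
                  intro x hx
                  rcases Finset.mem_union.mp hx with hx' | hx'
                  · rw [Finset.mem_sdiff] at hx'
                    exact ⟨b₁, by rw [hD3]; simp,
                      G.adj_symm ((SimpleGraph.mem_neighborFinset _ _ _).mp hx'.1)⟩
                  · rw [Finset.mem_sdiff] at hx'
                    exact ⟨x₁, by rw [hD3]; simp,
                      G.adj_symm ((SimpleGraph.mem_neighborFinset _ _ _).mp hx'.1)⟩)
                (by
                  intro x hx
                  rcases Finset.mem_union.mp hx with hx' | hx' <;>
                    exact (Finset.mem_sdiff.mp hx').2)
                (le_trans (Finset.card_union_le _ _)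
                  (add_le_add
                    (card_sdiff_le_one G (hdeg b₁) (G.adj_symm hbb₁) (by rw [hD3]; simp))
                    (card_sdiff_le_one G (hdeg x₁) (G.adj_symm ha₁x₁) (by rw [hD3]; simp))))
                (mul_pos c_pos (mul_pos c_pos (mul_pos c_pos (mul_pos c_pos
                  (mul_pos c_pos c_pos)))))
                (by
                  rw [hD3, Finset.prod_insert
                      (by simp only [Finset.mem_insert, Finset.mem_singleton]; push_neg;
                          exact ⟨ha₁b.symm, hvnb.symm, hb₁b.symm, hanb.symm, hx₁b.symm⟩),
                    Finset.prod_insert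
                      (by simp only [Finset.mem_insert, Finset.mem_singleton]; push_neg;
                          exact ⟨ha₁v, ha₁b₁, ha₁a, hx₁a₁.symm⟩),
                    Finset.prod_insert
                      (by simp only [Finset.mem_insert, Finset.mem_singleton]; push_neg;
                          exact ⟨hb₁v.symm, hvna, hx₁v.symm⟩),
                    Finset.prod_insert
                      (by simp only [Finset.mem_insert, Finset.mem_singleton]; push_neg;
                          exact ⟨hb₁a, Ne.symm hx₁b₁⟩),
                    Finset.prod_insert (by simpa using hx₁a.symm),
                    Finset.prod_singleton,
                    hall2 b, hall2 a₁, hall2 v, hall2 b₁, hall2 a, hall2 x₁, w2])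
                (NoTri_IndG G _ _ htri)
              refine le_trans hst ?_
              apply mul_le_mul_of_nonneg_right _ W_nonneg
              exact mul_le_mul_of_nonneg_left f6_le (Xt_nonneg t)
        calc (mis G : ℝ)
            ≤ ((MISwith G {v}).ncard : ℝ) + ((MISwith G {a}).ncard : ℝ) +
              ((MISwith G {b, a₁}).ncard : ℝ) := by exact_mod_cast hcount
          _ ≤ (3 / c ^ 3) ^ t * ((Real.sqrt 2 / c) ^ 2 / (c * (c * c))) *
                (∏ v', w (G.degree v')) +
              (3 / c ^ 3) ^ t * ((Real.sqrt 2 / c) ^ 2 / (c * (c * c))) *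
                (∏ v', w (G.degree v')) +
              (3 / c ^ 3) ^ t * (1 / 5) * (∏ v', w (G.degree v')) :=
              add_le_add (add_le_add hstv hsta) hst3
          _ = (3 / c ^ 3) ^ t * (2 / 5) * (∏ v', w (G.degree v')) +
              (3 / c ^ 3) ^ t * (2 / 5) * (∏ v', w (G.degree v')) +
              (3 / c ^ 3) ^ t * (1 / 5) * (∏ v', w (G.degree v')) := by rw [f12_eq]
          _ = (3 / c ^ 3) ^ t * ∏ v', w (G.degree v') := by ring

end MisAux

theorem mis_two_regular_le (n t : ℕ) (G : SimpleGraph (Fin n)) [DecidableRel G.Adj]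
    (hreg : ∀ v, G.degree v = 2)
    (htri : ¬ ∃ f : Fin (t + 1) → Finset (Fin n),
      (∀ i, (f i).card = 3 ∧ ∀ a ∈ f i, ∀ b ∈ f i, a ≠ b → G.Adj a b) ∧
      (∀ i j, i ≠ j → Disjoint (f i) (f j))) :
    (mis G : ℝ) ≤ 3 ^ t * (5 : ℝ) ^ (((n : ℝ) - 3 * t) / 5) := by
  have hdeg : ∀ v, G.degree v ≤ 2 := fun v => (hreg v).le
  have hnt : MisAux.NoTri G (t + 1) := htri
  have h := MisAux.main (Fintype.card (Fin n)) (Fin n) G le_rfl hdeg t hnt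
  have hW : (∏ v : Fin n, MisAux.w (G.degree v)) = MisAux.c ^ n := by
    rw [Finset.prod_congr rfl (fun v _ => by rw [hreg v, MisAux.w2]),
      Finset.prod_const, Finset.card_univ, Fintype.card_fin]
  rw [hW] at h
  refine le_trans h (le_of_eq ?_)
  have hc : ∀ m : ℕ, MisAux.c ^ m = (5:ℝ) ^ ((m:ℝ)/5) := by
    intro m
    rw [MisAux.c, ← Real.rpow_natCast ((5:ℝ) ^ ((1:ℝ)/5)) m,
      ← Real.rpow_mul (by norm_num : (0:ℝ) ≤ 5)]
    congr 1
    ring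
  rw [div_pow, ← pow_mul, hc (3*t), hc n]
  have hexp : ((n:ℝ) - 3*t)/5 = (n:ℝ)/5 - ((3*t : ℕ):ℝ)/5 := by
    push_cast
    ring
  rw [hexp, Real.rpow_sub (by norm_num : (0:ℝ) < 5)]
  ring
end
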